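/- arXiv:2402.18670 — 6 statements merged into one kernel-verified Lean document; each statement's English description precedes it below -/
import Mathlib

section
/- A tree T is a graph of two parallel paths if and only if: (1) no vertex of T has degree at least 4, (2) T has at most two vertices of degree 3, and (3) any two vertices of degree 3 are adjacent in T. -/
open SimpleGraph

/-- `G` is a graph of two parallel paths: its vertex set partitions into two
(possibly empty) induced paths `v₁…v_k` and `u₁…u_ℓ` such that edges between the
two paths do not cross. -/
def IsTwoParallelPaths {V : Type*} (G : SimpleGraph V) : Prop :=
  ∃ (k l : ℕ) (v : Fin k → V) (u : Fin l → V),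
    Function.Injective v ∧ Function.Injective u ∧
    (∀ i j, v i ≠ u j) ∧
    (∀ x, (∃ i, v i = x) ∨ (∃ j, u j = x)) ∧
    (∀ i i', G.Adj (v i) (v i') ↔ ((i : ℕ) + 1 = (i' : ℕ) ∨ (i' : ℕ) + 1 = (i : ℕ))) ∧
    (∀ j j', G.Adj (u j) (u j') ↔ ((j : ℕ) + 1 = (j' : ℕ) ∨ (j' : ℕ) + 1 = (j : ℕ))) ∧
    (∀ i j i' j', G.Adj (v i) (u j) → G.Adj (v i') (u j') →
      ¬ ((i < i' ∧ j' < j) ∨ (i' < i ∧ j < j')))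


namespace TwoPPAux

variable {V : Type*}

/-- getVert is injective on indices up to length, for paths. -/
lemma getVert_inj {G : SimpleGraph V} {a b : V} {W : G.Walk a b} (h : W.IsPath) :
    ∀ i j, i ≤ W.length → j ≤ W.length → W.getVert i = W.getVert j → i = j := by
  induction W with
  | nil => intro i j hi hj _; simp at hi hj; omega
  | @cons u c b hadj q ih =>
    rw [SimpleGraph.Walk.cons_isPath_iff] at h
    intro i j hi hj hij
    match i, j with
    | 0, 0 => rfl
    | 0, j+1 =>
      exfalso
      apply h.2
      rw [SimpleGraph.Walk.mem_support_iff_exists_getVert]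
      exact ⟨j, by simpa using hij.symm, by simpa using hj⟩
    | i+1, 0 =>
      exfalso
      apply h.2
      rw [SimpleGraph.Walk.mem_support_iff_exists_getVert]
      exact ⟨i, by simpa using hij, by simpa using hi⟩
    | i+1, j+1 =>
      have := ih h.1 i j (by simpa using hi) (by simpa using hj) (by simpa using hij)
      omega

lemma getVert_mem_support {G : SimpleGraph V} {a b : V} (W : G.Walk a b) {i : ℕ}
    (hi : i ≤ W.length) : W.getVert i ∈ W.support :=
  SimpleGraph.Walk.mem_support_iff_exists_getVert.mpr ⟨i, rfl, hi⟩

/-- A chain walk along an indexed family. -/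
def chain (G : SimpleGraph V) (f : ℕ → V) :
    ∀ (a d : ℕ), (∀ t, a ≤ t → t < a + d → G.Adj (f t) (f (t+1))) → G.Walk (f a) (f (a + d))
  | _, 0, _ => SimpleGraph.Walk.nil
  | a, d+1, h =>
    (SimpleGraph.Walk.cons (h a le_rfl (by omega))
      (chain G f (a+1) d (fun t ht ht' => h t (by omega) (by omega)))).copy rfl
      (congrArg f (by omega))

@[simp] lemma chain_length (G : SimpleGraph V) (f : ℕ → V) (a d : ℕ) (h) :
    (chain G f a d h).length = d := by
  induction d generalizing a with
  | zero => rfl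
  | succ d ih => simp [chain, ih]

lemma chain_mem_support (G : SimpleGraph V) (f : ℕ → V) (a d : ℕ) (h) (z : V) :
    z ∈ (chain G f a d h).support ↔ ∃ t, t ≤ d ∧ z = f (a+t) := by
  induction d generalizing a with
  | zero =>
    simp only [chain, SimpleGraph.Walk.support_nil, List.mem_singleton]
    constructor
    · rintro rfl; exact ⟨0, le_rfl, rfl⟩
    · rintro ⟨t, ht, rfl⟩
      obtain rfl : t = 0 := by omega
      simp
  | succ d ih =>
    simp only [chain, SimpleGraph.Walk.support_copy, SimpleGraph.Walk.support_cons,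
      List.mem_cons, ih]
    constructor
    · rintro (rfl | ⟨t, ht, rfl⟩)
      · exact ⟨0, by omega, by simp⟩
      · exact ⟨t+1, by omega, congrArg f (by omega)⟩
    · rintro ⟨t, ht, rfl⟩
      match t with
      | 0 => exact Or.inl (congrArg f (by omega))
      | t+1 => exact Or.inr ⟨t, by omega, congrArg f (by omega)⟩

lemma chain_isPath (G : SimpleGraph V) (f : ℕ → V) (a d : ℕ) (h)
    (hinj : ∀ s t, a ≤ s → s ≤ a + d → a ≤ t → t ≤ a + d → f s = f t → s = t) :
    (chain G f a d h).IsPath := by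
  induction d generalizing a with
  | zero => exact SimpleGraph.Walk.IsPath.nil
  | succ d ih =>
    rw [chain, SimpleGraph.Walk.isPath_copy]
    refine SimpleGraph.Walk.IsPath.cons (ih _ _ ?_) ?_
    · intro s t hs hs' ht ht' hst
      exact hinj s t (by omega) (by omega) (by omega) (by omega) hst
    · rw [chain_mem_support]
      rintro ⟨t, ht, hft⟩
      have := hinj a (a+1+t) le_rfl (by omega) (by omega) (by omega) hft
      omega


lemma exists_maximal_path [Fintype V] (G : SimpleGraph V) :
    ∀ (n : ℕ) {a b : V} (W : G.Walk a b), W.IsPath → Fintype.card V - W.length ≤ n →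
    ∃ (a' b' : V) (W' : G.Walk a' b'), W'.IsPath ∧ (∀ z ∈ W.support, z ∈ W'.support) ∧
      (∀ z, G.Adj a' z → z ∈ W'.support) ∧ (∀ z, G.Adj b' z → z ∈ W'.support) := by
  intro n
  induction n with
  | zero =>
    intro a b W hW hn
    exact absurd hW.length_lt (by omega)
  | succ n ih =>
    intro a b W hW hn
    by_cases ha : ∃ z, G.Adj a z ∧ z ∉ W.support
    · obtain ⟨z, hz, hzs⟩ := ha
      have hW' : (W.cons hz.symm).IsPath := hW.cons hzs
      obtain ⟨a', b', W', h1, h2, h3, h4⟩ := ih (W.cons hz.symm) hW'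
        (by
          have := hW'.length_lt
          simp only [SimpleGraph.Walk.length_cons] at this ⊢
          omega)
      exact ⟨a', b', W', h1, fun w hw => h2 w (by simp [hw]), h3, h4⟩
    · by_cases hb : ∃ z, G.Adj b z ∧ z ∉ W.support
      · obtain ⟨z, hz, hzs⟩ := hb
        have hW' : (W.reverse.cons hz.symm).IsPath := hW.reverse.cons (by simpa using hzs)
        obtain ⟨a', b', W', h1, h2, h3, h4⟩ := ih (W.reverse.cons hz.symm) hW'
          (by
            have := hW'.length_lt
            simp only [SimpleGraph.Walk.length_cons, SimpleGraph.Walk.length_reverse]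
              at this ⊢
            omega)
        refine ⟨a', b', W', h1, fun w hw => h2 w (by simp [hw]), h3, h4⟩
      · push_neg at ha hb
        exact ⟨a, b, W, hW, fun w hw => hw,
          fun z hz => ha z hz, fun z hz => hb z hz⟩

lemma support_closed [DecidableEq V] (G : SimpleGraph V)
    (hdeg : ∀ (z : V) (s : Finset V), (∀ y ∈ s, G.Adj z y) → s.card ≤ 2)
    {a b : V} (W : G.Walk a b) (hW : W.IsPath)
    (ha : ∀ z, G.Adj a z → z ∈ W.support) (hb : ∀ z, G.Adj b z → z ∈ W.support) :
    ∀ w z, w ∈ W.support → G.Adj w z → z ∈ W.support := by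
  intro w z hw hadj
  by_contra hzs
  obtain ⟨i, rfl, hi⟩ := SimpleGraph.Walk.mem_support_iff_exists_getVert.mp hw
  have hi0 : i ≠ 0 := by
    rintro rfl
    exact hzs (ha z (by simpa using hadj))
  have hilen : i ≠ W.length := by
    rintro rfl
    exact hzs (hb z (by simpa using hadj))
  -- i is internal; three distinct neighbors
  have hprev : G.Adj (W.getVert i) (W.getVert (i-1)) := by
    have := W.adj_getVert_succ (i := i - 1) (by omega)
    rw [show i - 1 + 1 = i by omega] at this
    exact this.symm
  have hnext : G.Adj (W.getVert i) (W.getVert (i+1)) :=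
    W.adj_getVert_succ (by omega)
  have hne1 : W.getVert (i-1) ≠ W.getVert (i+1) := fun hh =>
    by have := getVert_inj hW (i-1) (i+1) (by omega) (by omega) hh; omega
  have hz1 : z ≠ W.getVert (i-1) := fun hh => hzs (hh ▸ getVert_mem_support W (by omega))
  have hz2 : z ≠ W.getVert (i+1) := fun hh => hzs (hh ▸ getVert_mem_support W (by omega))
  have hsub : ∀ y ∈ ({W.getVert (i-1), W.getVert (i+1), z} : Finset V),
      G.Adj (W.getVert i) y := by
    intro x hx
    simp only [Finset.mem_insert, Finset.mem_singleton] at hx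
    rcases hx with rfl | rfl | rfl
    · exact hprev
    · exact hnext
    · exact hadj
  have hcard : ({W.getVert (i-1), W.getVert (i+1), z} : Finset V).card = 3 := by
    rw [Finset.card_insert_of_notMem (by simp [hne1, hz1.symm]),
      Finset.card_insert_of_notMem (by simp [hz2.symm]), Finset.card_singleton]
  have := hdeg (W.getVert i) _ hsub
  rw [hcard] at this
  omega

lemma walk_end_mem {G : SimpleGraph V} {s : Set V}
    (hclosed : ∀ w z, w ∈ s → G.Adj w z → z ∈ s) :
    ∀ {a z : V}, G.Walk a z → a ∈ s → z ∈ s := by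
  intro a z R
  induction R with
  | nil => exact id
  | cons h p ih => exact fun ha => ih (hclosed _ _ ha h)

lemma reach_subset {G : SimpleGraph V} {s : Set V}
    (hclosed : ∀ w z, w ∈ s → G.Adj w z → z ∈ s) {a : V} (ha : a ∈ s) :
    ∀ z, G.Reachable a z → z ∈ s := fun _ hr => hr.elim fun R => walk_end_mem hclosed R ha


section Tree
variable {T : SimpleGraph V}

lemma path_unique (hT : T.IsTree) {a b : V} (p q : T.Walk a b) (hp : p.IsPath)
    (hq : q.IsPath) : p = q :=
  ((hT.existsUnique_path a b).unique hp hq)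

lemma edge_isPath {a b : V} (h : T.Adj a b) :
    (SimpleGraph.Walk.cons h SimpleGraph.Walk.nil).IsPath := by
  simp [SimpleGraph.Walk.isPath_def, h.ne]

end Tree

lemma exists_path_between_le {G : SimpleGraph V} {a b : V} (W : G.Walk a b) (hW : W.IsPath)
    {i i' : ℕ} (hle : i ≤ i') (hi' : i' ≤ W.length) :
    ∃ P : G.Walk (W.getVert i) (W.getVert i'), P.IsPath ∧
      P.length = i' - i ∧ ∀ z ∈ P.support, z ∈ W.support := by
  have hadjs : ∀ t, i ≤ t → t < i + (i' - i) → G.Adj (W.getVert t) (W.getVert (t+1)) :=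
    fun t _ ht' => W.adj_getVert_succ (by omega)
  refine ⟨(chain G W.getVert i (i' - i) hadjs).copy rfl (congrArg W.getVert (by omega)),
    ?_, ?_, ?_⟩
  · rw [SimpleGraph.Walk.isPath_copy]
    exact chain_isPath _ _ _ _ _ fun s t hs hs' ht ht' hst =>
      getVert_inj hW s t (by omega) (by omega) hst
  · simp
  · intro z hz
    rw [SimpleGraph.Walk.support_copy, chain_mem_support] at hz
    obtain ⟨t, ht, rfl⟩ := hz
    exact getVert_mem_support W (by omega)

lemma exists_path_between {G : SimpleGraph V} {a b : V} (W : G.Walk a b) (hW : W.IsPath)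
    {i i' : ℕ} (hi : i ≤ W.length) (hi' : i' ≤ W.length) :
    ∃ P : G.Walk (W.getVert i) (W.getVert i'), P.IsPath ∧
      P.length = max i i' - min i i' ∧ ∀ z ∈ P.support, z ∈ W.support := by
  rcases le_total i i' with hle | hle
  · obtain ⟨P, h1, h2, h3⟩ := exists_path_between_le W hW hle hi'
    exact ⟨P, h1, by omega, h3⟩
  · obtain ⟨P, h1, h2, h3⟩ := exists_path_between_le W hW hle hi
    refine ⟨P.reverse, by simpa using h1, by simpa using (by omega : P.length = max i i' - min i i'),
      fun z hz => h3 z (by simpa using hz)⟩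

lemma walk_adj_iff {T : SimpleGraph V} (hT : T.IsTree) {G : SimpleGraph V} (hle : G ≤ T)
    {a b : V} (W : G.Walk a b) (hW : W.IsPath) {i i' : ℕ}
    (hi : i ≤ W.length) (hi' : i' ≤ W.length) :
    T.Adj (W.getVert i) (W.getVert i') ↔ (i + 1 = i' ∨ i' + 1 = i) := by
  constructor
  · intro hadj
    obtain ⟨P, hP, hlen, _⟩ := exists_path_between W hW hi hi'
    have heq := path_unique hT (P.mapLe hle) (.cons hadj .nil) (hP.mapLe hle)
      (edge_isPath hadj)
    have hl : (P.mapLe hle).length = 1 := by rw [heq]; simp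
    simp only [SimpleGraph.Walk.length_map] at hl
    omega
  · rintro (h | h)
    · have := W.adj_getVert_succ (i := i) (by omega)
      rw [h] at this
      exact hle this
    · have := W.adj_getVert_succ (i := i') (by omega)
      rw [h] at this
      exact (hle this).symm

lemma reach_p_or_q [DecidableEq V] {T : SimpleGraph V} (hT : T.IsTree) {p q : V} (hpq : T.Adj p q) (z : V) :
    (T.deleteEdges {s(p,q)}).Reachable p z ∨ (T.deleteEdges {s(p,q)}).Reachable q z := by
  obtain ⟨P, hP, -⟩ := hT.existsUnique_path z p
  by_cases hq : q ∈ P.support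
  · right
    have hne : ∀ e ∈ (P.takeUntil q hq).edges, e ∉ ({s(p,q)} : Set (Sym2 V)) := by
      intro e he hmem
      rw [Set.mem_singleton_iff] at hmem
      subst hmem
      have hpW : p ∈ (P.takeUntil q hq).support :=
        (P.takeUntil q hq).fst_mem_support_of_mem_edges he
      have hnodup : ((P.takeUntil q hq).support ++ (P.dropUntil q hq).support.tail).Nodup := by
        rw [← SimpleGraph.Walk.support_append, SimpleGraph.Walk.take_spec]
        exact hP.support_nodup
      have hdisj := List.disjoint_of_nodup_append hnodup
      apply hdisj hpW
      have : p ∈ (P.dropUntil q hq).support := SimpleGraph.Walk.end_mem_support _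
      rw [SimpleGraph.Walk.support_eq_cons] at this
      rcases List.mem_cons.mp this with h | h
      · exact absurd h hpq.ne
      · exact h
    exact ⟨((P.takeUntil q hq).toDeleteEdges _ hne).reverse⟩
  · left
    have hne : ∀ e ∈ P.edges, e ∉ ({s(p,q)} : Set (Sym2 V)) := by
      intro e he hmem
      rw [Set.mem_singleton_iff] at hmem
      subst hmem
      exact hq (P.snd_mem_support_of_mem_edges he)
    exact ⟨(P.toDeleteEdges _ hne).reverse⟩

lemma reach_not_both [DecidableEq V] {T : SimpleGraph V} (hT : T.IsTree) {p q : V} (hpq : T.Adj p q) (z : V)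
    (h1 : (T.deleteEdges {s(p,q)}).Reachable p z)
    (h2 : (T.deleteEdges {s(p,q)}).Reachable q z) : False := by
  obtain ⟨R⟩ := h1.trans h2.symm
  have hBp : R.bypass.IsPath := R.bypass_isPath
  have heq := path_unique hT (R.bypass.mapLe (T.deleteEdges_le _)) (.cons hpq .nil)
    (hBp.mapLe _) (edge_isPath hpq)
  have hl : (R.bypass.mapLe (T.deleteEdges_le _)).length = 1 := by rw [heq]; simp
  simp only [SimpleGraph.Walk.length_map] at hl
  have hadj := R.bypass.adj_getVert_succ (i := 0) (by omega)
  rw [SimpleGraph.Walk.getVert_zero, show (0:ℕ)+1 = R.bypass.length from by omega,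
    SimpleGraph.Walk.getVert_length] at hadj
  rw [SimpleGraph.deleteEdges_adj] at hadj
  exact hadj.2 rfl



lemma support_mapLe {G G' : SimpleGraph V} (h : G ≤ G') {a b : V} (p : G.Walk a b) :
    (p.mapLe h).support = p.support := by
  simp only [SimpleGraph.Walk.mapLe, SimpleGraph.Walk.support_map]
  exact List.map_id' _

lemma backward_main [Fintype V] [DecidableEq V] {T : SimpleGraph V}
    (hT : T.IsTree) {p q : V} (hpq : T.Adj p q)
    (hdeg : ∀ (z : V) (s : Finset V), (∀ y ∈ s, (T.deleteEdges {s(p,q)}).Adj z y) → s.card ≤ 2) :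
    IsTwoParallelPaths T := by
  set G' := T.deleteEdges {s(p,q)} with hG'
  have hle : G' ≤ T := T.deleteEdges_le _
  obtain ⟨a1, b1, W1, hW1, hs1, hend1a, hend1b⟩ :=
    exists_maximal_path G' (Fintype.card V) (.nil : G'.Walk p p) (by simp) (by omega)
  obtain ⟨a2, b2, W2, hW2, hs2, hend2a, hend2b⟩ :=
    exists_maximal_path G' (Fintype.card V) (.nil : G'.Walk q q) (by simp) (by omega)
  have hp1 : p ∈ W1.support := hs1 p (by simp)
  have hq2 : q ∈ W2.support := hs2 q (by simp)
  have hcl1 := support_closed G' hdeg W1 hW1 hend1a hend1b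
  have hcl2 := support_closed G' hdeg W2 hW2 hend2a hend2b
  have hcov1 : ∀ z, G'.Reachable p z → z ∈ W1.support :=
    reach_subset (s := {z | z ∈ W1.support}) hcl1 hp1
  have hcov2 : ∀ z, G'.Reachable q z → z ∈ W2.support :=
    reach_subset (s := {z | z ∈ W2.support}) hcl2 hq2
  have hreach1 : ∀ z ∈ W1.support, G'.Reachable p z := fun z hz =>
    (Walk.reachable (W1.takeUntil p hp1)).symm.trans ⟨W1.takeUntil z hz⟩
  have hreach2 : ∀ z ∈ W2.support, G'.Reachable q z := fun z hz =>
    (Walk.reachable (W2.takeUntil q hq2)).symm.trans ⟨W2.takeUntil z hz⟩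
  have hdisj : ∀ z, z ∈ W1.support → z ∈ W2.support → False := fun z h1 h2 =>
    reach_not_both hT hpq z (hreach1 z h1) (hreach2 z h2)
  obtain ⟨i₀, hi₀, hi₀len⟩ := SimpleGraph.Walk.mem_support_iff_exists_getVert.mp hp1
  obtain ⟨j₀, hj₀, hj₀len⟩ := SimpleGraph.Walk.mem_support_iff_exists_getVert.mp hq2
  refine ⟨W1.length + 1, W2.length + 1, fun i => W1.getVert i, fun j => W2.getVert j,
    ?_, ?_, ?_, ?_, ?_, ?_, ?_⟩
  · intro i j hij
    exact Fin.ext (getVert_inj hW1 i j i.is_le j.is_le hij)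
  · intro i j hij
    exact Fin.ext (getVert_inj hW2 i j i.is_le j.is_le hij)
  · intro i j hij
    have hij' : W1.getVert i = W2.getVert j := hij
    refine hdisj _ (getVert_mem_support W1 i.is_le) ?_
    rw [hij']
    exact getVert_mem_support W2 j.is_le
  · intro x
    rcases reach_p_or_q hT hpq x with h | h
    · obtain ⟨n, hn, hnlen⟩ := SimpleGraph.Walk.mem_support_iff_exists_getVert.mp (hcov1 x h)
      exact Or.inl ⟨⟨n, by omega⟩, hn⟩
    · obtain ⟨n, hn, hnlen⟩ := SimpleGraph.Walk.mem_support_iff_exists_getVert.mp (hcov2 x h)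
      exact Or.inr ⟨⟨n, by omega⟩, hn⟩
  · intro i i'
    exact walk_adj_iff hT hle W1 hW1 i.is_le i'.is_le
  · intro j j'
    exact walk_adj_iff hT hle W2 hW2 j.is_le j'.is_le
  · have key : ∀ (i : Fin (W1.length + 1)) (j : Fin (W2.length + 1)),
        T.Adj (W1.getVert i) (W2.getVert j) → (i : ℕ) = i₀ ∧ (j : ℕ) = j₀ := by
      intro i j hadj
      obtain ⟨P1, hP1, hP1len, hP1sup⟩ := exists_path_between W1 hW1 (i.is_le) hi₀len
      obtain ⟨P2, hP2, hP2len, hP2sup⟩ := exists_path_between W2 hW2 hj₀len (j.is_le)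
      set Q1 : T.Walk (W1.getVert i) p := (P1.copy rfl hi₀).mapLe hle with hQ1
      set Q2 : T.Walk q (W2.getVert j) := (P2.copy hj₀ rfl).mapLe hle with hQ2
      have hQ1sup : Q1.support = P1.support := by
        rw [hQ1, support_mapLe, SimpleGraph.Walk.support_copy]
      have hQ2sup : Q2.support = P2.support := by
        rw [hQ2, support_mapLe, SimpleGraph.Walk.support_copy]
      have hfull : (Q1.append (.cons hpq Q2)).IsPath := by
        rw [SimpleGraph.Walk.isPath_def, SimpleGraph.Walk.support_append,
          SimpleGraph.Walk.support_cons, List.tail_cons, hQ1sup, hQ2sup]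
        rw [List.nodup_append]
        refine ⟨hP1.support_nodup, hP2.support_nodup, ?_⟩
        intro z hz1 z' hz2 rfl
        exact hdisj z (hP1sup z hz1) (hP2sup z hz2)
      have heq := path_unique hT (Q1.append (.cons hpq Q2)) (.cons hadj .nil) hfull
        (edge_isPath hadj)
      have hlen : Q1.length + (Q2.length + 1) = 1 := by
        have := congrArg SimpleGraph.Walk.length heq
        simpa [SimpleGraph.Walk.length_append] using this
      have hQ1len : Q1.length = max (i:ℕ) i₀ - min (i:ℕ) i₀ := by
        rw [hQ1]; simpa using hP1len
      have hQ2len : Q2.length = max j₀ (j:ℕ) - min j₀ (j:ℕ) := by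
        rw [hQ2]; simpa using hP2len
      constructor <;> omega
    intro i j i' j' h h'
    obtain ⟨e1, e2⟩ := key i j h
    obtain ⟨e1', e2'⟩ := key i' j' h'
    have hii : i = i' := Fin.ext (by omega)
    have hjj : j = j' := Fin.ext (by omega)
    subst hii; subst hjj
    rintro (⟨hh, -⟩ | ⟨hh, -⟩) <;> exact lt_irrefl _ hh


lemma card_le_of_adj [Fintype V] {G : SimpleGraph V} [DecidableRel G.Adj] {n : ℕ}
    (hdeg : ∀ x, G.degree x ≤ n) :
    ∀ (z : V) (s : Finset V), (∀ y ∈ s, G.Adj z y) → s.card ≤ n := by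
  intro z s hs
  refine le_trans (Finset.card_le_card fun y hy => ?_) (hdeg z)
  rw [SimpleGraph.mem_neighborFinset]
  exact hs y hy

lemma delete_deg2 [Fintype V] [DecidableEq V] {T : SimpleGraph V} [DecidableRel T.Adj]
    {p q : V} (hpq : T.Adj p q) (hp : T.degree p ≤ 3) (hq : T.degree q ≤ 3)
    (hother : ∀ z, z ≠ p → z ≠ q → T.degree z ≤ 2) :
    ∀ (z : V) (s : Finset V), (∀ y ∈ s, (T.deleteEdges {s(p,q)}).Adj z y) → s.card ≤ 2 := by
  intro z s hs
  by_cases hzp : z = p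
  · subst hzp
    have hsub : s ⊆ (T.neighborFinset z).erase q := by
      intro y hy
      have h := hs y hy
      rw [SimpleGraph.deleteEdges_adj] at h
      obtain ⟨hadj, hne⟩ := h
      rw [Finset.mem_erase, SimpleGraph.mem_neighborFinset]
      refine ⟨?_, hadj⟩
      rintro rfl
      exact hne rfl
    have h2 := Finset.card_le_card hsub
    rw [Finset.card_erase_of_mem (by rwa [SimpleGraph.mem_neighborFinset])] at h2
    have : (T.neighborFinset z).card = T.degree z := rfl
    omega
  · by_cases hzq : z = q
    · subst hzq
      have hsub : s ⊆ (T.neighborFinset z).erase p := by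
        intro y hy
        have h := hs y hy
        rw [SimpleGraph.deleteEdges_adj] at h
        obtain ⟨hadj, hne⟩ := h
        rw [Finset.mem_erase, SimpleGraph.mem_neighborFinset]
        refine ⟨?_, hadj⟩
        rintro rfl
        exact hne (by rw [Sym2.eq_swap]; exact rfl)
      have h2 := Finset.card_le_card hsub
      rw [Finset.card_erase_of_mem
        (by rw [SimpleGraph.mem_neighborFinset]; exact hpq.symm)] at h2
      have : (T.neighborFinset z).card = T.degree z := rfl
      omega
    · refine le_trans (Finset.card_le_card fun y hy => ?_) (hother z hzp hzq)
      rw [SimpleGraph.mem_neighborFinset]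
      exact (SimpleGraph.deleteEdges_adj.mp (hs y hy)).1

lemma backward_nodeg3 [Fintype V] [DecidableEq V] {T : SimpleGraph V}
    (hT : T.IsTree)
    (hdeg : ∀ (z : V) (s : Finset V), (∀ y ∈ s, T.Adj z y) → s.card ≤ 2) :
    IsTwoParallelPaths T := by
  have hne : Nonempty V := hT.isConnected.nonempty
  obtain ⟨p⟩ := hne
  obtain ⟨a1, b1, W1, hW1, hs1, h1a, h1b⟩ :=
    exists_maximal_path T (Fintype.card V) (.nil : T.Walk p p) (by simp) (by omega)
  have hp1 : p ∈ W1.support := hs1 p (by simp)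
  have hcl := support_closed T hdeg W1 hW1 h1a h1b
  have hcov : ∀ z, z ∈ W1.support := fun z =>
    reach_subset (s := {z | z ∈ W1.support}) hcl hp1 z (hT.isConnected.preconnected p z)
  refine ⟨W1.length + 1, 0, fun i => W1.getVert i, fun j => j.elim0,
    ?_, ?_, ?_, ?_, ?_, ?_, ?_⟩
  · intro i j hij
    exact Fin.ext (getVert_inj hW1 i j i.is_le j.is_le hij)
  · intro j; exact j.elim0
  · intro i j; exact j.elim0
  · intro x
    obtain ⟨n, hn, hnlen⟩ := SimpleGraph.Walk.mem_support_iff_exists_getVert.mp (hcov x)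
    exact Or.inl ⟨⟨n, by omega⟩, hn⟩
  · intro i i'
    exact walk_adj_iff hT le_rfl W1 hW1 i.is_le i'.is_le
  · intro j; exact j.elim0
  · intro i j; exact j.elim0

lemma backward [Fintype V] [DecidableEq V] (T : SimpleGraph V) [DecidableRel T.Adj]
    (hT : T.IsTree) (h1 : ∀ x, T.degree x ≤ 3)
    (h2 : (Finset.univ.filter fun x => T.degree x = 3).card ≤ 2)
    (h3 : ∀ x y, T.degree x = 3 → T.degree y = 3 → x ≠ y → T.Adj x y) :
    IsTwoParallelPaths T := by
  by_cases hd3 : ∃ x, T.degree x = 3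
  · obtain ⟨x, hx⟩ := hd3
    by_cases hd3' : ∃ y, T.degree y = 3 ∧ y ≠ x
    · obtain ⟨y, hy, hyx⟩ := hd3'
      have hadj : T.Adj x y := h3 x y hx hy (Ne.symm hyx)
      refine backward_main hT hadj (delete_deg2 hadj (le_of_eq hx) (le_of_eq hy) ?_)
      intro z hzx hzy
      by_contra hz
      have hz3 : T.degree z = 3 := by have := h1 z; omega
      have hsub : ({x, y, z} : Finset V) ⊆ Finset.univ.filter fun w => T.degree w = 3 := by
        intro w hw
        simp only [Finset.mem_insert, Finset.mem_singleton] at hw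
        rcases hw with rfl | rfl | rfl <;> simp [hx, hy, hz3]
      have hcard : ({x, y, z} : Finset V).card = 3 := by
        rw [Finset.card_insert_of_notMem (by
            simp only [Finset.mem_insert, Finset.mem_singleton]
            push_neg
            exact ⟨Ne.symm hyx, Ne.symm hzx⟩),
          Finset.card_insert_of_notMem (by
            simp only [Finset.mem_singleton]
            exact Ne.symm hzy), Finset.card_singleton]
      have := Finset.card_le_card hsub
      omega
    · push_neg at hd3'
      have hq : ∃ q, T.Adj x q := by
        rw [← SimpleGraph.degree_pos_iff_exists_adj]
        omega
      obtain ⟨q, hq⟩ := hq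
      refine backward_main hT hq (delete_deg2 hq (le_of_eq hx) (h1 q) ?_)
      intro z hzx _
      have := h1 z
      rcases Nat.lt_or_ge (T.degree z) 3 with h | h
      · omega
      · exact absurd (hd3' z (by omega)) hzx
  · push_neg at hd3
    refine backward_nodeg3 hT (card_le_of_adj fun x => ?_)
    have := h1 x
    have := hd3 x
    omega

-- ============ forward direction ============

lemma family_walk_le {T : SimpleGraph V} {k : ℕ} (v : Fin k → V) (hv : Function.Injective v)
    (hadj : ∀ i i' : Fin k, (i:ℕ)+1 = (i':ℕ) → T.Adj (v i) (v i'))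
    (i i' : Fin k) (hle : (i:ℕ) ≤ (i':ℕ)) :
    ∃ P : T.Walk (v i) (v i'), P.IsPath ∧ P.length = (i':ℕ) - (i:ℕ) ∧
      ∀ z ∈ P.support, ∃ t : Fin k, v t = z := by
  have hk : 0 < k := i.pos
  set f : ℕ → V := fun t => v ⟨min t (k-1), by omega⟩ with hf
  have hfeq : ∀ (t : ℕ) (ht : t < k), f t = v ⟨t, ht⟩ := fun t ht =>
    congrArg v (Fin.ext (show min t (k-1) = t by omega))
  have hchainadj : ∀ t, (i:ℕ) ≤ t → t < (i:ℕ) + ((i':ℕ) - (i:ℕ)) →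
      T.Adj (f t) (f (t+1)) := by
    intro t ht ht'
    have h1 : t < k := by omega
    have h2 : t + 1 < k := by omega
    rw [hfeq t h1, hfeq (t+1) h2]
    exact hadj _ _ rfl
  refine ⟨((chain T f i ((i':ℕ) - (i:ℕ)) hchainadj).copy
    (hfeq i i.isLt ▸ congrArg v (Fin.ext rfl))
    (by rw [show (i:ℕ) + ((i':ℕ) - (i:ℕ)) = (i':ℕ) by omega, hfeq (i':ℕ) i'.isLt])).copy
    (congrArg v (Fin.ext rfl)) (congrArg v (Fin.ext rfl)), ?_, ?_, ?_⟩
  · rw [SimpleGraph.Walk.isPath_copy, SimpleGraph.Walk.isPath_copy]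
    refine chain_isPath _ _ _ _ _ fun s t hs hs' ht ht' hst => ?_
    have h1 : s < k := by omega
    have h2 : t < k := by omega
    rw [hfeq s h1, hfeq t h2] at hst
    have := hv hst
    exact congrArg Fin.val this
  · simp
  · intro z hz
    rw [SimpleGraph.Walk.support_copy, SimpleGraph.Walk.support_copy,
      chain_mem_support] at hz
    obtain ⟨t, ht, rfl⟩ := hz
    exact ⟨_, rfl⟩

lemma family_walk {T : SimpleGraph V} {k : ℕ} (v : Fin k → V) (hv : Function.Injective v)
    (hadj : ∀ i i' : Fin k, (i:ℕ)+1 = (i':ℕ) → T.Adj (v i) (v i'))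
    (i i' : Fin k) :
    ∃ P : T.Walk (v i) (v i'), P.IsPath ∧
      P.length = max (i:ℕ) (i':ℕ) - min (i:ℕ) (i':ℕ) ∧
      ∀ z ∈ P.support, ∃ t : Fin k, v t = z := by
  rcases le_total (i:ℕ) (i':ℕ) with hle | hle
  · obtain ⟨P, h1, h2, h3⟩ := family_walk_le v hv hadj i i' hle
    exact ⟨P, h1, by omega, h3⟩
  · obtain ⟨P, h1, h2, h3⟩ := family_walk_le v hv hadj i' i hle
    exact ⟨P.reverse, by simpa using h1,
      by rw [SimpleGraph.Walk.length_reverse]; omega,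
      fun z hz => h3 z (by simpa using hz)⟩

lemma cross_unique {T : SimpleGraph V} (hT : T.IsTree) {k l : ℕ}
    (v : Fin k → V) (u : Fin l → V) (hv : Function.Injective v) (hu : Function.Injective u)
    (hvu : ∀ i j, v i ≠ u j)
    (hadjv : ∀ i i' : Fin k, (i:ℕ)+1 = (i':ℕ) → T.Adj (v i) (v i'))
    (hadju : ∀ j j' : Fin l, (j:ℕ)+1 = (j':ℕ) → T.Adj (u j) (u j')) :
    ∀ i j i' j', T.Adj (v i) (u j) → T.Adj (v i') (u j') → i = i' ∧ j = j' := by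
  intro i j i' j' h h'
  obtain ⟨P1, hP1, hP1len, hP1sup⟩ := family_walk v hv hadjv i i'
  obtain ⟨P2, hP2, hP2len, hP2sup⟩ := family_walk u hu hadju j' j
  have hfull : (P1.append (.cons h' P2)).IsPath := by
    rw [SimpleGraph.Walk.isPath_def, SimpleGraph.Walk.support_append,
      SimpleGraph.Walk.support_cons, List.tail_cons, List.nodup_append]
    refine ⟨hP1.support_nodup, hP2.support_nodup, ?_⟩
    intro z hz1 z' hz2 rfl
    obtain ⟨t, rfl⟩ := hP1sup z hz1
    obtain ⟨s, hs⟩ := hP2sup _ hz2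
    exact hvu t s hs.symm
  have heq := path_unique hT (P1.append (.cons h' P2)) (.cons h .nil) hfull (edge_isPath h)
  have hlen : P1.length + (P2.length + 1) = 1 := by
    have := congrArg SimpleGraph.Walk.length heq
    simpa [SimpleGraph.Walk.length_append] using this
  constructor
  · exact Fin.ext (by omega)
  · exact Fin.ext (by omega)

lemma neighbor_classify {T : SimpleGraph V} {k l : ℕ}
    (v : Fin k → V) (u : Fin l → V)
    (hcov : ∀ x, (∃ i, v i = x) ∨ (∃ j, u j = x))
    (hadjv : ∀ i i' : Fin k, T.Adj (v i) (v i') ↔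
      ((i : ℕ) + 1 = (i' : ℕ) ∨ (i' : ℕ) + 1 = (i : ℕ)))
    (i : Fin k) (z : V) (hz : T.Adj (v i) z) :
    (∃ i' : Fin k, v i' = z ∧ (i':ℕ)+1 = (i:ℕ)) ∨
    (∃ i' : Fin k, v i' = z ∧ (i:ℕ)+1 = (i':ℕ)) ∨
    (∃ j : Fin l, u j = z) := by
  rcases hcov z with ⟨i', rfl⟩ | ⟨j, rfl⟩
  · rcases (hadjv i i').mp hz with h | h
    · exact Or.inr (Or.inl ⟨i', rfl, h⟩)
    · exact Or.inl ⟨i', rfl, h⟩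
  · exact Or.inr (Or.inr ⟨j, rfl⟩)

lemma deg_le_aux [Fintype V] {T : SimpleGraph V} [DecidableRel T.Adj] {k l : ℕ}
    (v : Fin k → V) (u : Fin l → V) (hv : Function.Injective v)
    (hcov : ∀ x, (∃ i, v i = x) ∨ (∃ j, u j = x))
    (hadjv : ∀ i i' : Fin k, T.Adj (v i) (v i') ↔
      ((i : ℕ) + 1 = (i' : ℕ) ∨ (i' : ℕ) + 1 = (i : ℕ)))
    (crossU : ∀ (j j' : Fin l) (i : Fin k), T.Adj (v i) (u j) → T.Adj (v i) (u j') → j = j')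
    (i : Fin k) :
    T.degree (v i) ≤ 3 ∧ ((¬∃ j : Fin l, T.Adj (v i) (u j)) → T.degree (v i) ≤ 2) := by
  classical
  set f : V → ℕ := fun z =>
    if ∃ i' : Fin k, v i' = z ∧ (i':ℕ)+1 = (i:ℕ) then 0
    else if ∃ i' : Fin k, v i' = z ∧ (i:ℕ)+1 = (i':ℕ) then 1 else 2 with hfdef
  have hv3 : ∀ z, f z = 0 ∨ f z = 1 ∨ f z = 2 := by
    intro z
    rw [hfdef]
    simp only
    split_ifs <;> simp
  have hf0 : ∀ z, f z = 0 → ∃ a : Fin k, v a = z ∧ (a:ℕ)+1 = (i:ℕ) := by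
    intro z h0
    by_cases hA : ∃ i' : Fin k, v i' = z ∧ (i':ℕ)+1 = (i:ℕ)
    · exact hA
    · rw [hfdef] at h0
      simp only [if_neg hA] at h0
      split_ifs at h0 <;> omega
  have hf1 : ∀ z, f z = 1 → ∃ a : Fin k, v a = z ∧ (i:ℕ)+1 = (a:ℕ) := by
    intro z h1
    by_cases hB : ∃ i' : Fin k, v i' = z ∧ (i:ℕ)+1 = (i':ℕ)
    · exact hB
    · rw [hfdef] at h1
      simp only [if_neg hB] at h1
      split_ifs at h1 <;> omega
  have hf2 : ∀ z, T.Adj (v i) z → f z = 2 → ∃ j : Fin l, u j = z ∧ T.Adj (v i) (u j) := by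
    intro z hz h2
    rcases neighbor_classify v u hcov hadjv i z hz with h | h | h
    · rw [hfdef] at h2
      simp only [if_pos h] at h2
      omega
    · exfalso
      rw [hfdef] at h2
      by_cases w1 : ∃ i' : Fin k, v i' = z ∧ (i':ℕ)+1 = (i:ℕ)
      · simp only [if_pos w1] at h2
        omega
      · simp only [if_neg w1, if_pos h] at h2
        omega
    · obtain ⟨j, rfl⟩ := h
      exact ⟨j, rfl, hz⟩
  have hinj : Set.InjOn f (T.neighborFinset (v i)) := by
    intro z hz z' hz' hff
    replace hz : T.Adj (v i) z := by simpa using hz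
    replace hz' : T.Adj (v i) z' := by simpa using hz'
    rcases hv3 z with h | h | h
    · obtain ⟨a, rfl, ha⟩ := hf0 z h
      obtain ⟨b, rfl, hb⟩ := hf0 z' (by omega)
      exact congrArg v (Fin.ext (by omega))
    · obtain ⟨a, rfl, ha⟩ := hf1 z h
      obtain ⟨b, rfl, hb⟩ := hf1 z' (by omega)
      exact congrArg v (Fin.ext (by omega))
    · obtain ⟨j, rfl, hj⟩ := hf2 z hz h
      obtain ⟨j', rfl, hj'⟩ := hf2 z' hz' (by omega)
      rw [crossU j j' i hj hj']
  constructor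
  · have := Finset.card_le_card_of_injOn f (t := ({0, 1, 2} : Finset ℕ))
      (fun z _ => by rcases hv3 z with h | h | h <;> simp [h]) hinj
    calc T.degree (v i) = (T.neighborFinset (v i)).card := rfl
      _ ≤ ({0, 1, 2} : Finset ℕ).card := this
      _ = 3 := by decide
  · intro hnc
    have := Finset.card_le_card_of_injOn f (t := ({0, 1} : Finset ℕ))
      (fun z hz => by
        replace hz : T.Adj (v i) z := by simpa using hz
        rcases hv3 z with h | h | h
        · simp [h]
        · simp [h]
        · obtain ⟨j, -, hj⟩ := hf2 z hz h
          exact absurd ⟨j, hj⟩ hnc) hinj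
    calc T.degree (v i) = (T.neighborFinset (v i)).card := rfl
      _ ≤ ({0, 1} : Finset ℕ).card := this
      _ = 2 := by decide

lemma forward [Fintype V] [DecidableEq V] (T : SimpleGraph V) [DecidableRel T.Adj]
    (hT : T.IsTree) (h : IsTwoParallelPaths T) :
    (∀ x, T.degree x ≤ 3) ∧
      (Finset.univ.filter fun x => T.degree x = 3).card ≤ 2 ∧
      (∀ x y, T.degree x = 3 → T.degree y = 3 → x ≠ y → T.Adj x y) := by
  obtain ⟨k, l, v, u, hv, hu, hvu, hcov, hadjv, hadju, -⟩ := h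
  have hadjv1 : ∀ i i' : Fin k, (i:ℕ)+1 = (i':ℕ) → T.Adj (v i) (v i') :=
    fun i i' hh => (hadjv i i').mpr (Or.inl hh)
  have hadju1 : ∀ j j' : Fin l, (j:ℕ)+1 = (j':ℕ) → T.Adj (u j) (u j') :=
    fun j j' hh => (hadju j j').mpr (Or.inl hh)
  have crossU := cross_unique hT v u hv hu hvu hadjv1 hadju1
  have hvu' : ∀ j i, u j ≠ v i := fun j i => (hvu i j).symm
  have hcov' : ∀ x, (∃ j, u j = x) ∨ (∃ i, v i = x) := fun x => (hcov x).symm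
  have crossUv : ∀ (j j' : Fin l) (i : Fin k),
      T.Adj (v i) (u j) → T.Adj (v i) (u j') → j = j' :=
    fun j j' i hh hh' => (crossU i j i j' hh hh').2
  have crossUu : ∀ (i i' : Fin k) (j : Fin l),
      T.Adj (u j) (v i) → T.Adj (u j) (v i') → i = i' :=
    fun i i' j hh hh' => (crossU i j i' j hh.symm hh'.symm).1
  have hdegv := fun i => deg_le_aux v u hv hcov hadjv crossUv i
  have hdegu := fun j => deg_le_aux u v hu hcov' hadju crossUu j
  have hdeg3 : ∀ x, T.degree x ≤ 3 := by
    intro x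
    rcases hcov x with ⟨i, rfl⟩ | ⟨j, rfl⟩
    · exact (hdegv i).1
    · exact (hdegu j).1
  have main : ((Finset.univ.filter fun x => T.degree x = 3).card ≤ 2) ∧
      (∀ x y, T.degree x = 3 → T.degree y = 3 → x ≠ y → T.Adj x y) := by
    by_cases hc : ∃ (i : Fin k) (j : Fin l), T.Adj (v i) (u j)
    · obtain ⟨i₀, j₀, hc0⟩ := hc
      have key : ∀ x, T.degree x = 3 → x = v i₀ ∨ x = u j₀ := by
        intro x hx
        rcases hcov x with ⟨i, rfl⟩ | ⟨j, rfl⟩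
        · by_cases hcc : ∃ j : Fin l, T.Adj (v i) (u j)
          · obtain ⟨j, hj⟩ := hcc
            left
            have hii := (crossU i j i₀ j₀ hj hc0).1
            rw [hii]
          · have := (hdegv i).2 hcc
            omega
        · by_cases hcc : ∃ i : Fin k, T.Adj (u j) (v i)
          · obtain ⟨i, hi⟩ := hcc
            right
            have hjj := (crossU i j i₀ j₀ hi.symm hc0).2
            rw [hjj]
          · have := (hdegu j).2 hcc
            omega
      constructor
      · have hsub : (Finset.univ.filter fun x => T.degree x = 3) ⊆ {v i₀, u j₀} := by
          intro x hx
          rw [Finset.mem_filter] at hx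
          rcases key x hx.2 with rfl | rfl <;> simp
        refine le_trans (Finset.card_le_card hsub) ?_
        refine le_trans (Finset.card_insert_le _ _) ?_
        simp
      · intro x y hx hy hxy
        rcases key x hx with rfl | rfl <;> rcases key y hy with rfl | rfl
        · exact absurd rfl hxy
        · exact hc0
        · exact hc0.symm
        · exact absurd rfl hxy
    · push_neg at hc
      have key : ∀ x, T.degree x ≠ 3 := by
        intro x hx
        rcases hcov x with ⟨i, rfl⟩ | ⟨j, rfl⟩
        · have := (hdegv i).2 (by push_neg; exact fun j => hc i j)
          omega
        · have := (hdegu j).2 (by rintro ⟨i, hi⟩; exact (hc i j) hi.symm)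
          omega
      refine ⟨?_, fun x y hx _ _ => absurd hx (key x)⟩
      have hemp : (Finset.univ.filter fun x => T.degree x = 3) = ∅ := by
        ext x
        simp [key x]
      rw [hemp]
      simp
  exact ⟨hdeg3, main.1, main.2⟩

end TwoPPAux

/-- A tree T is a graph of two parallel paths iff no vertex has degree ≥ 4,
there are at most two vertices of degree 3, and any two degree-3 vertices are
adjacent. -/
theorem stmt_4 {V : Type*} [Fintype V] [DecidableEq V]
    (T : SimpleGraph V) [DecidableRel T.Adj] (hT : T.IsTree) :
    IsTwoParallelPaths T ↔
      ((∀ x, T.degree x ≤ 3) ∧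
       (Finset.univ.filter fun x => T.degree x = 3).card ≤ 2 ∧
       (∀ x y, T.degree x = 3 → T.degree y = 3 → x ≠ y → T.Adj x y)) := by
  constructor
  · intro h
    exact TwoPPAux.forward T hT h
  · rintro ⟨h1, h2, h3⟩
    exact TwoPPAux.backward T hT h1 h2 h3
end

section
/- If a tree T contains a vertex of degree at least 4, then the vertex set of T cannot be partitioned into two sets each inducing a path. -/
/-- The subset `S` induces a path in `G` (possibly empty or a single vertex):
there is an enumeration of `S` so that the induced subgraph on `S` is exactly a
path in that order. -/
def InducesPath {V : Type*} (G : SimpleGraph V) (S : Set V) : Prop :=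
  ∃ (k : ℕ) (v : Fin k → V), Function.Injective v ∧ Set.range v = S ∧
    ∀ i i', G.Adj (v i) (v i') ↔ ((i : ℕ) + 1 = (i' : ℕ) ∨ (i' : ℕ) + 1 = (i : ℕ))

private lemma walk_along {V : Type*} (T : SimpleGraph V) {k : ℕ} (v : Fin k → V)
    (hinj : Function.Injective v)
    (hadj : ∀ i i', T.Adj (v i) (v i') ↔ ((i : ℕ) + 1 = (i' : ℕ) ∨ (i' : ℕ) + 1 = (i : ℕ))) :
    ∀ d (j j' : Fin k), (j : ℕ) + d = (j' : ℕ) →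
      ∃ p : T.Walk (v j) (v j'), p.IsPath ∧
        ∀ u ∈ p.support, ∃ m : Fin k, (j : ℕ) ≤ (m : ℕ) ∧ u = v m := by
  intro d
  induction d with
  | zero =>
    intro j j' h
    have hjj : j = j' := Fin.ext (by omega)
    subst hjj
    exact ⟨SimpleGraph.Walk.nil, SimpleGraph.Walk.IsPath.nil, by
      intro u hu
      simp only [SimpleGraph.Walk.support_nil, List.mem_singleton] at hu
      exact ⟨j, le_refl _, hu⟩⟩
  | succ d ih =>
    intro j j' h
    have hlt : (j : ℕ) + 1 < k := by have := j'.isLt; omega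
    set j₁ : Fin k := ⟨(j : ℕ) + 1, hlt⟩ with hj₁
    have hadj1 : T.Adj (v j) (v j₁) := (hadj j j₁).mpr (Or.inl rfl)
    obtain ⟨p, hp, hsup⟩ := ih j₁ j' (by simp [hj₁]; omega)
    refine ⟨SimpleGraph.Walk.cons hadj1 p, ?_, ?_⟩
    · refine hp.cons ?_
      intro hmem
      obtain ⟨m, hm, he⟩ := hsup _ hmem
      have : j = m := hinj he
      subst this
      simp [hj₁] at hm
    · intro u hu
      simp only [SimpleGraph.Walk.support_cons, List.mem_cons] at hu
      rcases hu with rfl | hu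
      · exact ⟨j, le_refl _, rfl⟩
      · obtain ⟨m, hm, he⟩ := hsup u hu
        exact ⟨m, by simp [hj₁] at hm; omega, he⟩

private lemma two_paths {V : Type*} {T : SimpleGraph V} (hT : T.IsAcyclic)
    {x a b : V} (hax : T.Adj a x) (hxb : T.Adj x b) (hab : a ≠ b)
    (P : T.Walk a b) (hP : P.IsPath) (hx : x ∉ P.support) : False := by
  have hQ1 : (SimpleGraph.Walk.cons hxb SimpleGraph.Walk.nil).IsPath := by
    refine SimpleGraph.Walk.IsPath.nil.cons ?_
    simp [hxb.ne]
  have hQ : (SimpleGraph.Walk.cons hax (SimpleGraph.Walk.cons hxb SimpleGraph.Walk.nil)).IsPath := by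
    refine hQ1.cons ?_
    simp [hax.ne, hab]
  have huniq := SimpleGraph.isAcyclic_iff_path_unique.mp hT
  have := huniq (⟨P, hP⟩ : T.Path a b) ⟨_, hQ⟩
  apply hx
  have hPQ : P = SimpleGraph.Walk.cons hax (SimpleGraph.Walk.cons hxb SimpleGraph.Walk.nil) :=
    congrArg Subtype.val this
  rw [hPQ]
  simp

private lemma key {V : Type*} [Fintype V] [DecidableEq V]
    (T : SimpleGraph V) [DecidableRel T.Adj] (hT : T.IsTree)
    {x : V} (hdeg : 4 ≤ T.degree x)
    (S₁ S₂ : Set V) (hdisj : Disjoint S₁ S₂) (huniv : S₁ ∪ S₂ = Set.univ)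
    (hx : x ∈ S₁) (h1 : InducesPath T S₁) (h2 : InducesPath T S₂) : False := by
  classical
  obtain ⟨k₁, v, hv_inj, hv_range, hv_adj⟩ := h1
  obtain ⟨k₂, w, hw_inj, hw_range, hw_adj⟩ := h2
  obtain ⟨i, hxi⟩ : ∃ i, v i = x := by rwa [← hv_range] at hx
  set N := T.neighborFinset x with hN
  have hNcard : 4 ≤ N.card := by rwa [hN, SimpleGraph.card_neighborFinset_eq_degree]
  set A := N.filter (· ∈ S₁) with hA
  set B := N.filter (· ∈ S₂) with hB
  -- A has at most 2 elements
  have hAcard : A.card ≤ 2 := by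
    set idx : Finset (Fin k₁) :=
      Finset.univ.filter (fun m => (m : ℕ) + 1 = (i : ℕ) ∨ (i : ℕ) + 1 = (m : ℕ)) with hidx
    have hsub : A ⊆ idx.image v := by
      intro y hy
      rw [hA, Finset.mem_filter] at hy
      obtain ⟨hyN, hyS⟩ := hy
      rw [← hv_range] at hyS
      obtain ⟨m, rfl⟩ := hyS
      have hadj : T.Adj (v i) (v m) := by
        rw [hxi]; rwa [hN, SimpleGraph.mem_neighborFinset] at hyN
      rw [hv_adj] at hadj
      refine Finset.mem_image.mpr ⟨m, ?_, rfl⟩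
      rw [hidx, Finset.mem_filter]
      exact ⟨Finset.mem_univ _, by omega⟩
    have hidxcard : idx.card ≤ 2 := by
      have : idx.card ≤ (Finset.univ : Finset (Fin 2)).card := by
        refine Finset.card_le_card_of_injOn
          (fun m => if (m : ℕ) + 1 = (i : ℕ) then (0 : Fin 2) else 1)
          (fun m _ => Finset.mem_univ _) ?_
        intro m hm m' hm' he
        rw [Finset.mem_coe, hidx, Finset.mem_filter] at hm hm'
        obtain ⟨-, hm⟩ := hm
        obtain ⟨-, hm'⟩ := hm'
        by_cases h1 : (m : ℕ) + 1 = (i : ℕ) <;> by_cases h2 : (m' : ℕ) + 1 = (i : ℕ) <;>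
          simp [h1, h2] at he <;> exact Fin.ext (by omega)
      simpa using this
    calc A.card ≤ (idx.image v).card := Finset.card_le_card hsub
      _ ≤ idx.card := Finset.card_image_le
      _ ≤ 2 := hidxcard
  -- B has at least 2 elements
  have hBcard : 2 ≤ B.card := by
    have hNsub : N ⊆ A ∪ B := by
      intro y hy
      have : y ∈ S₁ ∪ S₂ := by rw [huniv]; trivial
      rcases this with h | h
      · exact Finset.mem_union_left _ (Finset.mem_filter.mpr ⟨hy, h⟩)
      · exact Finset.mem_union_right _ (Finset.mem_filter.mpr ⟨hy, h⟩)
    have := Finset.card_le_card hNsub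
    have := Finset.card_union_le A B
    omega
  obtain ⟨a, ha, b, hb, hab⟩ := Finset.one_lt_card.mp (by omega : 1 < B.card)
  rw [hB, Finset.mem_filter] at ha hb
  obtain ⟨haN, haS⟩ := ha
  obtain ⟨hbN, hbS⟩ := hb
  have hax : T.Adj a x := ((SimpleGraph.mem_neighborFinset _ _ _).mp haN).symm
  have hbx : T.Adj b x := ((SimpleGraph.mem_neighborFinset _ _ _).mp hbN).symm
  have hxw : x ∉ Set.range w := by
    rw [hw_range]; exact fun h => (hdisj.ne_of_mem hx h) rfl
  obtain ⟨j, rfl⟩ : ∃ j, w j = a := by rwa [← hw_range] at haS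
  obtain ⟨j', rfl⟩ : ∃ j', w j' = b := by rwa [← hw_range] at hbS
  have hjj' : (j : ℕ) ≠ (j' : ℕ) := fun h => hab (congrArg w (Fin.ext h))
  rcases lt_or_gt_of_ne hjj' with hlt | hlt
  · obtain ⟨p, hp, hsup⟩ := walk_along T w hw_inj hw_adj ((j' : ℕ) - (j : ℕ)) j j' (by omega)
    refine two_paths hT.IsAcyclic hax hbx.symm hab p hp ?_
    intro hmem
    obtain ⟨m, _, he⟩ := hsup x hmem
    exact hxw ⟨m, he.symm⟩
  · obtain ⟨p, hp, hsup⟩ := walk_along T w hw_inj hw_adj ((j : ℕ) - (j' : ℕ)) j' j (by omega)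
    refine two_paths hT.IsAcyclic hbx hax.symm (Ne.symm hab) p hp ?_
    intro hmem
    obtain ⟨m, _, he⟩ := hsup x hmem
    exact hxw ⟨m, he.symm⟩

/-- If a tree T contains a vertex of degree at least 4, then V(T) cannot be
partitioned into two sets each inducing a path. -/
theorem stmt_5 {V : Type*} [Fintype V] [DecidableEq V]
    (T : SimpleGraph V) [DecidableRel T.Adj] (hT : T.IsTree)
    (hdeg : ∃ x, 4 ≤ T.degree x) :
    ¬ ∃ S₁ S₂ : Set V, Disjoint S₁ S₂ ∧ S₁ ∪ S₂ = Set.univ ∧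
        InducesPath T S₁ ∧ InducesPath T S₂ := by
  rintro ⟨S₁, S₂, hdisj, huniv, h1, h2⟩
  obtain ⟨x, hx⟩ := hdeg
  have : x ∈ S₁ ∪ S₂ := by rw [huniv]; trivial
  rcases this with h | h
  · exact key T hT hx S₁ S₂ hdisj huniv h h1 h2
  · exact key T hT hx S₂ S₁ hdisj.symm (by rw [Set.union_comm]; exact huniv) h h2 h1
end

section
/- If a tree T has three or more vertices of degree 3, then the vertex set of T cannot be partitioned into two sets each inducing a path. -/
open Finset

lemma fin_pair_count_fst (k : ℕ) :
    ((Finset.univ : Finset (Fin k × Fin k)).filter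
      (fun p => (p.1 : ℕ) + 1 = (p.2 : ℕ))).card = k - 1 := by
  rw [← Finset.card_range (k - 1)]
  apply Finset.card_nbij (i := fun p : Fin k × Fin k => (p.1 : ℕ))
  · rintro ⟨p1, p2⟩ hp
    simp only [Finset.mem_coe, Finset.mem_filter] at hp
    have := p2.isLt
    simp only [Finset.mem_coe, Finset.mem_range]
    omega
  · rintro ⟨p1, p2⟩ hp ⟨q1, q2⟩ hq h
    simp only [Finset.coe_filter, Set.mem_setOf_eq] at hp hq
    simp only at h
    simp only [Prod.mk.injEq, Fin.ext_iff]
    omega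
  · intro j hj
    simp only [Finset.coe_range, Set.mem_Iio] at hj
    refine ⟨(⟨j, by omega⟩, ⟨j + 1, by omega⟩), ?_, rfl⟩
    simp

lemma fin_pair_count_snd (k : ℕ) :
    ((Finset.univ : Finset (Fin k × Fin k)).filter
      (fun p => (p.2 : ℕ) + 1 = (p.1 : ℕ))).card = k - 1 := by
  rw [← Finset.card_range (k - 1)]
  apply Finset.card_nbij (i := fun p : Fin k × Fin k => (p.2 : ℕ))
  · rintro ⟨p1, p2⟩ hp
    simp only [Finset.mem_coe, Finset.mem_filter] at hp
    have := p1.isLt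
    simp only [Finset.mem_coe, Finset.mem_range]
    omega
  · rintro ⟨p1, p2⟩ hp ⟨q1, q2⟩ hq h
    simp only [Finset.coe_filter, Set.mem_setOf_eq] at hp hq
    simp only at h
    simp only [Prod.mk.injEq, Fin.ext_iff]
    omega
  · intro j hj
    simp only [Finset.coe_range, Set.mem_Iio] at hj
    refine ⟨(⟨j + 1, by omega⟩, ⟨j, by omega⟩), ?_, rfl⟩
    simp

lemma fin_pair_count (k : ℕ) :
    ((Finset.univ : Finset (Fin k × Fin k)).filter
      (fun p => (p.1 : ℕ) + 1 = (p.2 : ℕ) ∨ (p.2 : ℕ) + 1 = (p.1 : ℕ))).card = 2 * (k - 1) := by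
  rw [Finset.filter_or, Finset.card_union_of_disjoint, fin_pair_count_fst, fin_pair_count_snd]
  · omega
  · rw [Finset.disjoint_left]
    rintro ⟨p1, p2⟩ h1 h2
    simp only [Finset.mem_filter] at h1 h2
    omega

lemma path_pair_count {V : Type*} [Fintype V] [DecidableEq V] (G : SimpleGraph V)
    [DecidableRel G.Adj] (S : Set V) [DecidablePred (· ∈ S)]
    (k : ℕ) (v : Fin k → V) (hinj : Function.Injective v) (hr : Set.range v = S)
    (hadj : ∀ i i', G.Adj (v i) (v i') ↔ ((i : ℕ) + 1 = (i' : ℕ) ∨ (i' : ℕ) + 1 = (i : ℕ))) :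
    ((Finset.univ : Finset (V × V)).filter
      (fun p => p.1 ∈ S ∧ p.2 ∈ S ∧ G.Adj p.1 p.2)).card = 2 * (k - 1) := by
  rw [← fin_pair_count k]
  symm
  apply Finset.card_nbij (i := fun p => (v p.1, v p.2))
  · rintro ⟨i, i'⟩ hp
    simp only [Finset.mem_coe, Finset.mem_filter, Finset.mem_univ, true_and] at hp ⊢
    refine ⟨?_, ?_, (hadj i i').mpr hp⟩
    · rw [← hr]; exact ⟨i, rfl⟩
    · rw [← hr]; exact ⟨i', rfl⟩
  · rintro ⟨i, i'⟩ _ ⟨j, j'⟩ _ h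
    simp only [Prod.mk.injEq] at h ⊢
    exact ⟨hinj h.1, hinj h.2⟩
  · rintro ⟨x, y⟩ hp
    simp only [Finset.coe_filter, Set.mem_setOf_eq, Finset.mem_univ, true_and] at hp
    obtain ⟨hx, hy, hxy⟩ := hp
    rw [← hr] at hx hy
    obtain ⟨i, rfl⟩ := hx
    obtain ⟨i', rfl⟩ := hy
    refine ⟨(i, i'), ?_, rfl⟩
    simp only [Finset.coe_filter, Set.mem_setOf_eq, Finset.mem_univ, true_and]
    exact (hadj i i').mp hxy

lemma path_nbhd {V : Type*} [Fintype V] [DecidableEq V] (G : SimpleGraph V)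
    [DecidableRel G.Adj] (S : Set V)
    (k : ℕ) (v : Fin k → V) (hinj : Function.Injective v) (hr : Set.range v = S)
    (hadj : ∀ i i', G.Adj (v i) (v i') ↔ ((i : ℕ) + 1 = (i' : ℕ) ∨ (i' : ℕ) + 1 = (i : ℕ)))
    (w : V) (hw : w ∈ S) (hdeg : 3 ≤ G.degree w) :
    ∃ y, y ∉ S ∧ G.Adj w y := by
  classical
  by_contra h
  push_neg at h
  rw [← hr] at hw
  obtain ⟨i, rfl⟩ := hw
  have hsub : G.neighborFinset (v i) ⊆
      (Finset.univ.filter (fun i' : Fin k =>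
        (i : ℕ) + 1 = (i' : ℕ) ∨ (i' : ℕ) + 1 = (i : ℕ))).image v := by
    intro y hy
    rw [SimpleGraph.mem_neighborFinset] at hy
    have hyS : y ∈ S := by
      by_contra hyn
      exact h y hyn hy
    rw [← hr] at hyS
    obtain ⟨i', rfl⟩ := hyS
    simp only [Finset.mem_image, Finset.mem_filter, Finset.mem_univ, true_and]
    exact ⟨i', (hadj i i').mp hy, rfl⟩
  have h2 : (Finset.univ.filter (fun i' : Fin k =>
      (i : ℕ) + 1 = (i' : ℕ) ∨ (i' : ℕ) + 1 = (i : ℕ))).card ≤ 2 := by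
    calc (Finset.univ.filter (fun i' : Fin k =>
          (i : ℕ) + 1 = (i' : ℕ) ∨ (i' : ℕ) + 1 = (i : ℕ))).card
        ≤ ({(i : ℕ) + 1, (i : ℕ) - 1} : Finset ℕ).card := by
          apply Finset.card_le_card_of_injOn (fun i' : Fin k => (i' : ℕ))
          · intro x hx
            simp only [Finset.mem_coe, Finset.mem_filter] at hx
            simp only [Finset.mem_coe, Finset.mem_insert, Finset.mem_singleton]
            omega
          · intro x _ y _ hxy
            exact Fin.ext hxy
      _ ≤ 2 := le_trans (Finset.card_insert_le _ _) (by simp)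
  have h3 := (Finset.card_le_card hsub).trans (Finset.card_image_le.trans h2)
  rw [← SimpleGraph.card_neighborFinset_eq_degree] at hdeg
  omega

lemma range_toFinset_card {V : Type*} [Fintype V] [DecidableEq V] (S : Set V)
    [DecidablePred (· ∈ S)] (k : ℕ) (v : Fin k → V) (hinj : Function.Injective v)
    (hr : Set.range v = S) : S.toFinset.card = k := by
  rw [← Fintype.card_fin k, ← Finset.card_univ]
  symm
  apply Finset.card_nbij (i := v)
  · intro i _
    rw [Finset.mem_coe, Set.mem_toFinset, ← hr]
    exact ⟨i, rfl⟩
  · intro x _ y _ hxy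
    exact hinj hxy
  · intro x hx
    simp only [Finset.mem_coe, Set.mem_toFinset] at hx
    rw [← hr] at hx
    obtain ⟨i, rfl⟩ := hx
    exact ⟨i, by simp, rfl⟩

/-- If a tree T has three or more vertices of degree 3, then V(T) cannot be
partitioned into two sets each inducing a path. -/
theorem stmt_6 {V : Type*} [Fintype V] [DecidableEq V]
    (T : SimpleGraph V) [DecidableRel T.Adj] (hT : T.IsTree)
    (a b c : V) (hab : a ≠ b) (hac : a ≠ c) (hbc : b ≠ c)
    (ha : T.degree a = 3) (hb : T.degree b = 3) (hc : T.degree c = 3) :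
    ¬ ∃ S₁ S₂ : Set V, Disjoint S₁ S₂ ∧ S₁ ∪ S₂ = Set.univ ∧
        InducesPath T S₁ ∧ InducesPath T S₂ := by
  classical
  rintro ⟨S₁, S₂, hdisj, hunion, hp1, hp2⟩
  have hcompl : S₂ = S₁ᶜ := by
    ext x
    simp only [Set.mem_compl_iff]
    constructor
    · intro hx hx'
      exact Set.disjoint_left.mp hdisj hx' hx
    · intro hx
      have : x ∈ S₁ ∪ S₂ := hunion ▸ Set.mem_univ x
      exact this.resolve_left hx
  subst hcompl
  obtain ⟨k₁, v₁, hi1, hr1, ha1⟩ := hp1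
  obtain ⟨k₂, v₂, hi2, hr2, ha2⟩ := hp2
  set C := (Finset.univ : Finset (V × V)).filter
      (fun p => p.1 ∈ S₁ ∧ p.2 ∉ S₁ ∧ T.Adj p.1 p.2) with hCdef
  have key : ∀ x : V, T.degree x = 3 → ∃ p ∈ C, x = p.1 ∨ x = p.2 := by
    intro x hx
    by_cases hxS : x ∈ S₁
    · obtain ⟨y, hy, hadj⟩ := path_nbhd T S₁ k₁ v₁ hi1 hr1 ha1 x hxS (by omega)
      refine ⟨(x, y), ?_, Or.inl rfl⟩
      simp only [hCdef, Finset.mem_filter, Finset.mem_univ, true_and]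
      exact ⟨hxS, hy, hadj⟩
    · obtain ⟨y, hy, hadj⟩ := path_nbhd T S₁ᶜ k₂ v₂ hi2 hr2 ha2 x hxS (by omega)
      refine ⟨(y, x), ?_, Or.inr rfl⟩
      simp only [hCdef, Finset.mem_filter, Finset.mem_univ, true_and]
      exact ⟨Set.notMem_compl_iff.mp hy, hxS, hadj.symm⟩
  -- counting
  have hcard : C.card ≤ 1 := by
    set P := (Finset.univ : Finset (V × V)).filter (fun p => T.Adj p.1 p.2) with hPdef
    set P11 := (Finset.univ : Finset (V × V)).filter
        (fun p => p.1 ∈ S₁ ∧ p.2 ∈ S₁ ∧ T.Adj p.1 p.2) with hP11def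
    set P22 := (Finset.univ : Finset (V × V)).filter
        (fun p => p.1 ∈ S₁ᶜ ∧ p.2 ∈ S₁ᶜ ∧ T.Adj p.1 p.2) with hP22def
    set P21 := (Finset.univ : Finset (V × V)).filter
        (fun p => p.1 ∉ S₁ ∧ p.2 ∈ S₁ ∧ T.Adj p.1 p.2) with hP21def
    have hPcard : P.card = 2 * T.edgeFinset.card := by
      rw [← SimpleGraph.dart_card_eq_twice_card_edges, ← Fintype.card_subtype]
      exact (Fintype.card_congr
        ⟨fun p => ⟨(p.1.1, p.1.2), p.2⟩, fun d => ⟨d.toProd, d.adj⟩,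
          fun p => rfl, fun d => rfl⟩)
    have hsplit : P = ((P11 ∪ C) ∪ P21) ∪ P22 := by
      ext p
      simp only [hPdef, hP11def, hCdef, hP21def, hP22def, Finset.mem_union,
        Finset.mem_filter, Finset.mem_univ, true_and, Set.mem_compl_iff]
      tauto
    have hd1 : Disjoint P11 C := by
      rw [Finset.disjoint_left]
      intro p h1 h2
      simp only [hP11def, hCdef, Finset.mem_filter] at h1 h2
      tauto
    have hd2 : Disjoint (P11 ∪ C) P21 := by
      rw [Finset.disjoint_left]
      intro p h1 h2
      simp only [hP11def, hCdef, hP21def, Finset.mem_union, Finset.mem_filter] at h1 h2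
      tauto
    have hd3 : Disjoint ((P11 ∪ C) ∪ P21) P22 := by
      rw [Finset.disjoint_left]
      intro p h1 h2
      simp only [hP11def, hCdef, hP21def, hP22def, Finset.mem_union, Finset.mem_filter,
        Set.mem_compl_iff] at h1 h2
      tauto
    have hsum : P.card = P11.card + C.card + P21.card + P22.card := by
      rw [hsplit, Finset.card_union_of_disjoint hd3, Finset.card_union_of_disjoint hd2,
        Finset.card_union_of_disjoint hd1]
    have hswap : P21.card = C.card := by
      apply Finset.card_nbij (i := Prod.swap)
      · rintro ⟨x, y⟩ hp
        simp only [hP21def, hCdef, Finset.mem_coe, Finset.mem_filter, Finset.mem_univ, true_and] at hp ⊢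
        exact ⟨hp.2.1, hp.1, hp.2.2.symm⟩
      · intro p _ q _ h
        exact Prod.swap_injective h
      · rintro ⟨x, y⟩ hp
        simp only [hCdef, Finset.coe_filter, Set.mem_setOf_eq, Finset.mem_univ, true_and] at hp
        refine ⟨(y, x), ?_, rfl⟩
        simp only [hP21def, Finset.coe_filter, Set.mem_setOf_eq, Finset.mem_univ, true_and]
        exact ⟨hp.2.1, hp.1, hp.2.2.symm⟩
    have h11 : P11.card = 2 * (k₁ - 1) := path_pair_count T S₁ k₁ v₁ hi1 hr1 ha1
    have h22 : P22.card = 2 * (k₂ - 1) := path_pair_count T S₁ᶜ k₂ v₂ hi2 hr2 ha2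
    have hk : k₁ + k₂ = Fintype.card V := by
      have h1 : S₁.toFinset.card = k₁ := range_toFinset_card S₁ k₁ v₁ hi1 hr1
      have h2 : S₁ᶜ.toFinset.card = k₂ := range_toFinset_card S₁ᶜ k₂ v₂ hi2 hr2
      rw [Set.toFinset_compl, Finset.card_compl, h1] at h2
      have h3 : S₁.toFinset.card ≤ Fintype.card V := by
        simpa using Finset.card_le_univ S₁.toFinset
      omega
    have hE := hT.card_edgeFinset
    omega
  obtain ⟨pa, hpa, hda⟩ := key a ha
  obtain ⟨pb, hpb, hdb⟩ := key b hb
  obtain ⟨pc, hpc, hdc⟩ := key c hc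
  have e1 : pa = pb := Finset.card_le_one.mp hcard pa hpa pb hpb
  have e2 : pa = pc := Finset.card_le_one.mp hcard pa hpa pc hpc
  subst e1
  subst e2
  rcases hda with h | h <;> rcases hdb with h' | h' <;> rcases hdc with h'' | h'' <;>
    simp_all
end

section
/- Let G be a connected outer-planar graph that is a graph of two parallel paths realized by induced paths P and Q partitioning V(G), and let R be the set of vertices of G lying on some cycle of G (the core). If R is nonempty, then the induced subgraph G[R] is 2-connected (has no cut vertex). -/
/-- `H` is a minor of `G`: there is an assignment of disjoint connected branch
sets of `G` to the vertices of `H` such that every edge of `H` is realized by an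
edge of `G` between the corresponding branch sets. -/
def HasMinor {V W : Type*} (G : SimpleGraph V) (H : SimpleGraph W) : Prop :=
  ∃ f : V → Option W,
    (∀ w : W, ∃ v, f v = some w) ∧
    (∀ w : W, (G.induce {v | f v = some w}).Connected) ∧
    (∀ w₁ w₂ : W, H.Adj w₁ w₂ → ∃ v₁ v₂, f v₁ = some w₁ ∧ f v₂ = some w₂ ∧ G.Adj v₁ v₂)

/-- Outer-planar: no K₄ minor and no K_{2,3} minor. -/
def IsOuterPlanar {V : Type*} (G : SimpleGraph V) : Prop :=
  ¬ HasMinor G (⊤ : SimpleGraph (Fin 4)) ∧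
  ¬ HasMinor G (completeBipartiteGraph (Fin 2) (Fin 3))

/-- The core of `G`: the set of vertices lying on some cycle. -/
def core {V : Type*} (G : SimpleGraph V) : Set V :=
  {x | ∃ w : G.Walk x x, w.IsCycle}

open SimpleGraph Walk

section Helpers

variable {V : Type*} {G : SimpleGraph V} [DecidableEq V]

lemma mem_core_of_mem_cycle_support {y z : V} {w : G.Walk y y} (hw : w.IsCycle)
    (hz : z ∈ w.support) : z ∈ core G :=
  ⟨w.rotate _ hz, hw.rotate hz⟩

lemma cycle_two_neighbors {y : V} (w : G.Walk y y) (hw : w.IsCycle) :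
    ∃ p q, p ≠ q ∧ G.Adj y p ∧ G.Adj y q ∧ p ∈ w.support ∧ q ∈ w.support := by
  cases w with
  | nil => exact absurd hw Walk.IsCycle.not_of_nil
  | @cons _ b _ h p =>
    obtain ⟨t, h2, r, hrev⟩ := Walk.exists_eq_cons_of_ne h.ne p.reverse
    have hedge : s(y, t) ∈ p.edges := by
      have : s(y, t) ∈ p.reverse.edges := by rw [hrev]; simp
      rwa [Walk.edges_reverse, List.mem_reverse] at this
    have htsup : t ∈ p.support := by
      have : t ∈ p.reverse.support := by rw [hrev]; simp
      rwa [Walk.support_reverse, List.mem_reverse] at this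
    have hbt : b ≠ t := by
      rintro rfl
      have hnd := hw.isTrail.edges_nodup
      rw [Walk.edges_cons] at hnd
      exact (List.nodup_cons.mp hnd).1 hedge
    exact ⟨b, t, hbt, h, h2, by simp, by simp [htsup]⟩

lemma chain_reach {W : Type*} (H : SimpleGraph W) (f : ℕ → W) (a : ℕ) :
    ∀ b, a ≤ b → (∀ m, a ≤ m → m + 1 ≤ b → H.Adj (f m) (f (m + 1))) →
      H.Reachable (f a) (f b) := by
  intro b hab
  induction b, hab using Nat.le_induction with
  | base => exact fun _ => Reachable.refl _
  | succ b hab ih =>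
    intro hstep
    exact (ih (fun m h1 h2 => hstep m h1 (by omega))).trans
      (hstep b hab (le_refl _)).reachable

lemma dite_chain {W : Type*} (H : SimpleGraph W) (P : ℕ → Prop) [DecidablePred P]
    (g : (m : ℕ) → P m → W) (z : W) (a b : ℕ) (hab : a ≤ b) (ha : P a) (hb : P b)
    (hP : ∀ m, a ≤ m → m ≤ b → P m)
    (hadj : ∀ m (h1 : a ≤ m) (h2 : m + 1 ≤ b),
      H.Adj (g m (hP m h1 (by omega))) (g (m + 1) (hP (m + 1) (by omega) h2))) :
    H.Reachable (g a ha) (g b hb) := by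
  have key := chain_reach H (fun m => if h : P m then g m h else z) a b hab ?_
  · simp only [dif_pos ha, dif_pos hb] at key
    exact key
  · intro m h1 h2
    simp only [dif_pos (hP m h1 (by omega)), dif_pos (hP (m+1) (by omega) h2)]
    exact hadj m h1 h2

lemma path_no_cycle (f : ℕ → V) (n : ℕ)
    (hinj : ∀ m, m < n → ∀ m', m' < n → f m = f m' → m = m')
    (hadj : ∀ m m', m < n → m' < n → G.Adj (f m) (f m') → (m + 1 = m' ∨ m' + 1 = m))
    {y : V} (w : G.Walk y y) (hw : w.IsCycle)
    (hall : ∀ x ∈ w.support, ∃ m, m < n ∧ x = f m) : False := by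
  set T : Finset ℕ := (Finset.range n).filter (fun m => f m ∈ w.support) with hT
  have hTne : T.Nonempty := by
    obtain ⟨m, hm, hym⟩ := hall y w.start_mem_support
    refine ⟨m, by simp [hT, hm]; rw [← hym]; exact w.start_mem_support⟩
  set M := T.max' hTne with hM
  have hMT : M ∈ T := T.max'_mem hTne
  have hMn : M < n := by simpa [hT] using (Finset.mem_filter.mp hMT).1
  have hMs : f M ∈ w.support := (Finset.mem_filter.mp hMT).2
  set c := w.rotate _ hMs with hcdef
  have hc : c.IsCycle := hw.rotate hMs
  obtain ⟨p, q, hpq, hp, hq, hps, hqs⟩ := cycle_two_neighbors c hc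
  have hsub : ∀ z ∈ c.support, z ∈ w.support := by
    intro z hz
    rw [Walk.mem_support_iff] at hz ⊢
    rcases hz with rfl | hz
    · rw [Walk.mem_support_iff] at hMs; exact hMs
    · exact Or.inr ((Walk.support_rotate w _ hMs).mem_iff.mp hz)
  have cls : ∀ z, G.Adj (f M) z → z ∈ c.support → z = f (M - 1) := by
    intro z hz hzs
    obtain ⟨m, hm, rfl⟩ := hall z (hsub z hzs)
    have hmT : m ∈ T := by rw [hT, Finset.mem_filter, Finset.mem_range]; exact ⟨hm, hsub _ hzs⟩
    have hmM : m ≤ M := T.le_max' m hmT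
    rcases hadj M m hMn hm hz with h | h
    · omega
    · congr 1; omega
  rw [cls p hp hps, cls q hq hqs] at hpq
  exact hpq rfl

lemma pathwalk_exists (f : ℕ → V) (n : ℕ)
    (hinj : ∀ m, m < n → ∀ m', m' < n → f m = f m' → m = m')
    (hadj : ∀ m, m + 1 < n → G.Adj (f m) (f (m + 1))) :
    ∀ a b, a ≤ b → b < n → ∃ w : G.Walk (f a) (f b),
      (∀ x, x ∈ w.support ↔ ∃ m, a ≤ m ∧ m ≤ b ∧ x = f m) ∧ w.support.Nodup ∧
      (∀ e ∈ w.edges, ∃ m, a ≤ m ∧ m + 1 ≤ b ∧ e = s(f m, f (m + 1))) := by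
  intro a b hab
  induction b, hab using Nat.le_induction with
  | base =>
    intro han
    refine ⟨Walk.nil, ?_, by simp, by simp⟩
    intro x
    simp only [Walk.support_nil, List.mem_singleton]
    constructor
    · rintro rfl; exact ⟨a, le_rfl, le_rfl, rfl⟩
    · rintro ⟨m, h1, h2, rfl⟩; have : m = a := by omega
      rw [this]
  | succ b hab ih =>
    intro hbn
    obtain ⟨w, hsup, hnd, he⟩ := ih (by omega)
    refine ⟨w.concat (hadj b hbn), ?_, ?_, ?_⟩
    · intro x
      rw [Walk.support_concat, List.mem_append,
        List.mem_singleton, hsup]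
      constructor
      · rintro (⟨m, h1, h2, rfl⟩ | rfl)
        · exact ⟨m, h1, by omega, rfl⟩
        · exact ⟨b + 1, by omega, le_rfl, rfl⟩
      · rintro ⟨m, h1, h2, rfl⟩
        rcases Nat.lt_or_ge m (b + 1) with h | h
        · exact Or.inl ⟨m, h1, by omega, rfl⟩
        · have : m = b + 1 := by omega
          exact Or.inr (by rw [this])
    · rw [Walk.support_concat]
      rw [List.nodup_append]
      refine ⟨hnd, List.nodup_singleton _, ?_⟩
      intro x hx y hx' hxy
      rw [List.mem_singleton] at hx'
      subst hx'
      obtain ⟨m, h1, h2, rfl⟩ := (hsup x).mp hx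
      have := hinj m (by omega) (b + 1) hbn hxy
      omega
    · intro e hee
      rw [Walk.edges_concat, List.concat_eq_append, List.mem_append,
        List.mem_singleton] at hee
      rcases hee with h | rfl
      · obtain ⟨m, h1, h2, rfl⟩ := he e h
        exact ⟨m, h1, by omega, rfl⟩
      · exact ⟨b, by omega, le_rfl, rfl⟩

lemma extreme_chord (f g : ℕ → V) (n nl : ℕ)
    (hcov : ∀ x, (∃ m, m < n ∧ x = f m) ∨ (∃ j, j < nl ∧ x = g j))
    (e : ℕ) (hecore : f e ∈ core G)
    (huniq : ∀ m m', m < n → m' < n → f m ∈ core G → f m' ∈ core G →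
      G.Adj (f e) (f m) → G.Adj (f e) (f m') → f m = f m') :
    ∃ j, j < nl ∧ g j ∈ core G ∧ G.Adj (f e) (g j) := by
  obtain ⟨w, hw⟩ := hecore
  by_contra hno
  push_neg at hno
  obtain ⟨p, q, hpq, hp, hq, hps, hqs⟩ := cycle_two_neighbors w hw
  have cls : ∀ z, G.Adj (f e) z → z ∈ w.support → ∃ m, m < n ∧ z = f m ∧ z ∈ core G := by
    intro z hadj hzs
    have hzc := mem_core_of_mem_cycle_support hw hzs
    rcases hcov z with ⟨m, hm, rfl⟩ | ⟨j, hj, rfl⟩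
    · exact ⟨m, hm, rfl, hzc⟩
    · exact absurd hadj (hno j hj hzc)
  obtain ⟨mp, hmp, rfl, hpc⟩ := cls p hp hps
  obtain ⟨mq, hmq, rfl, hqc⟩ := cls q hq hqs
  exact hpq (huniq mp mq hmp hmq hpc hqc hp hq)

end Helpers


/-- If G is a connected outer-planar graph of two parallel paths with nonempty
core R, then G[R] is 2-connected: it has at least 3 vertices, is connected, and
has no cut vertex. -/
theorem stmt_7 {V : Type*} [Fintype V] (G : SimpleGraph V)
    (hconn : G.Connected) (houter : IsOuterPlanar G)
    (hpp : IsTwoParallelPaths G) (hR : (core G).Nonempty) :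
    3 ≤ (core G).ncard ∧ (G.induce (core G)).Connected ∧
      ∀ x : core G, ((G.induce (core G)).induce {y | y ≠ x}).Connected := by
  classical
  obtain ⟨k, l, v, u, hv, hu, hvu, hcover, hPadj, hQadj, hnc⟩ := hpp
  obtain ⟨x₀, hx₀⟩ := hR
  set v' : ℕ → V := fun m => if h : m < k then v ⟨m, h⟩ else x₀ with hv'def
  set u' : ℕ → V := fun m => if h : m < l then u ⟨m, h⟩ else x₀ with hu'def
  have hv'lt : ∀ m (h : m < k), v' m = v ⟨m, h⟩ := by
    intro m h; rw [hv'def]; exact dif_pos h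
  have hu'lt : ∀ m (h : m < l), u' m = u ⟨m, h⟩ := by
    intro m h; rw [hu'def]; exact dif_pos h
  have hv'inj : ∀ m, m < k → ∀ m', m' < k → v' m = v' m' → m = m' := by
    intro m hm m' hm' h
    rw [hv'lt m hm, hv'lt m' hm'] at h
    exact congrArg Fin.val (hv h)
  have hu'inj : ∀ m, m < l → ∀ m', m' < l → u' m = u' m' → m = m' := by
    intro m hm m' hm' h
    rw [hu'lt m hm, hu'lt m' hm'] at h
    exact congrArg Fin.val (hu h)
  have hvu' : ∀ m, m < k → ∀ j, j < l → v' m ≠ u' j := by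
    intro m hm j hj
    rw [hv'lt m hm, hu'lt j hj]
    exact hvu _ _
  have hPadj' : ∀ m m', m < k → m' < k →
      (G.Adj (v' m) (v' m') ↔ (m + 1 = m' ∨ m' + 1 = m)) := by
    intro m m' hm hm'
    rw [hv'lt m hm, hv'lt m' hm']
    simpa using hPadj ⟨m, hm⟩ ⟨m', hm'⟩
  have hQadj' : ∀ m m', m < l → m' < l →
      (G.Adj (u' m) (u' m') ↔ (m + 1 = m' ∨ m' + 1 = m)) := by
    intro m m' hm hm'
    rw [hu'lt m hm, hu'lt m' hm']
    simpa using hQadj ⟨m, hm⟩ ⟨m', hm'⟩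
  have hstepV : ∀ m, m + 1 < k → G.Adj (v' m) (v' (m + 1)) :=
    fun m h => (hPadj' m (m + 1) (by omega) h).mpr (Or.inl rfl)
  have hstepU : ∀ m, m + 1 < l → G.Adj (u' m) (u' (m + 1)) :=
    fun m h => (hQadj' m (m + 1) (by omega) h).mpr (Or.inl rfl)
  have hcover' : ∀ x, (∃ m, m < k ∧ x = v' m) ∨ (∃ j, j < l ∧ x = u' j) := by
    intro x
    rcases hcover x with ⟨i, hi⟩ | ⟨j, hj⟩
    · exact Or.inl ⟨i, i.2, by rw [← hi, hv'lt i.1 i.2]⟩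
    · exact Or.inr ⟨j, j.2, by rw [← hj, hu'lt j.1 j.2]⟩
  -- both paths meet the core
  have hVne : ∃ m, m < k ∧ v' m ∈ core G := by
    by_contra hno
    push_neg at hno
    obtain ⟨w, hw⟩ := hx₀
    refine path_no_cycle u' l hu'inj
      (fun m m' hm hm' ha => (hQadj' m m' hm hm').mp ha) w hw ?_
    intro z hz
    rcases hcover' z with ⟨m, hm, rfl⟩ | ⟨j, hj, rfl⟩
    · exact absurd (mem_core_of_mem_cycle_support hw hz) (hno m hm)
    · exact ⟨j, hj, rfl⟩
  have hUne : ∃ j, j < l ∧ u' j ∈ core G := by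
    by_contra hno
    push_neg at hno
    obtain ⟨w, hw⟩ := hx₀
    refine path_no_cycle v' k hv'inj
      (fun m m' hm hm' ha => (hPadj' m m' hm hm').mp ha) w hw ?_
    intro z hz
    rcases hcover' z with ⟨m, hm, rfl⟩ | ⟨j, hj, rfl⟩
    · exact ⟨m, hm, rfl⟩
    · exact absurd (mem_core_of_mem_cycle_support hw hz) (hno j hj)
  set Sv : Finset ℕ := (Finset.range k).filter (fun m => v' m ∈ core G) with hSv
  set Su : Finset ℕ := (Finset.range l).filter (fun m => u' m ∈ core G) with hSu
  have hSvne : Sv.Nonempty := by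
    obtain ⟨m, hm, hc⟩ := hVne
    exact ⟨m, by simp [hSv, hm, hc]⟩
  have hSune : Su.Nonempty := by
    obtain ⟨j, hj, hc⟩ := hUne
    exact ⟨j, by simp [hSu, hj, hc]⟩
  set A := Sv.min' hSvne with hA
  set B := Sv.max' hSvne with hB
  set C := Su.min' hSune with hC
  set D := Su.max' hSune with hD
  have hmemSv : ∀ m, m ∈ Sv ↔ (m < k ∧ v' m ∈ core G) := by
    intro m; simp [hSv]
  have hmemSu : ∀ m, m ∈ Su ↔ (m < l ∧ u' m ∈ core G) := by
    intro m; simp [hSu]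
  have hAk : A < k := ((hmemSv A).mp (Sv.min'_mem hSvne)).1
  have hBk : B < k := ((hmemSv B).mp (Sv.max'_mem hSvne)).1
  have hCl : C < l := ((hmemSu C).mp (Su.min'_mem hSune)).1
  have hDl : D < l := ((hmemSu D).mp (Su.max'_mem hSune)).1
  have hAcore : v' A ∈ core G := ((hmemSv A).mp (Sv.min'_mem hSvne)).2
  have hBcore : v' B ∈ core G := ((hmemSv B).mp (Sv.max'_mem hSvne)).2
  have hCcore : u' C ∈ core G := ((hmemSu C).mp (Su.min'_mem hSune)).2
  have hDcore : u' D ∈ core G := ((hmemSu D).mp (Su.max'_mem hSune)).2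
  have hAB : A ≤ B := Sv.min'_le B (Sv.max'_mem hSvne)
  have hCD : C ≤ D := Su.min'_le D (Su.max'_mem hSune)
  have hvAB : ∀ m, m < k → v' m ∈ core G → A ≤ m ∧ m ≤ B := by
    intro m hm hc
    have hmem : m ∈ Sv := (hmemSv m).mpr ⟨hm, hc⟩
    exact ⟨Sv.min'_le m hmem, Sv.le_max' m hmem⟩
  have huCD : ∀ j, j < l → u' j ∈ core G → C ≤ j ∧ j ≤ D := by
    intro j hj hc
    have hmem : j ∈ Su := (hmemSu j).mpr ⟨hj, hc⟩
    exact ⟨Su.min'_le j hmem, Su.le_max' j hmem⟩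
  -- chords at the four extremes
  obtain ⟨jA, hjAl, hjAcore, hjAadj⟩ := extreme_chord v' u' k l hcover' A hAcore (by
    intro m m' hm hm' hmc hm'c ha ha'
    have h1 := (hPadj' A m hAk hm).mp ha
    have h2 := (hPadj' A m' hAk hm').mp ha'
    have b1 := (hvAB m hm hmc).1
    have b2 := (hvAB m' hm' hm'c).1
    have : m = m' := by omega
    rw [this])
  obtain ⟨jB, hjBl, hjBcore, hjBadj⟩ := extreme_chord v' u' k l hcover' B hBcore (by
    intro m m' hm hm' hmc hm'c ha ha'
    have h1 := (hPadj' B m hBk hm).mp ha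
    have h2 := (hPadj' B m' hBk hm').mp ha'
    have b1 := (hvAB m hm hmc).2
    have b2 := (hvAB m' hm' hm'c).2
    have : m = m' := by omega
    rw [this])
  obtain ⟨iC, hiCk, hiCcore, hiCadj⟩ := extreme_chord u' v' l k
    (fun x => (hcover' x).symm) C hCcore (by
    intro m m' hm hm' hmc hm'c ha ha'
    have h1 := (hQadj' C m hCl hm).mp ha
    have h2 := (hQadj' C m' hCl hm').mp ha'
    have b1 := (huCD m hm hmc).1
    have b2 := (huCD m' hm' hm'c).1
    have : m = m' := by omega
    rw [this])
  obtain ⟨iD, hiDk, hiDcore, hiDadj⟩ := extreme_chord u' v' l k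
    (fun x => (hcover' x).symm) D hDcore (by
    intro m m' hm hm' hmc hm'c ha ha'
    have h1 := (hQadj' D m hDl hm).mp ha
    have h2 := (hQadj' D m' hDl hm').mp ha'
    have b1 := (huCD m hm hmc).2
    have b2 := (huCD m' hm' hm'c).2
    have : m = m' := by omega
    rw [this])
  have hCjA : C ≤ jA := (huCD jA hjAl hjAcore).1
  have hjBD : jB ≤ D := (huCD jB hjBl hjBcore).2
  have hAiC : A ≤ iC := (hvAB iC hiCk hiCcore).1
  have hiDB : iD ≤ B := (hvAB iD hiDk hiDcore).2
  have hAC : G.Adj (v' A) (u' C) := by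
    rcases eq_or_lt_of_le hAiC with heq | hlt
    · rw [heq]; exact hiCadj.symm
    · have adj1 : G.Adj (v ⟨A, hAk⟩) (u ⟨jA, hjAl⟩) := by
        rw [← hv'lt, ← hu'lt]; exact hjAadj
      have adj2 : G.Adj (v ⟨iC, hiCk⟩) (u ⟨C, hCl⟩) := by
        rw [← hv'lt, ← hu'lt]; exact hiCadj.symm
      have hnc' := hnc _ _ _ _ adj1 adj2
      simp only [Fin.mk_lt_mk, not_or, not_and] at hnc'
      have : ¬ (C < jA) := hnc'.1 hlt
      have hjAC : jA = C := by omega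
      rw [← hjAC]; exact hjAadj
  have hBD : G.Adj (v' B) (u' D) := by
    rcases eq_or_lt_of_le hiDB with heq | hlt
    · rw [← heq]; exact hiDadj.symm
    · have adj1 : G.Adj (v ⟨iD, hiDk⟩) (u ⟨D, hDl⟩) := by
        rw [← hv'lt, ← hu'lt]; exact hiDadj.symm
      have adj2 : G.Adj (v ⟨B, hBk⟩) (u ⟨jB, hjBl⟩) := by
        rw [← hv'lt, ← hu'lt]; exact hjBadj
      have hnc' := hnc _ _ _ _ adj1 adj2
      simp only [Fin.mk_lt_mk, not_or, not_and] at hnc'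
      have : ¬ (jB < D) := hnc'.1 hlt
      have hjBD' : jB = D := by omega
      rw [← hjBD']; exact hjBadj
  -- the core has at least 3 vertices
  have hcard3 : 3 ≤ (core G).ncard := by
    obtain ⟨w, hw⟩ := hx₀
    have hnd : w.support.tail.Nodup := hw.support_nodup
    have hcardF : (w.support.tail.toFinset).card = w.length := by
      rw [List.toFinset_card_of_nodup hnd, List.length_tail, SimpleGraph.Walk.length_support]
      omega
    have hsub : ↑(w.support.tail.toFinset) ⊆ core G := by
      intro z hz
      exact mem_core_of_mem_cycle_support hw
        (List.mem_of_mem_tail (List.mem_toFinset.mp hz))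
    calc 3 ≤ w.length := hw.three_le_length
    _ = (w.support.tail.toFinset).card := hcardF.symm
    _ = ((w.support.tail.toFinset : Finset V) : Set V).ncard := (Set.ncard_coe_finset _).symm
    _ ≤ (core G).ncard := Set.ncard_le_ncard hsub (Set.toFinite _)
  have hdeg : ¬(A = B ∧ C = D) := by
    rintro ⟨hab, hcd⟩
    have hsub2 : core G ⊆ {v' A, u' C} := by
      intro z hz
      rcases hcover' z with ⟨m, hm, rfl⟩ | ⟨j, hj, rfl⟩
      · obtain ⟨b1, b2⟩ := hvAB m hm hz
        have : m = A := by omega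
        rw [this]; exact Set.mem_insert _ _
      · obtain ⟨b1, b2⟩ := huCD j hj hz
        have : j = C := by omega
        rw [this]; exact Set.mem_insert_of_mem _ rfl
    have h2 : (core G).ncard ≤ 2 := by
      refine le_trans (Set.ncard_le_ncard hsub2 (Set.toFinite _)) ?_
      refine le_trans (Set.ncard_insert_le _ _) ?_
      simp [Set.ncard_singleton]
    omega
  -- the big cycle
  obtain ⟨wP, hPsup, hPnd, hPe⟩ := pathwalk_exists v' k hv'inj hstepV A B hAB hBk
  obtain ⟨wQ, hQsup, hQnd, hQe⟩ := pathwalk_exists u' l hu'inj hstepU C D hCD hDl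
  set P : G.Walk (v' A) (u' C) := wP.append (SimpleGraph.Walk.cons hBD wQ.reverse) with hPdef
  have hPsupport : P.support = wP.support ++ wQ.support.reverse := by
    rw [hPdef, SimpleGraph.Walk.support_append, SimpleGraph.Walk.support_cons,
      List.tail_cons, SimpleGraph.Walk.support_reverse]
  have hPp : P.IsPath := by
    rw [SimpleGraph.Walk.isPath_def, hPsupport, List.nodup_append]
    refine ⟨hPnd, List.nodup_reverse.mpr hQnd, ?_⟩
    intro a ha b' ha' hab'
    obtain ⟨m, h1, h2, rfl⟩ := (hPsup a).mp ha
    obtain ⟨j, g1, g2, hj⟩ := (hQsup _).mp (List.mem_reverse.mp ha')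
    exact hvu' m (by omega) j (by omega) (hab'.trans hj)
  have hnotin : s(u' C, v' A) ∉ P.edges := by
    rw [hPdef, SimpleGraph.Walk.edges_append, SimpleGraph.Walk.edges_cons,
      SimpleGraph.Walk.edges_reverse]
    intro hmem
    rcases List.mem_append.mp hmem with h | h
    · obtain ⟨m, h1, h2, heq⟩ := hPe _ h
      rw [Sym2.eq_iff] at heq
      rcases heq with ⟨he1, _⟩ | ⟨he1, _⟩
      · exact hvu' m (by omega) C hCl he1.symm
      · exact hvu' (m + 1) (by omega) C hCl he1.symm
    · rcases List.mem_cons.mp h with heq | h2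
      · rw [Sym2.eq_iff] at heq
        rcases heq with ⟨he1, _⟩ | ⟨he1, he2⟩
        · exact hvu' B hBk C hCl he1.symm
        · exact hdeg ⟨hv'inj A hAk B hBk he2, (hu'inj C hCl D hDl he1).symm ▸ rfl⟩
      · obtain ⟨j, g1, g2, heq⟩ := hQe _ (List.mem_reverse.mp h2)
        rw [Sym2.eq_iff] at heq
        rcases heq with ⟨_, he2⟩ | ⟨_, he2⟩
        · exact hvu' A hAk (j + 1) (by omega) he2
        · exact hvu' A hAk j (by omega) he2
  have hWcyc : (SimpleGraph.Walk.cons hAC.symm P).IsCycle :=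
    (SimpleGraph.Walk.cons_isCycle_iff P hAC.symm).mpr ⟨hPp, hnotin⟩
  have hWsup : ∀ z, ((∃ m, A ≤ m ∧ m ≤ B ∧ z = v' m) ∨ (∃ j, C ≤ j ∧ j ≤ D ∧ z = u' j)) →
      z ∈ (SimpleGraph.Walk.cons hAC.symm P).support := by
    intro z hz
    rw [SimpleGraph.Walk.support_cons, List.mem_cons, hPsupport, List.mem_append]
    rcases hz with ⟨m, h1, h2, rfl⟩ | ⟨j, h1, h2, rfl⟩
    · exact Or.inr (Or.inl ((hPsup _).mpr ⟨m, h1, h2, rfl⟩))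
    · exact Or.inr (Or.inr (List.mem_reverse.mpr ((hQsup _).mpr ⟨j, h1, h2, rfl⟩)))
  have hcoreEq : ∀ z, z ∈ core G ↔
      ((∃ m, A ≤ m ∧ m ≤ B ∧ z = v' m) ∨ (∃ j, C ≤ j ∧ j ≤ D ∧ z = u' j)) := by
    intro z
    constructor
    · intro hz
      rcases hcover' z with ⟨m, hm, rfl⟩ | ⟨j, hj, rfl⟩
      · obtain ⟨b1, b2⟩ := hvAB m hm hz
        exact Or.inl ⟨m, b1, b2, rfl⟩
      · obtain ⟨b1, b2⟩ := huCD j hj hz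
        exact Or.inr ⟨j, b1, b2, rfl⟩
    · intro hz
      exact mem_core_of_mem_cycle_support hWcyc (hWsup z hz)
  have hvcore : ∀ m, A ≤ m → m ≤ B → v' m ∈ core G :=
    fun m h1 h2 => (hcoreEq _).mpr (Or.inl ⟨m, h1, h2, rfl⟩)
  have hucore : ∀ j, C ≤ j → j ≤ D → u' j ∈ core G :=
    fun j h1 h2 => (hcoreEq _).mpr (Or.inr ⟨j, h1, h2, rfl⟩)
  refine ⟨hcard3, ?_, ?_⟩
  · -- connectivity of the core
    rw [SimpleGraph.connected_iff_exists_forall_reachable]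
    refine ⟨⟨u' C, hucore C le_rfl hCD⟩, ?_⟩
    intro y
    have hy := (hcoreEq y.1).mp y.2
    rcases hy with ⟨m, h1, h2, hy⟩ | ⟨j, h1, h2, hy⟩
    · have hyeq : y = (⟨v' m, hvcore m h1 h2⟩ : core G) := Subtype.ext hy
      rw [hyeq]
      have r1 := dite_chain (G.induce (core G)) (fun n => A ≤ n ∧ n ≤ B)
        (fun n h => ⟨v' n, hvcore n h.1 h.2⟩) ⟨u' C, hucore C le_rfl hCD⟩
        A m h1 ⟨le_rfl, hAB⟩ ⟨h1, h2⟩ (fun n hn1 hn2 => ⟨hn1, le_trans hn2 h2⟩)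
        (fun n hn1 hn2 => hstepV n (by omega))
      have r2 : (G.induce (core G)).Adj ⟨v' A, hvcore A le_rfl hAB⟩
          ⟨u' C, hucore C le_rfl hCD⟩ := hAC
      exact r2.reachable.symm.trans r1
    · have hyeq : y = (⟨u' j, hucore j h1 h2⟩ : core G) := Subtype.ext hy
      rw [hyeq]
      have r1 := dite_chain (G.induce (core G)) (fun n => C ≤ n ∧ n ≤ D)
        (fun n h => ⟨u' n, hucore n h.1 h.2⟩) ⟨u' C, hucore C le_rfl hCD⟩
        C j h1 ⟨le_rfl, hCD⟩ ⟨h1, h2⟩ (fun n hn1 hn2 => ⟨hn1, le_trans hn2 h2⟩)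
        (fun n hn1 hn2 => hstepU n (by omega))
      exact r1
  · -- no cut vertices
    intro x
    rw [SimpleGraph.connected_iff_exists_forall_reachable]
    set T : Set ↥(core G) := {y | y ≠ x} with hT
    set H := (G.induce (core G)).induce T with hH
    have hneOf : ∀ (z : V) (hz : z ∈ core G), z ≠ ↑x → (⟨z, hz⟩ : core G) ∈ T :=
      fun z hz h hEq => h (congrArg Subtype.val hEq)
    have hx' := (hcoreEq x.1).mp x.2
    rcases hx' with ⟨X, hX1, hX2, hXv⟩ | ⟨Y, hY1, hY2, hYu⟩
    · -- x is a path-P vertex v' X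
      have hXk : X < k := by omega
      have hu_ne : ∀ j, j < l → u' j ≠ ↑x :=
        fun j hj h => hvu' X hXk j hj (hXv.symm.trans h.symm)
      let gU : ∀ (n : ℕ), C ≤ n ∧ n ≤ D → ↥T := fun n h =>
        ⟨⟨u' n, hucore n h.1 h.2⟩, hneOf _ _ (hu_ne n (by omega))⟩
      set hub : ↥T := gU C ⟨le_rfl, hCD⟩ with hhub
      refine ⟨hub, ?_⟩
      have rQ : ∀ j (h1 : C ≤ j) (h2 : j ≤ D), H.Reachable hub (gU j ⟨h1, h2⟩) := by
        intro j h1 h2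
        exact dite_chain H (fun n => C ≤ n ∧ n ≤ D) gU hub C j h1 ⟨le_rfl, hCD⟩
          ⟨h1, h2⟩ (fun n hn1 hn2 => ⟨hn1, by omega⟩)
          (fun n hn1 hn2 => hstepU n (by omega))
      intro y
      have hy := (hcoreEq y.1.1).mp y.1.2
      rcases hy with ⟨m, hm1, hm2, hym⟩ | ⟨j, hj1, hj2, hyj⟩
      · have hmX : m ≠ X := by
          intro h
          exact y.2 (Subtype.ext (by rw [hym, h, ← hXv]))
        have hv_ne : ∀ n, n < k → n ≠ X → v' n ≠ ↑x := by
          intro n hn hnX h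
          exact hnX (hv'inj n hn X hXk (h.trans hXv))
        rcases lt_or_gt_of_ne hmX with hlt | hgt
        · -- m < X : go down to A, cross to u' C
          let gV : ∀ (n : ℕ), A ≤ n ∧ n < X → ↥T := fun n h =>
            ⟨⟨v' n, hvcore n h.1 (by omega)⟩,
              hneOf _ _ (hv_ne n (by omega) (by omega))⟩
          have r1 : H.Reachable (gV A ⟨le_rfl, by omega⟩) (gV m ⟨hm1, hlt⟩) :=
            dite_chain H (fun n => A ≤ n ∧ n < X) gV hub A m hm1 ⟨le_rfl, by omega⟩
              ⟨hm1, hlt⟩ (fun n hn1 hn2 => ⟨hn1, by omega⟩)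
              (fun n hn1 hn2 => hstepV n (by omega))
          have r2 : H.Adj (gV A ⟨le_rfl, by omega⟩) hub := hAC
          have hyg : y = gV m ⟨hm1, hlt⟩ := Subtype.ext (Subtype.ext hym)
          rw [hyg]
          exact r2.symm.reachable.trans r1
        · -- m > X : go up to B, cross to u' D, come back to u' C
          let gV : ∀ (n : ℕ), X < n ∧ n ≤ B → ↥T := fun n h =>
            ⟨⟨v' n, hvcore n (by omega) h.2⟩,
              hneOf _ _ (hv_ne n (by omega) (by omega))⟩
          have r1 : H.Reachable (gV m ⟨hgt, hm2⟩) (gV B ⟨by omega, le_rfl⟩) :=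
            dite_chain H (fun n => X < n ∧ n ≤ B) gV hub m B hm2 ⟨hgt, hm2⟩
              ⟨by omega, le_rfl⟩ (fun n hn1 hn2 => ⟨by omega, hn2⟩)
              (fun n hn1 hn2 => hstepV n (by omega))
          have r2 : H.Adj (gV B ⟨by omega, le_rfl⟩) (gU D ⟨hCD, le_rfl⟩) := hBD
          have hyg : y = gV m ⟨hgt, hm2⟩ := Subtype.ext (Subtype.ext hym)
          rw [hyg]
          exact ((r1.trans r2.reachable).trans (rQ D hCD le_rfl).symm).symm
      · have hyg : y = gU j ⟨hj1, hj2⟩ := Subtype.ext (Subtype.ext hyj)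
        rw [hyg]
        exact rQ j hj1 hj2
    · -- x is a path-Q vertex u' Y
      have hYl : Y < l := by omega
      have hv_ne : ∀ n, n < k → v' n ≠ ↑x :=
        fun n hn h => hvu' n hn Y hYl (h.trans hYu)
      let gV : ∀ (n : ℕ), A ≤ n ∧ n ≤ B → ↥T := fun n h =>
        ⟨⟨v' n, hvcore n h.1 h.2⟩, hneOf _ _ (hv_ne n (by omega))⟩
      set hub : ↥T := gV A ⟨le_rfl, hAB⟩ with hhub
      refine ⟨hub, ?_⟩
      have rP : ∀ m (h1 : A ≤ m) (h2 : m ≤ B), H.Reachable hub (gV m ⟨h1, h2⟩) := by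
        intro m h1 h2
        exact dite_chain H (fun n => A ≤ n ∧ n ≤ B) gV hub A m h1 ⟨le_rfl, hAB⟩
          ⟨h1, h2⟩ (fun n hn1 hn2 => ⟨hn1, by omega⟩)
          (fun n hn1 hn2 => hstepV n (by omega))
      intro y
      have hy := (hcoreEq y.1.1).mp y.1.2
      rcases hy with ⟨m, hm1, hm2, hym⟩ | ⟨j, hj1, hj2, hyj⟩
      · have hyg : y = gV m ⟨hm1, hm2⟩ := Subtype.ext (Subtype.ext hym)
        rw [hyg]
        exact rP m hm1 hm2
      · have hjY : j ≠ Y := by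
          intro h
          exact y.2 (Subtype.ext (by rw [hyj, h, ← hYu]))
        have hu_ne : ∀ n, n < l → n ≠ Y → u' n ≠ ↑x := by
          intro n hn hnY h
          exact hnY (hu'inj n hn Y hYl (h.trans hYu))
        rcases lt_or_gt_of_ne hjY with hlt | hgt
        · let gU : ∀ (n : ℕ), C ≤ n ∧ n < Y → ↥T := fun n h =>
            ⟨⟨u' n, hucore n h.1 (by omega)⟩,
              hneOf _ _ (hu_ne n (by omega) (by omega))⟩
          have r1 : H.Reachable (gU C ⟨le_rfl, by omega⟩) (gU j ⟨hj1, hlt⟩) :=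
            dite_chain H (fun n => C ≤ n ∧ n < Y) gU hub C j hj1 ⟨le_rfl, by omega⟩
              ⟨hj1, hlt⟩ (fun n hn1 hn2 => ⟨hn1, by omega⟩)
              (fun n hn1 hn2 => hstepU n (by omega))
          have r2 : H.Adj hub (gU C ⟨le_rfl, by omega⟩) := hAC
          have hyg : y = gU j ⟨hj1, hlt⟩ := Subtype.ext (Subtype.ext hyj)
          rw [hyg]
          exact r2.reachable.trans r1
        · let gU : ∀ (n : ℕ), Y < n ∧ n ≤ D → ↥T := fun n h =>
            ⟨⟨u' n, hucore n (by omega) h.2⟩,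
              hneOf _ _ (hu_ne n (by omega) (by omega))⟩
          have r1 : H.Reachable (gU j ⟨hgt, hj2⟩) (gU D ⟨by omega, le_rfl⟩) :=
            dite_chain H (fun n => Y < n ∧ n ≤ D) gU hub j D hj2 ⟨hgt, hj2⟩
              ⟨by omega, le_rfl⟩ (fun n hn1 hn2 => ⟨by omega, hn2⟩)
              (fun n hn1 hn2 => hstepU n (by omega))
          have r2 : H.Adj (gV B ⟨hAB, le_rfl⟩) (gU D ⟨by omega, le_rfl⟩) := hBD
          have hyg : y = gU j ⟨hgt, hj2⟩ := Subtype.ext (Subtype.ext hyj)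
          rw [hyg]
          exact ((rP B hAB le_rfl).trans r2.reachable).trans r1.symm
end

section
/- Suppose G is a graph of two parallel paths realized by induced paths P and Q, with nonempty core R whose induced subgraph G[R] has a Hamiltonian cycle C = c₀c₁…c_{r−1}c₀ bounding the outer face. Then V(P) ∩ R and V(Q) ∩ R are each sets of consecutive vertices on C (intervals in the cyclic order), and neither P nor Q uses any chord of C (interior edge). -/
/-- rank of `q x` among the values of `q`. -/
def rnk {n : ℕ} (q : Fin n → ℕ) (x : Fin n) : ℕ :=
  (Finset.univ.filter (fun z => q z < q x)).card

section rnk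
variable {n : ℕ} {q : Fin n → ℕ}

lemma rnk_lt (x : Fin n) : rnk q x < n := by
  classical
  have h : (Finset.univ.filter (fun z => q z < q x)) ⊂ Finset.univ :=
    Finset.ssubset_iff_of_subset (Finset.filter_subset _ _) |>.mpr
      ⟨x, Finset.mem_univ x, by simp⟩
  simpa [rnk, Finset.card_univ] using Finset.card_lt_card h

lemma rnk_lt_rnk {x y : Fin n} (h : q x < q y) : rnk q x < rnk q y := by
  classical
  apply Finset.card_lt_card
  constructor
  · intro z hz
    simp only [Finset.mem_filter] at *
    exact ⟨hz.1, hz.2.trans h⟩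
  · intro hsub
    have := hsub (by simp [h] : x ∈ Finset.univ.filter (fun z => q z < q y))
    simp at this

lemma rnk_lt_iff (hq : Function.Injective q) {x y : Fin n} :
    rnk q x < rnk q y ↔ q x < q y := by
  constructor
  · intro h
    by_contra hc
    push_neg at hc
    rcases lt_or_eq_of_le hc with h2 | h2
    · exact absurd (rnk_lt_rnk h2) (by omega)
    · have h3 := hq h2
      subst h3
      exact absurd h (lt_irrefl _)
  · exact rnk_lt_rnk

lemma rnk_inj (hq : Function.Injective q) : Function.Injective (rnk q) := by
  intro x y h
  by_contra hne
  rcases Nat.lt_or_ge (q x) (q y) with h2 | h2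
  · exact absurd (rnk_lt_rnk h2) (by omega)
  rcases Nat.lt_or_ge (q y) (q x) with h3 | h3
  · exact absurd (rnk_lt_rnk h3) (by omega)
  · exact hne (hq (by omega))

lemma rnk_succ (hq : Function.Injective q) {x y : Fin n} (h : q x < q y)
    (hbet : ∀ z, ¬(q x < q z ∧ q z < q y)) : rnk q y = rnk q x + 1 := by
  classical
  have hset : (Finset.univ.filter (fun z => q z < q y)) =
      insert x (Finset.univ.filter (fun z => q z < q x)) := by
    ext z
    simp only [Finset.mem_filter, Finset.mem_insert, Finset.mem_univ, true_and]
    constructor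
    · intro hz
      rcases Nat.lt_or_ge (q z) (q x) with h2 | h2
      · exact Or.inr h2
      · have : q z = q x := by have := hbet z; omega
        exact Or.inl (hq this)
    · rintro (rfl | hz)
      · exact h
      · omega
  rw [rnk, hset, Finset.card_insert_of_notMem (by simp)]
  rfl

lemma rnk_eq_zero {x : Fin n} (hmin : ∀ z, q x ≤ q z) : rnk q x = 0 := by
  classical
  rw [rnk, Finset.card_eq_zero]
  ext z
  simp only [Finset.mem_filter, Finset.mem_univ, true_and, Finset.notMem_empty, iff_false]
  exact fun h => absurd (hmin z) (by omega)

lemma rnk_eq_last (hq : Function.Injective q) {y : Fin n} (hmax : ∀ z, q z ≤ q y) :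
    rnk q y = n - 1 := by
  classical
  have hset : (Finset.univ.filter (fun z => q z < q y)) = Finset.univ.erase y := by
    ext z
    simp only [Finset.mem_filter, Finset.mem_univ, true_and, Finset.mem_erase, and_true]
    constructor
    · intro hh he; subst he; exact absurd hh (lt_irrefl _)
    · intro hne
      have := hmax z
      rcases Nat.eq_or_lt_of_le this with h2 | h2
      · exact absurd (hq h2) hne
      · exact h2
  rw [rnk, hset, Finset.card_erase_of_mem (Finset.mem_univ y), Finset.card_univ]
  simp
end rnk


/-- Suppose G is a graph of two parallel paths realized by induced paths
`v : Fin k → V` and `u : Fin l → V`, with nonempty core whose induced subgraph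
has a Hamiltonian cycle `c : Fin r → V`. Then the core vertices of each path
form an interval in the cyclic order of `c`, and the edges of each path between
core vertices are edges of the cycle `c` (no chords are used). -/
theorem stmt_8 {V : Type*} (G : SimpleGraph V)
    (k l : ℕ) (v : Fin k → V) (u : Fin l → V)
    (hvinj : Function.Injective v) (huinj : Function.Injective u)
    (hdisj : ∀ i j, v i ≠ u j)
    (hcover : ∀ x, (∃ i, v i = x) ∨ (∃ j, u j = x))
    (hvpath : ∀ i i', G.Adj (v i) (v i') ↔ ((i : ℕ) + 1 = (i' : ℕ) ∨ (i' : ℕ) + 1 = (i : ℕ)))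
    (hupath : ∀ j j', G.Adj (u j) (u j') ↔ ((j : ℕ) + 1 = (j' : ℕ) ∨ (j' : ℕ) + 1 = (j : ℕ)))
    (hcross : ∀ i j i' j', G.Adj (v i) (u j) → G.Adj (v i') (u j') →
      ¬ ((i < i' ∧ j' < j) ∨ (i' < i ∧ j < j')))
    (hRne : (core G).Nonempty)
    (r : ℕ) (hr : 3 ≤ r) (c : Fin r → V)
    (hcinj : Function.Injective c) (hcrange : Set.range c = core G)
    (hcyc : ∀ i j : Fin r, ((i : ℕ) + 1) % r = (j : ℕ) → G.Adj (c i) (c j)) :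
    (∃ a : Fin r, ∃ m : ℕ,
      {x : Fin r | c x ∈ Set.range v} =
        {x : Fin r | ∃ q < m, ((a : ℕ) + q) % r = (x : ℕ)}) ∧
    (∃ a : Fin r, ∃ m : ℕ,
      {x : Fin r | c x ∈ Set.range u} =
        {x : Fin r | ∃ q < m, ((a : ℕ) + q) % r = (x : ℕ)}) ∧
    (∀ i i' : Fin k, (i : ℕ) + 1 = (i' : ℕ) → v i ∈ core G → v i' ∈ core G →
      ∃ j j' : Fin r, ((j : ℕ) + 1) % r = (j' : ℕ) ∧
        ((c j = v i ∧ c j' = v i') ∨ (c j = v i' ∧ c j' = v i))) ∧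
    (∀ j j' : Fin l, (j : ℕ) + 1 = (j' : ℕ) → u j ∈ core G → u j' ∈ core G →
      ∃ a a' : Fin r, ((a : ℕ) + 1) % r = (a' : ℕ) ∧
        ((c a = u j ∧ c a' = u j') ∨ (c a = u j' ∧ c a' = u j))) := by

  classical
  haveI : NeZero r := ⟨by omega⟩
  letI : CommRing (Fin r) := Fin.instCommRing r
  -- choice function giving the "circular position" of each vertex
  have hcover' : ∀ x : V, ∃ nn : ℕ,
      (∃ i : Fin k, v i = x ∧ nn = (i : ℕ)) ∨
      (∃ j : Fin l, u j = x ∧ nn = k + l - 1 - (j : ℕ)) := by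
    intro x
    rcases hcover x with ⟨i, hi⟩ | ⟨j, hj⟩
    · exact ⟨i, Or.inl ⟨i, hi, rfl⟩⟩
    · exact ⟨k + l - 1 - (j : ℕ), Or.inr ⟨j, hj, rfl⟩⟩
  choose f hf using hcover'
  set qv : Fin r → ℕ := fun x => f (c x) with hqvdef
  -- basic case lemma
  have hQ : ∀ x : Fin r, (∃ i : Fin k, v i = c x ∧ qv x = (i : ℕ)) ∨
      (∃ j : Fin l, u j = c x ∧ qv x = k + l - 1 - (j : ℕ) ∧ k ≤ qv x ∧ qv x < k + l) := by
    intro x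
    rcases hf (c x) with ⟨i, hvi, hni⟩ | ⟨j, huj, hnj⟩
    · exact Or.inl ⟨i, hvi, hni⟩
    · exact Or.inr ⟨j, huj, hnj,
        by show k ≤ f (c x); have := j.isLt; omega,
        by show f (c x) < k + l; have := j.isLt; omega⟩
  have hqv : ∀ (x : Fin r) (i : Fin k), v i = c x → qv x = (i : ℕ) := by
    intro x i hi
    rcases hQ x with ⟨i₀, h1, h2⟩ | ⟨j₀, h1, h2, h3, h4⟩
    · rw [h2, hvinj (h1.trans hi.symm)]
    · exact absurd (hi.trans h1.symm) (hdisj i j₀)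
  have hqu : ∀ (x : Fin r) (j : Fin l), u j = c x → qv x = k + l - 1 - (j : ℕ) := by
    intro x j hj
    rcases hQ x with ⟨i₀, h1, h2⟩ | ⟨j₀, h1, h2, h3, h4⟩
    · exact absurd (h1.trans hj.symm) (hdisj i₀ j)
    · rw [h2, huinj (h1.trans hj.symm)]
  have hqlt : ∀ x : Fin r, qv x < k + l := by
    intro x
    rcases hQ x with ⟨i₀, h1, h2⟩ | ⟨j₀, h1, h2, h3, h4⟩
    · have := i₀.isLt; omega
    · exact h4
  have hqinj : Function.Injective qv := by
    intro x y h
    rcases hQ x with ⟨i, h1, h2⟩ | ⟨j, h1, h2, h3, h4⟩ <;>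
      rcases hQ y with ⟨i', g1, g2⟩ | ⟨j', g1, g2, g3, g4⟩
    · apply hcinj
      rw [← h1, ← g1]
      congr 1
      apply Fin.ext
      omega
    · exact absurd h (by have := i.isLt; omega)
    · exact absurd h (by have := i'.isLt; omega)
    · apply hcinj
      rw [← h1, ← g1]
      congr 1
      apply Fin.ext
      have := j.isLt; have := j'.isLt
      omega
  have hvmem : ∀ x : Fin r, c x ∈ Set.range v ↔ qv x < k := by
    intro x
    constructor
    · rintro ⟨i, hi⟩
      rw [hqv x i hi]
      exact i.isLt
    · intro hx
      rcases hQ x with ⟨i, h1, h2⟩ | ⟨j, h1, h2, h3, h4⟩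
      · exact ⟨i, h1⟩
      · omega
  have humem : ∀ x : Fin r, c x ∈ Set.range u ↔ k ≤ qv x := by
    intro x
    constructor
    · rintro ⟨j, hj⟩
      rw [hqu x j hj]
      have := j.isLt
      omega
    · intro hx
      rcases hQ x with ⟨i, h1, h2⟩ | ⟨j, h1, h2, h3, h4⟩
      · have := i.isLt; omega
      · exact ⟨j, h1⟩
  -- the cycle adjacency
  have hadj : ∀ x : Fin r, G.Adj (c x) (c (x + 1)) := by
    intro x
    apply hcyc
    rw [Fin.val_add, Fin.val_one']
    rw [Nat.mod_eq_of_lt (show 1 < r by omega)]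
  -- classification of edges of G between core vertices
  have hedge : ∀ x y : Fin r, G.Adj (c x) (c y) →
      (qv x + 1 = qv y ∨ qv y + 1 = qv x) ∨ (qv x < k ∧ k ≤ qv y) ∨ (qv y < k ∧ k ≤ qv x) := by
    intro x y hxy
    rcases hQ x with ⟨i, h1, h2⟩ | ⟨j, h1, h2, h3, h4⟩ <;>
      rcases hQ y with ⟨i', g1, g2⟩ | ⟨j', g1, g2, g3, g4⟩
    · have : G.Adj (v i) (v i') := by rw [h1, g1]; exact hxy
      rcases (hvpath i i').mp this with h | h <;> [left; left] <;> omega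
    · right; left
      constructor
      · rw [h2]; exact i.isLt
      · exact g3
    · right; right
      constructor
      · rw [g2]; exact i'.isLt
      · exact h3
    · have : G.Adj (u j) (u j') := by rw [h1, g1]; exact hxy
      have hj := j.isLt; have hj' := j'.isLt
      rcases (hupath j j').mp this with h | h <;> [left; left] <;> omega
  -- the non-crossing condition in position coordinates
  have hcross' : ∀ p p' w w' : Fin r, G.Adj (c p) (c p') → G.Adj (c w) (c w') →
      qv p < k → k ≤ qv p' → qv w < k → k ≤ qv w' →
      ¬ ((qv p < qv w ∧ qv p' < qv w') ∨ (qv w < qv p ∧ qv w' < qv p')) := by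
    intro p p' w w' hpp hww hp hp' hw hw' hcon
    rcases hQ p with ⟨i, h1, h2⟩ | ⟨j, h1, h2, h3, h4⟩
    swap
    · omega
    rcases hQ p' with ⟨i₀, g1, g2⟩ | ⟨j, g1, g2, g3, g4⟩
    · have := i₀.isLt; omega
    rcases hQ w with ⟨i', f1, f2⟩ | ⟨j₀, f1, f2, f3, f4⟩
    swap
    · omega
    rcases hQ w' with ⟨i₀, e1, e2⟩ | ⟨j', e1, e2, e3, e4⟩
    · have := i₀.isLt; omega
    have ha1 : G.Adj (v i) (u j) := by rw [h1, g1]; exact hpp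
    have ha2 : G.Adj (v i') (u j') := by rw [f1, e1]; exact hww
    apply hcross i j i' j' ha1 ha2
    have hjl := j.isLt; have hj'l := j'.isLt
    rcases hcon with ⟨hc1, hc2⟩ | ⟨hc1, hc2⟩
    · left
      constructor
      · rw [Fin.lt_def]; omega
      · rw [Fin.lt_def]; omega
    · right
      constructor
      · rw [Fin.lt_def]; omega
      · rw [Fin.lt_def]; omega
  -- helpers for Fin r arithmetic
  have hcast_inj : ∀ s t : ℕ, s < r → t < r → ((s : Fin r) = (t : Fin r)) → s = t := by
    intro s t hs ht h
    have := congrArg Fin.val h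
    rwa [Fin.val_natCast, Fin.val_natCast, Nat.mod_eq_of_lt hs, Nat.mod_eq_of_lt ht] at this
  have hxt_ne : ∀ (x : Fin r) (t : ℕ), 0 < t → t < r → x + (t : Fin r) ≠ x := by
    intro x t h0 h1 h
    have h2 : (t : Fin r) = ((0 : ℕ) : Fin r) := by
      have := add_left_cancel (a := x) (b := (t : Fin r)) (c := 0) (by simpa using h)
      simpa using this
    have := hcast_inj t 0 h1 (by omega) h2
    omega
  have hxt_ne1 : ∀ (x : Fin r) (t : ℕ), 1 < t → t < r → x + (t : Fin r) ≠ x + 1 := by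
    intro x t h0 h1 h
    have h2 : (t : Fin r) = ((1 : ℕ) : Fin r) := by
      have := add_left_cancel (a := x) (b := (t : Fin r)) (c := ((1 : ℕ) : Fin r)) (by simpa using h)
      simpa using this
    have := hcast_inj t 1 h1 (by omega) h2
    omega
  -- THE REGION LEMMA
  have hsucc_val : ∀ x : Fin r, ((x : ℕ) + 1) % r = ((x + 1 : Fin r) : ℕ) := by
    intro x
    rw [Fin.val_add, Fin.val_one', Nat.mod_eq_of_lt (show (1:ℕ) < r by omega)]
  have hregion : ∀ x : Fin r,
      (∀ z, z ≠ x → z ≠ x + 1 → min (qv x) (qv (x+1)) < qv z ∧ qv z < max (qv x) (qv (x+1))) ∨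
      (∀ z, z ≠ x → z ≠ x + 1 → qv z < min (qv x) (qv (x+1)) ∨ max (qv x) (qv (x+1)) < qv z) := by
    intro x
    have hx1 : x + 1 ≠ x := by
      have := hxt_ne x 1 (by omega) (by omega)
      simpa using this
    have hqne : qv x ≠ qv (x + 1) := fun h => hx1 (hqinj h.symm)
    set a := min (qv x) (qv (x + 1)) with hadef
    set b := max (qv x) (qv (x + 1)) with hbdef
    have hab : a < b := min_lt_max.mpr hqne
    have hvals : (qv x = a ∧ qv (x+1) = b) ∨ (qv x = b ∧ qv (x+1) = a) := by
      rcases Nat.lt_or_ge (qv x) (qv (x+1)) with h | h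
      · left
        exact ⟨(min_eq_left h.le).symm, (max_eq_right h.le).symm⟩
      · right
        exact ⟨(max_eq_left h).symm, (min_eq_right h).symm⟩
    have hqza : ∀ z, z ≠ x → z ≠ x + 1 → qv z ≠ a ∧ qv z ≠ b := by
      intro z h1 h2
      rcases hvals with ⟨hv1, hv2⟩ | ⟨hv1, hv2⟩
      · exact ⟨fun h => h1 (hqinj (h.trans hv1.symm)), fun h => h2 (hqinj (h.trans hv2.symm))⟩
      · exact ⟨fun h => h2 (hqinj (h.trans hv2.symm)), fun h => h1 (hqinj (h.trans hv1.symm))⟩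
    by_cases hba : b = a + 1
    · right
      intro z h1 h2
      have := hqza z h1 h2
      omega
    have hmix : a < k ∧ k ≤ b := by
      rcases hedge x (x+1) (hadj x) with hd | hmx
      · exfalso
        rcases hvals with ⟨hv1, hv2⟩ | ⟨hv1, hv2⟩ <;> exact hba (by omega)
      · rcases hvals with ⟨hv1, hv2⟩ | ⟨hv1, hv2⟩ <;> rcases hmx with ⟨hm1, hm2⟩ | ⟨hm1, hm2⟩ <;>
          constructor <;> omega
    obtain ⟨p, p', hpa, hpb, hpadj⟩ :
        ∃ p p' : Fin r, qv p = a ∧ qv p' = b ∧ G.Adj (c p) (c p') := by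
      rcases hvals with ⟨hv1, hv2⟩ | ⟨hv1, hv2⟩
      · exact ⟨x, x+1, hv1, hv2, hadj x⟩
      · exact ⟨x+1, x, hv2, hv1, (hadj x).symm⟩
    have H : ∀ w₁ w₂ : Fin r, G.Adj (c w₁) (c w₂) → qv w₁ ≠ a → qv w₁ ≠ b → qv w₂ ≠ a →
        qv w₂ ≠ b → (a < qv w₁ ∧ qv w₁ < b) → (a < qv w₂ ∧ qv w₂ < b) := by
      intro w₁ w₂ hadjw hna1 hnb1 hna2 hnb2 hins
      by_contra hout
      push_neg at hout
      rcases hedge w₁ w₂ hadjw with hd | hmx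
      · omega
      rcases hmx with ⟨hw1, hw2⟩ | ⟨hw2, hw1⟩
      · exact hcross' p p' w₁ w₂ hpadj hadjw (by omega) (by omega) hw1 hw2
          (Or.inl ⟨by omega, by omega⟩)
      · exact hcross' p p' w₂ w₁ hpadj hadjw.symm (by omega) (by omega) hw2 hw1
          (Or.inr ⟨by omega, by omega⟩)
    have hz_form : ∀ z : Fin r, z ≠ x → z ≠ x + 1 →
        ∃ t : ℕ, 2 ≤ t ∧ t ≤ r - 1 ∧ z = x + (t : Fin r) := by
      intro z h1 h2
      refine ⟨(z - x).val, ?_, ?_, ?_⟩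
      · have hne0 : (z - x).val ≠ 0 := by
          intro h
          apply h1
          have h3 : z - x = 0 := Fin.ext (by simpa using h)
          exact sub_eq_zero.mp h3
        have hne1 : (z - x).val ≠ 1 := by
          intro h
          apply h2
          have h3 : z - x = 1 := Fin.ext (by rw [h, Fin.val_one']; exact (Nat.mod_eq_of_lt (by omega)).symm)
          rw [sub_eq_iff_eq_add.mp h3, add_comm]
        omega
      · have := (z - x).isLt; omega
      · rw [Fin.cast_val_eq_self]; ring
    have hchain : ∀ t : ℕ, 2 ≤ t → t ≤ r - 1 →
        ((a < qv (x + ((2:ℕ) : Fin r)) ∧ qv (x + ((2:ℕ) : Fin r)) < b) ↔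
          (a < qv (x + (t : Fin r)) ∧ qv (x + (t : Fin r)) < b)) := by
      intro t ht
      induction t, ht using Nat.le_induction with
      | base => intro _; exact Iff.rfl
      | succ n hn ih =>
        intro hn1
        have hprev := ih (by omega)
        refine hprev.trans ?_
        have hcastn : x + ((n+1 : ℕ) : Fin r) = (x + ((n : ℕ) : Fin r)) + 1 := by
          push_cast; ring
        have hz1 : x + ((n : ℕ) : Fin r) ≠ x := hxt_ne x n (by omega) (by omega)
        have hz2 : x + ((n : ℕ) : Fin r) ≠ x + 1 := hxt_ne1 x n (by omega) (by omega)
        have hz1' : x + ((n : ℕ) : Fin r) + 1 ≠ x := by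
          rw [← hcastn]
          exact hxt_ne x (n+1) (by omega) (by omega)
        have hz2' : x + ((n : ℕ) : Fin r) + 1 ≠ x + 1 := by
          rw [← hcastn]
          exact hxt_ne1 x (n+1) (by omega) (by omega)
        have hqz := hqza _ hz1 hz2
        have hqz' := hqza _ hz1' hz2'
        rw [hcastn]
        constructor
        · intro h
          exact H _ _ (hadj (x + ((n : ℕ) : Fin r))) hqz.1 hqz.2 hqz'.1 hqz'.2 h
        · intro h
          exact H _ _ (hadj (x + ((n : ℕ) : Fin r))).symm hqz'.1 hqz'.2 hqz.1 hqz.2 h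
    by_cases hc2 : a < qv (x + ((2:ℕ) : Fin r)) ∧ qv (x + ((2:ℕ) : Fin r)) < b
    · left
      intro z h1 h2
      obtain ⟨t, ht2, htr, rfl⟩ := hz_form z h1 h2
      exact (hchain t ht2 htr).mp hc2
    · right
      intro z h1 h2
      obtain ⟨t, ht2, htr, rfl⟩ := hz_form z h1 h2
      have hne := hqza _ h1 h2
      have hnot : ¬ (a < qv (x + (t : Fin r)) ∧ qv (x + (t : Fin r)) < b) :=
        fun h => hc2 ((hchain t ht2 htr).mpr h)
      omega
  -- THE RANK STEP LEMMA
  have hstep : ∀ x : Fin r, ((rnk qv (x+1) : Fin r) = (rnk qv x : Fin r) + 1) ∨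
      ((rnk qv (x+1) : Fin r) = (rnk qv x : Fin r) - 1) := by
    intro x
    have hx1 : x + 1 ≠ x := by
      have := hxt_ne x 1 (by omega) (by omega)
      simpa using this
    have hqne : qv (x + 1) ≠ qv x := fun h => hx1 (hqinj h)
    rcases Nat.lt_or_ge (qv x) (qv (x + 1)) with hc | hc
    · have e1 : min (qv x) (qv (x + 1)) = qv x := min_eq_left hc.le
      have e2 : max (qv x) (qv (x + 1)) = qv (x + 1) := max_eq_right hc.le
      rcases hregion x with hin | hout
    
      · simp only [e1, e2] at hin
        right
        have h0 : rnk qv x = 0 := by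
          apply rnk_eq_zero
          intro z
          by_cases hz1 : z = x
          · subst hz1; omega
          by_cases hz2 : z = x + 1
          · subst hz2; omega
          · have := (hin z hz1 hz2).1; omega
        have hLast : rnk qv (x + 1) = r - 1 := by
          apply rnk_eq_last hqinj
          intro z
          by_cases hz1 : z = x
          · subst hz1; omega
          by_cases hz2 : z = x + 1
          · subst hz2; omega
          · have := (hin z hz1 hz2).2; omega
        rw [h0, hLast]
        have hcast : ((r - 1 : ℕ) : Fin r) = 0 - 1 := by
          rw [Nat.cast_sub (by omega : 1 ≤ r), Fin.natCast_self]
          norm_num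
        rw [hcast]
        norm_num
      · simp only [e1, e2] at hout
        left
        have hsucc : rnk qv (x + 1) = rnk qv x + 1 := by
          apply rnk_succ hqinj hc
          intro z hz
          by_cases hz1 : z = x
          · subst hz1; omega
          by_cases hz2 : z = x + 1
          · subst hz2; omega
          · have := hout z hz1 hz2; omega
        rw [hsucc]
        push_cast
        ring
    · have hc' : qv (x + 1) < qv x := by omega
      have e1 : min (qv x) (qv (x + 1)) = qv (x + 1) := min_eq_right hc'.le
      have e2 : max (qv x) (qv (x + 1)) = qv x := max_eq_left hc'.le
      rcases hregion x with hin | hout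
      · simp only [e1, e2] at hin
        left
        have h0 : rnk qv (x + 1) = 0 := by
          apply rnk_eq_zero
          intro z
          by_cases hz1 : z = x
          · subst hz1; omega
          by_cases hz2 : z = x + 1
          · subst hz2; omega
          · have := (hin z hz1 hz2).1; omega
        have hLast : rnk qv x = r - 1 := by
          apply rnk_eq_last hqinj
          intro z
          by_cases hz1 : z = x
          · subst hz1; omega
          by_cases hz2 : z = x + 1
          · subst hz2; omega
          · have := (hin z hz1 hz2).2; omega
        rw [h0, hLast]
        have hcast : ((r - 1 : ℕ) : Fin r) = 0 - 1 := by
          rw [Nat.cast_sub (by omega : 1 ≤ r), Fin.natCast_self]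
          norm_num
        rw [hcast]
        norm_num
      · simp only [e1, e2] at hout
        right
        have hsucc : rnk qv x = rnk qv (x + 1) + 1 := by
          apply rnk_succ hqinj hc'
          intro z hz
          by_cases hz1 : z = x
          · subst hz1; omega
          by_cases hz2 : z = x + 1
          · subst hz2; omega
          · have := hout z hz1 hz2; omega
        rw [hsucc]
        push_cast
        ring
  -- uniform direction
  obtain ⟨d, hd1, hd0⟩ : ∃ d : Fin r, (d = 1 ∨ d = -1) ∧
      ((rnk qv ((0 : Fin r) + 1) : Fin r) = (rnk qv (0 : Fin r) : Fin r) + d) := by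
    rcases hstep 0 with h | h
    · exact ⟨1, Or.inl rfl, h⟩
    · exact ⟨-1, Or.inr rfl, by rw [h]; ring⟩
  have hrnkcast_inj : ∀ x y : Fin r, ((rnk qv x : Fin r) = (rnk qv y : Fin r)) → x = y := by
    intro x y h
    exact rnk_inj hqinj (hcast_inj _ _ (rnk_lt x) (rnk_lt y) h)
  have htwo : ((2 : Fin r)) ≠ 0 := by
    intro h
    have h2 : ((2 : ℕ) : Fin r) = ((0 : ℕ) : Fin r) := by simpa using h
    have := hcast_inj 2 0 (by omega) (by omega) h2
    omega
  have hprop : ∀ x : Fin r, ((rnk qv (x+1) : Fin r) = (rnk qv x : Fin r) + d) →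
      ((rnk qv (x+1+1) : Fin r) = (rnk qv (x+1) : Fin r) + d) := by
    intro x hx
    rcases hstep (x + 1) with h | h
    · rcases hd1 with rfl | rfl
      · exact h
      · exfalso
        have hcc : (rnk qv (x+1+1) : Fin r) = (rnk qv x : Fin r) := by
          rw [h, hx]; ring
        have := hrnkcast_inj _ _ hcc
        apply htwo
        have h3 : x + (2 : Fin r) = x + 0 := by
          rw [add_zero]
          calc x + (2 : Fin r) = x + 1 + 1 := by ring
            _ = x := this
        exact add_left_cancel h3
    · rcases hd1 with rfl | rfl
      · exfalso
        have hcc : (rnk qv (x+1+1) : Fin r) = (rnk qv x : Fin r) := by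
          rw [h, hx]; ring
        have := hrnkcast_inj _ _ hcc
        apply htwo
        have h3 : x + (2 : Fin r) = x + 0 := by
          rw [add_zero]
          calc x + (2 : Fin r) = x + 1 + 1 := by ring
            _ = x := this
        exact add_left_cancel h3
      · rw [h]; ring
  have hstepall : ∀ x : Fin r, ((rnk qv (x+1) : Fin r) = (rnk qv x : Fin r) + d) := by
    have hnat : ∀ t : ℕ, ((rnk qv ((t : Fin r) + 1) : Fin r) = (rnk qv (t : Fin r) : Fin r) + d) := by
      intro t
      induction t with
      | zero => simpa using hd0
      | succ n ih =>
        have h2 : ((n + 1 : ℕ) : Fin r) = (n : Fin r) + 1 := by push_cast; ring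
        rw [h2]
        exact hprop _ ih
    intro x
    have := hnat x.val
    rwa [Fin.cast_val_eq_self] at this
  have hlin : ∀ x : Fin r, (rnk qv x : Fin r) = (rnk qv (0 : Fin r) : Fin r) + d * x := by
    have hnat : ∀ t : ℕ, (rnk qv ((t : ℕ) : Fin r) : Fin r) =
        (rnk qv (0 : Fin r) : Fin r) + d * ((t : ℕ) : Fin r) := by
      intro t
      induction t with
      | zero => simp
      | succ n ih =>
        have h2 : ((n + 1 : ℕ) : Fin r) = (n : Fin r) + 1 := by push_cast; ring
        rw [h2, hstepall, ih]
        ring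
    intro x
    have := hnat x.val
    rwa [Fin.cast_val_eq_self] at this
  have hd2 : d * d = 1 := by
    rcases hd1 with rfl | rfl
    · ring
    · ring
  -- the abstract interval lemma
  have hINT : ∀ m₀ m₁ : ℕ, m₁ ≤ r → ∃ a : Fin r, ∀ x : Fin r,
      ((m₀ ≤ rnk qv x ∧ rnk qv x < m₁) ↔ ∃ t, t < m₁ - m₀ ∧ a + ((t : ℕ) : Fin r) = x) := by
    intro m₀ m₁ hm₁
    by_cases hle : m₁ ≤ m₀
    · refine ⟨0, fun x => ?_⟩
      constructor
      · intro h; omega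
      · rintro ⟨t, ht, -⟩; omega
    push_neg at hle
    rcases hd1 with rfl | rfl
    · refine ⟨((m₀ : ℕ) : Fin r) - ((rnk qv (0 : Fin r) : ℕ) : Fin r), fun x => ?_⟩
      have h9 := hlin x
      rw [one_mul] at h9
      constructor
      · rintro ⟨h1, h2⟩
        refine ⟨rnk qv x - m₀, by omega, ?_⟩
        have h7 : ((m₀ : ℕ) : Fin r) + ((rnk qv x - m₀ : ℕ) : Fin r) =
            ((rnk qv x : ℕ) : Fin r) := by
          rw [← Nat.cast_add]
          congr 1
          omega
        linear_combination h9 + h7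
      · rintro ⟨t, ht, hteq⟩
        have h8 : ((rnk qv x : ℕ) : Fin r) = ((m₀ + t : ℕ) : Fin r) := by
          rw [Nat.cast_add, h9, ← hteq]
          ring
        have h10 := hcast_inj _ _ (rnk_lt (q := qv) x) (by omega) h8
        omega
    · refine ⟨((rnk qv (0 : Fin r) : ℕ) : Fin r) - ((m₁ - 1 : ℕ) : Fin r), fun x => ?_⟩
      have h9 := hlin x
      constructor
      · rintro ⟨h1, h2⟩
        refine ⟨m₁ - 1 - rnk qv x, by omega, ?_⟩
        have h7 : ((m₁ - 1 - rnk qv x : ℕ) : Fin r) + ((rnk qv x : ℕ) : Fin r) =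
            ((m₁ - 1 : ℕ) : Fin r) := by
          rw [← Nat.cast_add]
          congr 1
          omega
        linear_combination h7 - h9
      · rintro ⟨t, ht, hteq⟩
        have h7 : ((m₁ - 1 - t : ℕ) : Fin r) + ((t : ℕ) : Fin r) = ((m₁ - 1 : ℕ) : Fin r) := by
          rw [← Nat.cast_add]
          congr 1
          omega
        have h8 : ((rnk qv x : ℕ) : Fin r) = ((m₁ - 1 - t : ℕ) : Fin r) := by
          linear_combination h9 + hteq - h7
        have h10 := hcast_inj _ _ (rnk_lt (q := qv) x) (by omega) h8
        omega
  -- consecutive values sit at consecutive cycle positions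
  have hconsec : ∀ x y : Fin r, qv y = qv x + 1 → (y = x + 1 ∨ x = y + 1) := by
    intro x y hxy
    have hr1 : rnk qv y = rnk qv x + 1 :=
      rnk_succ hqinj (by omega) (fun z => by omega)
    have hc1 : (rnk qv y : Fin r) = (rnk qv x : Fin r) + 1 := by
      rw [hr1]; push_cast; ring
    rw [hlin x, hlin y] at hc1
    have h6 : d * y = d * x + 1 := by
      rw [add_assoc] at hc1
      exact add_left_cancel hc1
    have hy : y = x + d := by
      calc y = (d * d) * y := by rw [hd2, one_mul]
        _ = d * (d * y) := by ring
        _ = d * (d * x + 1) := by rw [h6]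
        _ = (d * d) * x + d := by ring
        _ = x + d := by rw [hd2]; ring
    rcases hd1 with rfl | rfl
    · exact Or.inl hy
    · right
      rw [hy]; ring
  -- membership/interval conversion helpers
  have hmodadd : ∀ (a : Fin r) (t : ℕ) (x : Fin r),
      (a + ((t : ℕ) : Fin r) = x) ↔ (((a : ℕ) + t) % r = (x : ℕ)) := by
    intro a t x
    have key : ((a : ℕ) + t % r) % r = ((a : ℕ) + t) % r := by
      conv_lhs => rw [Nat.add_mod]
      conv_rhs => rw [Nat.add_mod]
      rw [Nat.mod_mod_of_dvd t dvd_rfl]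
    rw [Fin.ext_iff, Fin.val_add, Fin.val_natCast, key]
  set m' := (Finset.univ.filter (fun x : Fin r => qv x < k)).card with hm'def
  have hm'r : m' ≤ r := by
    have h1 := Finset.card_filter_le Finset.univ (fun x : Fin r => qv x < k)
    simpa [Finset.card_univ] using h1
  have hm'iff : ∀ x : Fin r, qv x < k ↔ rnk qv x < m' := by
    intro x
    constructor
    · intro h
      apply Finset.card_lt_card
      constructor
      · intro z hz
        simp only [Finset.mem_filter, Finset.mem_univ, true_and] at *
        omega
      · intro hsub
        have h2 := hsub (show x ∈ Finset.univ.filter (fun z => qv z < k) by simp [h])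
        simp at h2
    · intro h
      by_contra hc
      push_neg at hc
      have h3 : m' ≤ rnk qv x := by
        apply Finset.card_le_card
        intro z hz
        simp only [Finset.mem_filter, Finset.mem_univ, true_and] at *
        omega
      omega
  refine ⟨?_, ?_, ?_, ?_⟩
  · obtain ⟨a, ha⟩ := hINT 0 m' hm'r
    refine ⟨a, m', ?_⟩
    ext x
    simp only [Set.mem_setOf_eq]
    rw [hvmem x, hm'iff x]
    constructor
    · intro h
      obtain ⟨t, ht, hteq⟩ := (ha x).mp ⟨Nat.zero_le _, h⟩
      exact ⟨t, by omega, (hmodadd a t x).mp hteq⟩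
    · rintro ⟨t, ht, hteq⟩
      exact ((ha x).mpr ⟨t, by omega, (hmodadd a t x).mpr hteq⟩).2
  · obtain ⟨a, ha⟩ := hINT m' r (le_refl r)
    refine ⟨a, r - m', ?_⟩
    ext x
    simp only [Set.mem_setOf_eq]
    rw [humem x]
    have hx1 : k ≤ qv x ↔ (m' ≤ rnk qv x ∧ rnk qv x < r) := by
      have h1 := hm'iff x
      have h2 := rnk_lt (q := qv) x
      omega
    rw [hx1]
    constructor
    · intro h
      obtain ⟨t, ht, hteq⟩ := (ha x).mp h
      exact ⟨t, ht, (hmodadd a t x).mp hteq⟩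
    · rintro ⟨t, ht, hteq⟩
      exact (ha x).mpr ⟨t, ht, (hmodadd a t x).mpr hteq⟩
  · intro i i' hii hvi hvi'
    rw [← hcrange] at hvi hvi'
    obtain ⟨x, hx⟩ := hvi
    obtain ⟨y, hy⟩ := hvi'
    have hqx : qv x = (i : ℕ) := hqv x i hx.symm
    have hqy : qv y = (i' : ℕ) := hqv y i' hy.symm
    rcases hconsec x y (by omega) with h | h
    · refine ⟨x, y, ?_, Or.inl ⟨hx, hy⟩⟩
      rw [h]
      exact hsucc_val x
    · refine ⟨y, x, ?_, Or.inr ⟨hy, hx⟩⟩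
      rw [h]
      exact hsucc_val y
  · intro j j' hjj hu hu'
    rw [← hcrange] at hu hu'
    obtain ⟨x, hx⟩ := hu
    obtain ⟨y, hy⟩ := hu'
    have hqx : qv x = k + l - 1 - (j : ℕ) := hqu x j hx.symm
    have hqy : qv y = k + l - 1 - (j' : ℕ) := hqu y j' hy.symm
    have hjl := j.isLt
    have hj'l := j'.isLt
    rcases hconsec y x (by omega) with h | h
    · refine ⟨y, x, ?_, Or.inr ⟨hy, hx⟩⟩
      rw [h]
      exact hsucc_val y
    · refine ⟨x, y, ?_, Or.inl ⟨hx, hy⟩⟩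
      rw [h]
      exact hsucc_val x
end

section
/- Let G be a graph of two parallel paths with nonempty core R and outer-cycle C. Then every induced cycle of G has at most two chords of C among its edges (at most two interior edges). -/
open scoped Classical
set_option linter.unusedSectionVars false

namespace TPP


variable {V : Type*}

/-- Bundled data of a two-parallel-paths graph. -/
structure PPData (G : SimpleGraph V) {k l : ℕ} (v : Fin k → V) (u : Fin l → V) : Prop where
  vinj : Function.Injective v
  uinj : Function.Injective u
  vu : ∀ i j, v i ≠ u j
  cover : ∀ x, (∃ i, v i = x) ∨ (∃ j, u j = x)
  vadj : ∀ i i', G.Adj (v i) (v i') ↔ ((i : ℕ) + 1 = (i' : ℕ) ∨ (i' : ℕ) + 1 = (i : ℕ))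
  uadj : ∀ j j', G.Adj (u j) (u j') ↔ ((j : ℕ) + 1 = (j' : ℕ) ∨ (j' : ℕ) + 1 = (j : ℕ))
  nc : ∀ i j i' j', G.Adj (v i) (u j) → G.Adj (v i') (u j') →
      ¬ ((i < i' ∧ j' < j) ∨ (i' < i ∧ j < j'))

variable {G : SimpleGraph V} {k l : ℕ} {v : Fin k → V} {u : Fin l → V}

lemma PPData.swap (h : PPData G v u) : PPData G u v where
  vinj := h.uinj
  uinj := h.vinj
  vu := fun j i hji => (h.vu i j) hji.symm
  cover := fun x => (h.cover x).symm
  vadj := h.uadj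
  uadj := h.vadj
  nc := by
    intro j i j' i' a a'
    have := h.nc i j i' j' a.symm a'.symm
    tauto

/-- v-side predicate. -/
def Vs (v : Fin k → V) (x : V) : Prop := ∃ i, v i = x

lemma PPData.not_vs_iff (h : PPData G v u) (x : V) : ¬ Vs v x ↔ ∃ j, u j = x := by
  constructor
  · intro hx
    rcases h.cover x with h' | h'
    · exact absurd h' hx
    · exact h'
  · rintro ⟨j, rfl⟩ ⟨i, hi⟩
    exact h.vu i j hi

/-- Index of a vertex on the `v`-path (junk value otherwise). -/
noncomputable def pidx (v : Fin k → V) (x : V) : ℕ :=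
  if h : Vs v x then (h.choose : ℕ) else 0

lemma pidx_lt (x : V) (hx : Vs v x) : pidx v x < k := by
  rw [pidx, dif_pos hx]
  exact (hx.choose).isLt

lemma pidx_eq (hvinj : Function.Injective v) (i : Fin k) : pidx v (v i) = (i : ℕ) := by
  have hx : Vs v (v i) := ⟨i, rfl⟩
  rw [pidx, dif_pos hx]
  exact congrArg Fin.val (hvinj hx.choose_spec)

lemma pidx_spec (x : V) (hx : Vs v x) : v ⟨pidx v x, pidx_lt x hx⟩ = x := by
  have h1 := hx.choose_spec
  have h2 : pidx v x = (hx.choose : ℕ) := by rw [pidx, dif_pos hx]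
  have h3 : (⟨pidx v x, pidx_lt x hx⟩ : Fin k) = hx.choose := Fin.ext h2
  rw [h3, h1]

lemma pidx_inj (x y : V) (hx : Vs v x) (hy : Vs v y) (hxy : pidx v x = pidx v y) : x = y := by
  rw [← pidx_spec x hx, ← pidx_spec y hy]
  congr 1
  exact Fin.ext hxy

/-- An injective walk on `ℕ` with `±1` steps is monotone (explicit formula). -/
lemma mono_walk (g : ℕ → ℕ) (s : ℕ)
    (hstep : ∀ x < s, g (x+1) = g x + 1 ∨ g x = g (x+1) + 1)
    (hinj : ∀ x ≤ s, ∀ y ≤ s, g x = g y → x = y) :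
    (∀ x ≤ s, g x = g 0 + x) ∨ (∀ x ≤ s, g x + x = g 0) := by
  induction s with
  | zero => left; intro x hx; interval_cases x; simp
  | succ s ih =>
    have ih' := ih (fun x hx => hstep x (by omega))
      (fun x hx y hy => hinj x (by omega) y (by omega))
    rcases ih' with h | h
    · rcases hstep s (by omega) with hs | hs
      · left
        intro x hx
        rcases Nat.lt_or_ge x (s+1) with h1 | h1
        · exact h x (by omega)
        · have hx1 : x = s + 1 := by omega
          subst hx1
          rw [hs, h s le_rfl]; omega
      · rcases Nat.eq_zero_or_pos s with rfl | hs0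
        · right
          intro x hx
          have h0 : g 0 = g 1 + 1 := by simpa using hs
          interval_cases x <;> omega
        · exfalso
          have h1 : g s = g 0 + s := h s le_rfl
          have h2 : g (s-1) = g 0 + (s-1) := h (s-1) (by omega)
          have h3 : g (s+1) = g (s-1) := by omega
          have := hinj (s+1) le_rfl (s-1) (by omega) h3
          omega
    · rcases hstep s (by omega) with hs | hs
      · rcases Nat.eq_zero_or_pos s with rfl | hs0
        · left
          intro x hx
          have h0 : g 1 = g 0 + 1 := by simpa using hs
          interval_cases x <;> omega
        · exfalso
          have h1 : g s + s = g 0 := h s le_rfl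
          have h2 : g (s-1) + (s-1) = g 0 := h (s-1) (by omega)
          have h3 : g (s+1) = g (s-1) := by omega
          have := hinj (s+1) le_rfl (s-1) (by omega) h3
          omega
      · right
        intro x hx
        rcases Nat.lt_or_ge x (s+1) with h1 | h1
        · exact h x (by omega)
        · have hx1 : x = s + 1 := by omega
          subst hx1
          have h1 : g s + s = g 0 := h s le_rfl
          omega




section cyc

variable {n : ℕ} [NeZero n]

/-- change positions of the cyclic sequence `e` w.r.t. the side predicate of `v`. -/
noncomputable def Xch (v : Fin k → V) (e : ZMod n → V) : Finset (ZMod n) :=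
  Finset.univ.filter (fun t => ¬ (Vs v (e t) ↔ Vs v (e (t+1))))

lemma mem_Xch {e : ZMod n → V} {t : ZMod n} :
    t ∈ Xch v e ↔ ¬ (Vs v (e t) ↔ Vs v (e (t+1))) := by
  simp [Xch]

lemma natCast_val_zmod (a : ZMod n) : ((a.val : ℕ) : ZMod n) = a := by
  simp [ZMod.natCast_val, ZMod.cast_id]

lemma cast_inj_of_lt {x y : ℕ} (hx : x < n) (hy : y < n) (h : (x : ZMod n) = y) : x = y := by
  have := congrArg ZMod.val h
  rwa [ZMod.val_cast_of_lt hx, ZMod.val_cast_of_lt hy] at this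

lemma prop_const (P : ZMod n → Prop) (t : ZMod n) (N : ℕ)
    (hno : ∀ x : ℕ, x < N → (P (t + x) ↔ P (t + x + 1))) :
    ∀ x : ℕ, x ≤ N → (P (t + x) ↔ P t) := by
  intro x
  induction x with
  | zero => intro _; simp
  | succ x ih =>
    intro hx
    have h1 := hno x (by omega)
    have h2 := ih (by omega)
    have h3 : t + ((x+1 : ℕ) : ZMod n) = t + (x : ZMod n) + 1 := by push_cast; ring
    rw [h3]
    exact h1.symm.trans h2

lemma run_max (hn : 3 ≤ n) (e : ZMod n → V) (P : V → Prop)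
    (t₀ : ZMod n) (h0 : P (e t₀)) (hex : ∃ t1, ¬ P (e t1)) :
    ∃ (p : ZMod n) (s : ℕ), s < n ∧ (∀ x : ℕ, x ≤ s → P (e (p + x))) ∧
      ¬ P (e (p - 1)) ∧ ¬ P (e (p + ((s+1 : ℕ) : ZMod n))) ∧
      ∃ x : ℕ, x ≤ s ∧ p + (x : ZMod n) = t₀ := by
  obtain ⟨t1, ht1⟩ := hex
  have htne : t1 ≠ t₀ := by rintro rfl; exact ht1 h0
  -- forward
  have hfex : ∃ a : ℕ, ¬ P (e (t₀ + ((a+1 : ℕ) : ZMod n))) := by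
    refine ⟨(t1 - t₀).val - 1, ?_⟩
    have hne : (t1 - t₀).val ≠ 0 := by
      intro h
      have : t1 - t₀ = 0 := by rwa [ZMod.val_eq_zero] at h
      exact htne (by linear_combination this)
    have h1 : ((t1 - t₀).val - 1 + 1 : ℕ) = (t1 - t₀).val := by omega
    rw [h1, natCast_val_zmod]
    convert ht1 using 3
    ring
  have hbex : ∃ b : ℕ, ¬ P (e (t₀ - ((b+1 : ℕ) : ZMod n))) := by
    refine ⟨(t₀ - t1).val - 1, ?_⟩
    have hne : (t₀ - t1).val ≠ 0 := by
      intro h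
      have : t₀ - t1 = 0 := by rwa [ZMod.val_eq_zero] at h
      exact htne (by linear_combination - this)
    have h1 : ((t₀ - t1).val - 1 + 1 : ℕ) = (t₀ - t1).val := by omega
    rw [h1, natCast_val_zmod]
    convert ht1 using 3
    ring
  set a := Nat.find hfex with ha
  set b := Nat.find hbex with hb
  refine ⟨t₀ - (b : ℕ), a + b, ?_, ?_, ?_, ?_, ⟨b, by omega, by ring⟩⟩
  case _ => -- s < n  (proved later using purity; do purity inline)
    by_contra hsn
    push_neg at hsn
    -- position t₀ + (a+1) is inside the run
    have hy : (a + 1 + b) % n ≤ a + b := by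
      have := Nat.mod_lt (a+1+b) (show 0 < n by omega)
      omega
    -- purity at y
    have hpury : P (e (t₀ - (b:ℕ) + (((a+1+b) % n : ℕ) : ZMod n))) := by
      -- reprove purity for this x
      have hx := hy
      set x := (a+1+b) % n with hxdef
      rcases le_or_gt x b with hxb | hxb
      · have hc : t₀ - (b:ℕ) + (x : ZMod n) = t₀ - ((b - x : ℕ) : ZMod n) := by
          rw [Nat.cast_sub hxb]; ring
        rw [hc]
        rcases Nat.eq_zero_or_pos (b - x) with h' | h'
        · rw [h']; simpa using h0
        · have := Nat.find_min hbex (show b - x - 1 < b by omega)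
          rw [not_not] at this
          have h'' : (b - x - 1 + 1 : ℕ) = b - x := by omega
          rwa [h''] at this
      · have hc : t₀ - (b:ℕ) + (x : ZMod n) = t₀ + ((x - b : ℕ) : ZMod n) := by
          rw [Nat.cast_sub (le_of_lt hxb)]; ring
        rw [hc]
        have := Nat.find_min hfex (show x - b - 1 < a by omega)
        rw [not_not] at this
        have h'' : (x - b - 1 + 1 : ℕ) = x - b := by omega
        rwa [h''] at this
    have hcast : t₀ - (b:ℕ) + (((a+1+b) % n : ℕ) : ZMod n) = t₀ + ((a+1 : ℕ) : ZMod n) := by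
      rw [ZMod.natCast_mod]
      push_cast
      ring
    rw [hcast] at hpury
    exact Nat.find_spec hfex hpury
  case _ => -- purity
    intro x hx
    rcases le_or_gt x b with hxb | hxb
    · have hc : t₀ - (b:ℕ) + (x : ZMod n) = t₀ - ((b - x : ℕ) : ZMod n) := by
        rw [Nat.cast_sub hxb]; ring
      rw [hc]
      rcases Nat.eq_zero_or_pos (b - x) with h' | h'
      · rw [h']; simpa using h0
      · have := Nat.find_min hbex (show b - x - 1 < b by omega)
        rw [not_not] at this
        have h'' : (b - x - 1 + 1 : ℕ) = b - x := by omega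
        rwa [h''] at this
    · have hc : t₀ - (b:ℕ) + (x : ZMod n) = t₀ + ((x - b : ℕ) : ZMod n) := by
        rw [Nat.cast_sub (le_of_lt hxb)]; ring
      rw [hc]
      have := Nat.find_min hfex (show x - b - 1 < a by omega)
      rw [not_not] at this
      have h'' : (x - b - 1 + 1 : ℕ) = x - b := by omega
      rwa [h''] at this
  case _ => -- left boundary
    have hc : t₀ - (b:ℕ) - 1 = t₀ - ((b + 1 : ℕ) : ZMod n) := by push_cast; ring
    rw [hc]
    exact Nat.find_spec hbex
  case _ => -- right boundary
    have hc : t₀ - (b:ℕ) + ((a + b + 1 : ℕ) : ZMod n) = t₀ + ((a + 1 : ℕ) : ZMod n) := by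
      push_cast; ring
    rw [hc]
    exact Nat.find_spec hfex



lemma closed_contra (hn : 3 ≤ n)
    (e : ZMod n → V)
    (p1 : ZMod n) (s1 s2 : ℕ) (hs1 : s1 < n) (hs2 : s2 < n)
    (pur1 : ∀ x : ℕ, x ≤ s1 → ¬ Vs v (e (p1 + x)))
    (pur2 : ∀ x : ℕ, x ≤ s2 → Vs v (e (p1 + ((s1+1 : ℕ) : ZMod n) + x)))
    (hclose : p1 - 1 = p1 + ((s1+1 : ℕ) : ZMod n) + ((s2 : ℕ) : ZMod n)) :
    (Xch v e).card ≤ 2 := by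
  have hdvd : n ∣ s1 + s2 + 2 := by
    have h0 : ((s1 + s2 + 2 : ℕ) : ZMod n) = 0 := by
      push_cast
      push_cast at hclose
      linear_combination - hclose
    exact (ZMod.natCast_eq_zero_iff _ n).mp h0
  set p2 : ZMod n := p1 + ((s1+1 : ℕ) : ZMod n) with hp2
  set F1 : Finset (ZMod n) := (Finset.range (s1+1)).image (fun x : ℕ => p1 + (x : ZMod n)) with hF1
  set F2 : Finset (ZMod n) := (Finset.range (s2+1)).image (fun x : ℕ => p2 + (x : ZMod n)) with hF2
  have hcard1 : F1.card = s1 + 1 := by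
    rw [hF1, Finset.card_image_of_injOn, Finset.card_range]
    intro x hx y hy hxy
    simp only [Finset.coe_range, Set.mem_Iio] at hx hy
    have hxy' : (x : ZMod n) = y := by linear_combination hxy
    exact cast_inj_of_lt (show x < n by omega) (show y < n by omega) hxy'
  have hcard2 : F2.card = s2 + 1 := by
    rw [hF2, Finset.card_image_of_injOn, Finset.card_range]
    intro x hx y hy hxy
    simp only [Finset.coe_range, Set.mem_Iio] at hx hy
    have hxy' : (x : ZMod n) = y := by linear_combination hxy
    exact cast_inj_of_lt (show x < n by omega) (show y < n by omega) hxy'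
  have hdisj : Disjoint F1 F2 := by
    rw [Finset.disjoint_left]
    rintro t ht1 ht2
    rw [hF1, Finset.mem_image] at ht1
    rw [hF2, Finset.mem_image] at ht2
    obtain ⟨x, hx, rfl⟩ := ht1
    obtain ⟨y, hy, hxy⟩ := ht2
    rw [Finset.mem_range] at hx hy
    exact pur1 x (by omega) (by rw [← hxy]; exact pur2 y (by omega))
  have hun : (F1 ∪ F2).card = s1 + s2 + 2 := by
    rw [Finset.card_union_of_disjoint hdisj, hcard1, hcard2]; omega
  have hle : s1 + s2 + 2 ≤ n := by
    have := Finset.card_le_univ (F1 ∪ F2)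
    rwa [hun, ZMod.card] at this
  have heq : s1 + s2 + 2 = n := by
    rcases hdvd with ⟨c, hc⟩
    rcases Nat.eq_zero_or_pos c with rfl | hcpos
    · omega
    · nlinarith
  have hcover : F1 ∪ F2 = Finset.univ := by
    apply Finset.eq_univ_of_card
    rw [hun, heq, ZMod.card]
  have hsub : Xch v e ⊆ {p1 + ((s1:ℕ) : ZMod n), p2 + ((s2:ℕ) : ZMod n)} := by
    intro t ht
    rw [mem_Xch] at ht
    have htmem : t ∈ F1 ∪ F2 := by rw [hcover]; exact Finset.mem_univ t
    rw [Finset.mem_union] at htmem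
    rcases htmem with htm | htm
    · rw [hF1, Finset.mem_image] at htm
      obtain ⟨x, hx, rfl⟩ := htm
      rw [Finset.mem_range] at hx
      rcases Nat.lt_or_ge x s1 with hxs | hxs
      · exfalso
        apply ht
        have h1 := pur1 x (by omega)
        have h2 := pur1 (x+1) (by omega)
        have hc : p1 + (x : ZMod n) + 1 = p1 + ((x+1 : ℕ) : ZMod n) := by push_cast; ring
        rw [hc]
        exact iff_of_false h1 h2
      · have : x = s1 := by omega
        subst this
        simp
    · rw [hF2, Finset.mem_image] at htm
      obtain ⟨x, hx, rfl⟩ := htm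
      rw [Finset.mem_range] at hx
      rcases Nat.lt_or_ge x s2 with hxs | hxs
      · exfalso
        apply ht
        have h1 := pur2 x (by omega)
        have h2 := pur2 (x+1) (by omega)
        have hc : p2 + (x : ZMod n) + 1 = p2 + ((x+1 : ℕ) : ZMod n) := by push_cast; ring
        rw [hc]
        exact iff_of_true h1 h2
      · have : x = s2 := by omega
        subst this
        simp
  calc (Xch v e).card ≤ _ := Finset.card_le_card hsub
    _ ≤ 2 := by
      apply le_trans (Finset.card_insert_le _ _)
      simp

lemma max_both (h : PPData G v u) (hn : 3 ≤ n) (e : ZMod n → V)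
    (einj : Function.Injective e) (hadj : ∀ t, G.Adj (e t) (e (t+1)))
    (t_v : ZMod n) (htv : Vs v (e t_v))
    (hmax : ∀ t, Vs v (e t) → pidx v (e t) ≤ pidx v (e t_v))
    (h1 : Vs v (e (t_v + 1))) (h2 : Vs v (e (t_v - 1))) : False := by
  obtain ⟨i, hi⟩ := htv
  obtain ⟨i', hi'⟩ := h1
  obtain ⟨i'', hi''⟩ := h2
  have adj1 : G.Adj (v i) (v i') := by rw [hi, hi']; exact hadj t_v
  have adj2 : G.Adj (v i'') (v i) := by
    rw [hi, hi'']
    have := hadj (t_v - 1)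
    rwa [sub_add_cancel] at this
  have hle1 : (i' : ℕ) ≤ i := by
    have := hmax (t_v + 1) ⟨i', hi'⟩
    rwa [← hi, ← hi', pidx_eq h.vinj, pidx_eq h.vinj] at this
  have hle2 : (i'' : ℕ) ≤ i := by
    have := hmax (t_v - 1) ⟨i'', hi''⟩
    rwa [← hi, ← hi'', pidx_eq h.vinj, pidx_eq h.vinj] at this
  have e1 := (h.vadj i i').mp adj1
  have e2 := (h.vadj i'' i).mp adj2
  have : (i' : ℕ) = i'' := by omega
  have hii : i' = i'' := Fin.ext this
  have : e (t_v + 1) = e (t_v - 1) := by rw [← hi', ← hi'', hii]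
  have ht : t_v + 1 = t_v - 1 := einj this
  have h20 : ((2 : ℕ) : ZMod n) = 0 := by push_cast; linear_combination ht
  have hdd := (ZMod.natCast_eq_zero_iff 2 n).mp h20
  have := Nat.le_of_dvd (by norm_num) hdd
  omega


lemma L3 (h : PPData G v u) (hn : 3 ≤ n) (e : ZMod n → V)
    (einj : Function.Injective e) (hadj : ∀ t, G.Adj (e t) (e (t+1)))
    (hX3 : 3 ≤ (Xch v e).card)
    (p1 : ZMod n) (s1 : ℕ) (hs1 : s1 < n)
    (pur1 : ∀ x : ℕ, x ≤ s1 → ¬ Vs v (e (p1 + x)))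
    (bdL : Vs v (e (p1 - 1))) (bdR : Vs v (e (p1 + ((s1+1 : ℕ) : ZMod n))))
    (K1 : ∀ t, ¬ Vs v (e t) → pidx u (e t) ≤ pidx u (e (p1 + ((s1 : ℕ) : ZMod n))))
    (K2 : ∀ t, Vs v (e t) → pidx v (e t) ≤ pidx v (e (p1 + ((s1+1 : ℕ) : ZMod n)))) :
    False := by
  have pur1' : ¬ Vs v (e p1) := by simpa using pur1 0 (by omega)
  set p2 : ZMod n := p1 + ((s1+1 : ℕ) : ZMod n) with hp2
  -- u-side run index function
  set g : ℕ → ℕ := fun x => pidx u (e (p1 + (x : ZMod n))) with hg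
  have guside : ∀ x : ℕ, x ≤ s1 → ∃ j, u j = e (p1 + (x : ZMod n)) :=
    fun x hx => (h.not_vs_iff _).mp (pur1 x hx)
  have hg_inj : ∀ x ≤ s1, ∀ y ≤ s1, g x = g y → x = y := by
    intro x hx y hy hxy
    simp only [hg] at hxy
    have h1 : e (p1 + (x:ZMod n)) = e (p1 + (y:ZMod n)) :=
      pidx_inj _ _ (guside x hx) (guside y hy) hxy
    have h2 : (x : ZMod n) = y := by
      have := einj h1
      linear_combination this
    exact cast_inj_of_lt (by omega) (by omega) h2
  have hg_step : ∀ x, x < s1 → (g (x+1) = g x + 1 ∨ g x = g (x+1) + 1) := by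
    intro x hx
    obtain ⟨j, hj⟩ := guside x (by omega)
    obtain ⟨j', hj'⟩ := guside (x+1) (by omega)
    have adj : G.Adj (u j) (u j') := by
      rw [hj, hj']
      have hc : p1 + ((x:ℕ):ZMod n) + 1 = p1 + ((x+1:ℕ) : ZMod n) := by push_cast; ring
      have := hadj (p1 + (x : ZMod n))
      rwa [hc] at this
    have had := (h.uadj j j').mp adj
    have e1 : g x = (j : ℕ) := by simp only [hg]; rw [← hj, pidx_eq h.uinj]
    have e2 : g (x+1) = (j' : ℕ) := by simp only [hg]; rw [← hj', pidx_eq h.uinj]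
    omega
  have hK1' : ∀ t, ¬ Vs v (e t) → pidx u (e t) ≤ g s1 := by
    intro t ht
    have := K1 t ht
    simpa [hg] using this
  have hasc : ∀ x ≤ s1, g x = g 0 + x := by
    rcases mono_walk g s1 hg_step hg_inj with hm | hm
    · exact hm
    · have h1 : g s1 + s1 = g 0 := hm s1 le_rfl
      have h2 : g 0 ≤ g s1 := by
        have := hK1' (p1 + ((0:ℕ) : ZMod n)) (pur1 0 (by omega))
        simpa [hg] using this
      have hs10 : s1 = 0 := by omega
      subst hs10
      intro x hx
      interval_cases x
      simp
  -- v-side run around p2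
  obtain ⟨q, s2, hs2, pur2, bd2L, bd2R, x₀, hx₀le, hx₀⟩ :=
    run_max hn e (Vs v) p2 bdR ⟨p1, pur1'⟩
  have hq : q = p2 := by
    rcases Nat.eq_zero_or_pos x₀ with rfl | hx0pos
    · simpa using hx₀
    · exfalso
      have hc : q + ((x₀ - 1 : ℕ) : ZMod n) = p1 + ((s1 : ℕ) : ZMod n) := by
        have hx1 : ((x₀ : ℕ) : ZMod n) = ((x₀ - 1 : ℕ) : ZMod n) + 1 := by
          rw [Nat.cast_sub hx0pos]
          push_cast
          ring
        have h2 : ((s1+1:ℕ) : ZMod n) = ((s1:ℕ) : ZMod n) + 1 := by push_cast; ring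
        have h3 := hx₀
        rw [hx1, hp2, h2] at h3
        linear_combination h3
      have := pur2 (x₀ - 1) (by omega)
      rw [hc] at this
      exact pur1 s1 le_rfl this
  subst hq
  -- v-side index function on run2
  set gI : ℕ → ℕ := fun x => pidx v (e (p2 + (x : ZMod n))) with hgI
  have hgI_inj : ∀ x ≤ s2, ∀ y ≤ s2, gI x = gI y → x = y := by
    intro x hx y hy hxy
    simp only [hgI] at hxy
    have h1 : e (p2 + (x:ZMod n)) = e (p2 + (y:ZMod n)) :=
      pidx_inj _ _ (pur2 x hx) (pur2 y hy) hxy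
    have h2 : (x : ZMod n) = y := by
      have := einj h1
      linear_combination this
    exact cast_inj_of_lt (by omega) (by omega) h2
  have hgI_step : ∀ x, x < s2 → (gI (x+1) = gI x + 1 ∨ gI x = gI (x+1) + 1) := by
    intro x hx
    obtain ⟨i, hi⟩ := pur2 x (by omega)
    obtain ⟨i', hi'⟩ := pur2 (x+1) (by omega)
    have adj : G.Adj (v i) (v i') := by
      rw [hi, hi']
      have hc : p2 + ((x:ℕ):ZMod n) + 1 = p2 + ((x+1:ℕ) : ZMod n) := by push_cast; ring
      have := hadj (p2 + (x : ZMod n))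
      rwa [hc] at this
    have had := (h.vadj i i').mp adj
    have e1 : gI x = (i : ℕ) := by simp only [hgI]; rw [← hi, pidx_eq h.vinj]
    have e2 : gI (x+1) = (i' : ℕ) := by simp only [hgI]; rw [← hi', pidx_eq h.vinj]
    omega
  have hK2' : ∀ t, Vs v (e t) → pidx v (e t) ≤ gI 0 := by
    intro t ht
    have := K2 t ht
    simpa [hgI] using this
  have hdesc : ∀ x ≤ s2, gI x + x = gI 0 := by
    rcases mono_walk gI s2 hgI_step hgI_inj with hm | hm
    · have h1 : gI s2 = gI 0 + s2 := hm s2 le_rfl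
      have h2 : gI s2 ≤ gI 0 := hK2' (p2 + ((s2:ℕ) : ZMod n)) (pur2 s2 le_rfl)
      have hs20 : s2 = 0 := by omega
      subst hs20
      intro x hx
      interval_cases x
      simp
    · exact hm
  have hiend : gI s2 + s2 = gI 0 := hdesc s2 le_rfl
  -- claim 1
  have claim1 : pidx v (e (p1 - 1)) < gI s2 := by
    by_contra hcon
    push_neg at hcon
    have hw1max : pidx v (e (p1 - 1)) ≤ gI 0 := hK2' _ bdL
    have hxle : gI 0 - pidx v (e (p1 - 1)) ≤ s2 := by omega
    have h1 : gI (gI 0 - pidx v (e (p1 - 1))) + (gI 0 - pidx v (e (p1 - 1))) = gI 0 :=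
      hdesc _ hxle
    have h2 : gI (gI 0 - pidx v (e (p1 - 1))) = pidx v (e (p1 - 1)) := by omega
    simp only [hgI] at h2
    have h3 : e (p2 + ((gI 0 - pidx v (e (p1 - 1)) : ℕ) : ZMod n)) = e (p1 - 1) :=
      pidx_inj _ _ (pur2 _ hxle) bdL h2
    have h4 : p2 + ((gI 0 - pidx v (e (p1 - 1)) : ℕ) : ZMod n) = p1 - 1 := einj h3
    rcases Nat.lt_or_ge (gI 0 - pidx v (e (p1 - 1))) s2 with hlt | hge
    · have h5 : p2 + (((gI 0 - pidx v (e (p1 - 1))) + 1 : ℕ) : ZMod n) = p1 := by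
        push_cast at h4 ⊢
        linear_combination h4
      have := pur2 _ (show (gI 0 - pidx v (e (p1 - 1))) + 1 ≤ s2 by omega)
      rw [h5] at this
      exact pur1' this
    · have hxeq : gI 0 - pidx v (e (p1 - 1)) = s2 := by omega
      rw [hxeq] at h4
      have hcl := closed_contra (v := v) hn e p1 s1 s2 hs1 hs2 pur1 pur2 h4.symm
      omega
  -- claim 2
  have claim2 : pidx u (e (p2 + ((s2+1:ℕ) : ZMod n))) < g 0 := by
    set w2 : ℕ := pidx u (e (p2 + ((s2+1:ℕ) : ZMod n))) with hw2
    by_contra hcon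
    push_neg at hcon
    have hw2max : w2 ≤ g s1 := hK1' _ bd2R
    have hjmax : g s1 = g 0 + s1 := hasc s1 le_rfl
    have hxle : w2 - g 0 ≤ s1 := by omega
    have h1 : g (w2 - g 0) = w2 := by
      have := hasc _ hxle
      omega
    simp only [hg] at h1
    have h3 : e (p1 + ((w2 - g 0 : ℕ) : ZMod n)) = e (p2 + ((s2+1:ℕ) : ZMod n)) :=
      pidx_inj _ _ (guside _ hxle) ((h.not_vs_iff _).mp bd2R) h1
    have h4 := einj h3
    rcases Nat.eq_zero_or_pos (w2 - g 0) with hz | hpos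
    · rw [hz] at h4
      have hclose : p1 - 1 = p2 + ((s2:ℕ):ZMod n) := by
        push_cast at h4 ⊢
        linear_combination h4
      have hcl := closed_contra (v := v) hn e p1 s1 s2 hs1 hs2 pur1 pur2 hclose
      omega
    · have h5 : p1 + ((w2 - g 0 - 1 : ℕ) : ZMod n) = p2 + ((s2:ℕ) : ZMod n) := by
        have hc1 : ((w2 - g 0 : ℕ) : ZMod n) = ((w2 - g 0 - 1 : ℕ) : ZMod n) + 1 := by
          rw [Nat.cast_sub hpos]
          push_cast
          ring
        have hc2 : ((s2+1 : ℕ) : ZMod n) = ((s2 : ℕ) : ZMod n) + 1 := by push_cast; ring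
        rw [hc1] at h4
        linear_combination h4 + hc2
      have := pur1 _ (show w2 - g 0 - 1 ≤ s1 by omega)
      rw [h5] at this
      exact this (pur2 s2 le_rfl)
  -- final contradiction via non-crossing
  obtain ⟨iA, hiA⟩ := bdL
  obtain ⟨jA, hjA⟩ := guside 0 (by omega)
  have adj1 : G.Adj (v iA) (u jA) := by
    have hjA' : u jA = e p1 := by rw [hjA]; norm_num
    rw [hiA, hjA']
    have := hadj (p1 - 1)
    rwa [sub_add_cancel] at this
  obtain ⟨iB, hiB⟩ := pur2 s2 le_rfl
  obtain ⟨jB, hjB⟩ := (h.not_vs_iff _).mp bd2R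
  have adj2 : G.Adj (v iB) (u jB) := by
    rw [hiB, hjB]
    have hc : p2 + ((s2:ℕ):ZMod n) + 1 = p2 + ((s2+1:ℕ):ZMod n) := by push_cast; ring
    have := hadj (p2 + ((s2:ℕ):ZMod n))
    rwa [hc] at this
  have hIA : (iA : ℕ) = pidx v (e (p1 - 1)) := by rw [← hiA, pidx_eq h.vinj]
  have hIB : (iB : ℕ) = gI s2 := by simp only [hgI]; rw [← hiB, pidx_eq h.vinj]
  have hJA : (jA : ℕ) = g 0 := by
    simp only [hg]
    rw [← hjA, pidx_eq h.uinj]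
  have hJB : (jB : ℕ) = pidx u (e (p2 + ((s2+1:ℕ) : ZMod n))) := by
    rw [← hjB, pidx_eq h.uinj]
  have hlt1 : iA < iB := by
    rw [Fin.lt_def]
    omega
  have hlt2 : jB < jA := by
    rw [Fin.lt_def]
    omega
  exact h.nc iA jA iB jB adj1 adj2 (Or.inl ⟨hlt1, hlt2⟩)

lemma refl_inj {e : ZMod n → V} (einj : Function.Injective e) :
    Function.Injective (fun t : ZMod n => e (-t)) :=
  fun a b hab => neg_injective (einj hab)

lemma refl_adj {e : ZMod n → V} (hadj : ∀ t, G.Adj (e t) (e (t+1))) :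
    ∀ t : ZMod n, G.Adj ((fun t : ZMod n => e (-t)) t) ((fun t : ZMod n => e (-t)) (t+1)) := by
  intro t
  simp only
  have h1 : -(t+1) + 1 = -t := by ring
  have := hadj (-(t+1))
  rw [h1] at this
  exact this.symm

lemma refl_Xch_card (e : ZMod n → V) :
    (Xch v (fun t : ZMod n => e (-t))).card = (Xch v e).card := by
  apply Finset.card_bij' (i := fun t _ => -(t+1)) (j := fun t _ => -(t+1))
  · intro a _; ring
  · intro a _; ring
  · intro a ha
    rw [mem_Xch] at ha ⊢
    have h1 : -(a+1) + 1 = -a := by ring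
    rw [h1]
    tauto
  · intro a ha
    rw [mem_Xch] at ha ⊢
    have h1 : -(a+1) + 1 = -a := by ring
    rw [h1]
    simp only [neg_neg]
    tauto

lemma run_mono_u (h : PPData G v u) (e : ZMod n → V)
    (einj : Function.Injective e) (hadj : ∀ t, G.Adj (e t) (e (t+1)))
    (p1 : ZMod n) (s1 : ℕ) (hs1 : s1 < n)
    (pur1 : ∀ x : ℕ, x ≤ s1 → ¬ Vs v (e (p1 + x))) :
    (∀ x ≤ s1, pidx u (e (p1 + (x:ZMod n))) = pidx u (e (p1 + ((0:ℕ):ZMod n))) + x) ∨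
    (∀ x ≤ s1, pidx u (e (p1 + (x:ZMod n))) + x = pidx u (e (p1 + ((0:ℕ):ZMod n)))) := by
  set g : ℕ → ℕ := fun x => pidx u (e (p1 + (x : ZMod n))) with hg
  have guside : ∀ x : ℕ, x ≤ s1 → ∃ j, u j = e (p1 + (x : ZMod n)) :=
    fun x hx => (h.not_vs_iff _).mp (pur1 x hx)
  have hg_inj : ∀ x ≤ s1, ∀ y ≤ s1, g x = g y → x = y := by
    intro x hx y hy hxy
    simp only [hg] at hxy
    have h1 : e (p1 + (x:ZMod n)) = e (p1 + (y:ZMod n)) :=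
      pidx_inj _ _ (guside x hx) (guside y hy) hxy
    have h2 : (x : ZMod n) = y := by
      have := einj h1
      linear_combination this
    exact cast_inj_of_lt (by omega) (by omega) h2
  have hg_step : ∀ x, x < s1 → (g (x+1) = g x + 1 ∨ g x = g (x+1) + 1) := by
    intro x hx
    obtain ⟨j, hj⟩ := guside x (by omega)
    obtain ⟨j', hj'⟩ := guside (x+1) (by omega)
    have adj : G.Adj (u j) (u j') := by
      rw [hj, hj']
      have hc : p1 + ((x:ℕ):ZMod n) + 1 = p1 + ((x+1:ℕ) : ZMod n) := by push_cast; ring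
      have := hadj (p1 + (x : ZMod n))
      rwa [hc] at this
    have had := (h.uadj j j').mp adj
    have e1 : g x = (j : ℕ) := by simp only [hg]; rw [← hj, pidx_eq h.uinj]
    have e2 : g (x+1) = (j' : ℕ) := by simp only [hg]; rw [← hj', pidx_eq h.uinj]
    omega
  exact mono_walk g s1 hg_step hg_inj

lemma L2_5 (h : PPData G v u) (hn : 3 ≤ n) (e : ZMod n → V)
    (einj : Function.Injective e) (hadj : ∀ t, G.Adj (e t) (e (t+1)))
    (hX3 : 3 ≤ (Xch v e).card)
    (p1 : ZMod n) (s1 : ℕ) (hs1 : s1 < n)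
    (pur1 : ∀ x : ℕ, x ≤ s1 → ¬ Vs v (e (p1 + x)))
    (bdL : Vs v (e (p1 - 1))) (bdR : Vs v (e (p1 + ((s1+1 : ℕ) : ZMod n))))
    (K1 : ∀ t, ¬ Vs v (e t) → pidx u (e t) ≤ pidx u (e (p1 + ((s1 : ℕ) : ZMod n)))) :
    False := by
  obtain ⟨t_v, htv_mem, htv_max⟩ := Finset.exists_max_image
    (Finset.univ.filter (fun t => Vs v (e t))) (fun t => pidx v (e t))
    ⟨p1 - 1, by simp [bdL]⟩
  have htv : Vs v (e t_v) := by
    simp only [Finset.mem_filter] at htv_mem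
    exact htv_mem.2
  have hmax : ∀ t, Vs v (e t) → pidx v (e t) ≤ pidx v (e t_v) := by
    intro t ht
    exact htv_max t (by simp [ht])
  -- key continuation once we know the corner: t_v = p1 + (s1+1)
  have hmain : t_v = p1 + ((s1+1 : ℕ) : ZMod n) → False := by
    intro hcorner
    apply L3 h hn e einj hadj hX3 p1 s1 hs1 pur1 bdL bdR K1
    intro t ht
    have := hmax t ht
    rwa [hcorner] at this
  -- the reflected case: s1 = 0 and t_v = p1 - 1
  have hrefl : s1 = 0 → t_v = p1 - 1 → False := by
    intro hs10 hcorner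
    subst hs10
    apply L3 h hn (fun t : ZMod n => e (-t)) (refl_inj einj) (refl_adj hadj)
      (by rw [refl_Xch_card]; exact hX3) (-p1) 0 (by omega)
    · intro x hx
      have hx0 : x = 0 := by omega
      subst hx0
      have hc : -(-p1 + ((0:ℕ) : ZMod n)) = p1 := by push_cast; ring
      rw [hc]
      simpa using pur1 0 (by omega)
    · have hc : -(-p1 - 1) = p1 + ((0+1:ℕ) : ZMod n) := by push_cast; ring
      rw [hc]
      exact bdR
    · have hc : -(-p1 + ((0+1:ℕ) : ZMod n)) = p1 - 1 := by push_cast; ring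
      rw [hc]
      rw [← hcorner]
      exact htv
    · intro t ht
      have hc : -(-p1 + ((0:ℕ) : ZMod n)) = p1 + ((0:ℕ) : ZMod n) := by push_cast; ring
      rw [hc]
      exact K1 (-t) ht
    · intro t ht
      have hc : -(-p1 + ((0+1:ℕ) : ZMod n)) = p1 - 1 := by push_cast; ring
      rw [hc, ← hcorner]
      exact hmax (-t) ht
  -- set up the top edge of the run
  obtain ⟨iF, hiF⟩ := bdR
  obtain ⟨jM, hjM⟩ := (h.not_vs_iff _).mp (pur1 s1 le_rfl)
  have adjA : G.Adj (v iF) (u jM) := by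
    rw [hiF, hjM]
    have hc : p1 + ((s1:ℕ):ZMod n) + 1 = p1 + ((s1+1:ℕ):ZMod n) := by push_cast; ring
    have := hadj (p1 + ((s1:ℕ):ZMod n))
    rw [hc] at this
    exact this.symm
  obtain ⟨iT, hiT⟩ := htv
  have hiFle : (iF : ℕ) ≤ (iT : ℕ) := by
    have := hmax (p1 + ((s1+1:ℕ):ZMod n)) ⟨iF, hiF⟩
    rwa [← hiF, ← hiT, pidx_eq h.vinj, pidx_eq h.vinj] at this
  by_cases hc1 : Vs v (e (t_v + 1))
  · by_cases hc2 : Vs v (e (t_v - 1))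
    · exact max_both h hn e einj hadj t_v ⟨iT, hiT⟩ hmax hc1 hc2
    · -- u-side at t_v - 1
      obtain ⟨jT, hjT⟩ := (h.not_vs_iff _).mp hc2
      have adjB : G.Adj (v iT) (u jT) := by
        rw [hiT, hjT]
        have := hadj (t_v - 1)
        rw [sub_add_cancel] at this
        exact this.symm
      have hjTle : (jT : ℕ) ≤ (jM : ℕ) := by
        have := K1 (t_v - 1) hc2
        rwa [← hjT, ← hjM, pidx_eq h.uinj, pidx_eq h.uinj] at this
      have hnc := h.nc iF jM iT jT adjA adjB
      have hcases : (iF : ℕ) = iT ∨ (jT : ℕ) = jM := by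
        by_contra hcon
        push_neg at hcon
        exact hnc (Or.inl ⟨Fin.lt_def.mpr (by omega), Fin.lt_def.mpr (by omega)⟩)
      rcases hcases with hcs | hcs
      · have : v iF = v iT := congrArg v (Fin.ext hcs)
        rw [hiF, hiT] at this
        exact hmain (einj this).symm
      · have : u jT = u jM := congrArg u (Fin.ext hcs)
        rw [hjT, hjM] at this
        have hpos : t_v - 1 = p1 + ((s1:ℕ):ZMod n) := einj this
        have : t_v = p1 + ((s1+1:ℕ):ZMod n) := by push_cast at hpos ⊢; linear_combination hpos
        exact hmain this
  · -- u-side at t_v + 1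
    obtain ⟨jT, hjT⟩ := (h.not_vs_iff _).mp hc1
    have adjB : G.Adj (v iT) (u jT) := by
      rw [hiT, hjT]
      exact hadj t_v
    have hjTle : (jT : ℕ) ≤ (jM : ℕ) := by
      have := K1 (t_v + 1) hc1
      rwa [← hjT, ← hjM, pidx_eq h.uinj, pidx_eq h.uinj] at this
    have hnc := h.nc iF jM iT jT adjA adjB
    have hcases : (iF : ℕ) = iT ∨ (jT : ℕ) = jM := by
      by_contra hcon
      push_neg at hcon
      exact hnc (Or.inl ⟨Fin.lt_def.mpr (by omega), Fin.lt_def.mpr (by omega)⟩)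
    rcases hcases with hcs | hcs
    · have : v iF = v iT := congrArg v (Fin.ext hcs)
      rw [hiF, hiT] at this
      exact hmain (einj this).symm
    · have : u jT = u jM := congrArg u (Fin.ext hcs)
      rw [hjT, hjM] at this
      have hpos : t_v + 1 = p1 + ((s1:ℕ):ZMod n) := einj this
      rcases Nat.eq_zero_or_pos s1 with hs10 | hs1pos
      · subst hs10
        have hcor : t_v = p1 - 1 := by push_cast at hpos ⊢; linear_combination hpos
        exact hrefl rfl hcor
      · exfalso
        have hc : t_v = p1 + ((s1 - 1 : ℕ):ZMod n) := by
          rw [Nat.cast_sub hs1pos]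
          push_cast at hpos ⊢
          linear_combination hpos
        have := pur1 (s1 - 1) (by omega)
        rw [← hc] at this
        exact this ⟨iT, hiT⟩

lemma lemL (h : PPData G v u) (hn : 3 ≤ n) (e : ZMod n → V)
    (einj : Function.Injective e) (hadj : ∀ t, G.Adj (e t) (e (t+1))) :
    (Xch v e).card ≤ 2 := by
  by_contra hcon
  push_neg at hcon
  have hX3 : 3 ≤ (Xch v e).card := hcon
  have hne : (Xch v e).Nonempty := Finset.card_pos.mp (by omega)
  obtain ⟨t₀, ht₀⟩ := hne
  rw [mem_Xch] at ht₀
  have hboth : (∃ t, Vs v (e t)) ∧ (∃ t, ¬ Vs v (e t)) := by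
    by_cases hv : Vs v (e t₀)
    · by_cases hv' : Vs v (e (t₀+1))
      · exact absurd (iff_of_true hv hv') ht₀
      · exact ⟨⟨t₀, hv⟩, ⟨t₀+1, hv'⟩⟩
    · by_cases hv' : Vs v (e (t₀+1))
      · exact ⟨⟨t₀+1, hv'⟩, ⟨t₀, hv⟩⟩
      · exact absurd (iff_of_false hv hv') ht₀
  obtain ⟨⟨tvx, htvx⟩, ⟨tux, htux⟩⟩ := hboth
  obtain ⟨t_u, htu_mem, htu_max⟩ := Finset.exists_max_image
    (Finset.univ.filter (fun t => ¬ Vs v (e t))) (fun t => pidx u (e t))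
    ⟨tux, by simp [htux]⟩
  have htu : ¬ Vs v (e t_u) := by
    simp only [Finset.mem_filter] at htu_mem
    exact htu_mem.2
  have humax : ∀ t, ¬ Vs v (e t) → pidx u (e t) ≤ pidx u (e t_u) := by
    intro t ht
    exact htu_max t (by simp [ht])
  obtain ⟨p1, s1, hs1, pur1, bdL', bdR', xu, hxule, hxu⟩ :=
    run_max hn e (fun x => ¬ Vs v x) t_u htu ⟨tvx, not_not_intro htvx⟩
  have bdL : Vs v (e (p1 - 1)) := not_not.mp bdL'
  have bdR : Vs v (e (p1 + ((s1+1:ℕ) : ZMod n))) := not_not.mp bdR'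
  have humax' : ∀ t, ¬ Vs v (e t) → pidx u (e t) ≤ pidx u (e (p1 + ((xu:ℕ):ZMod n))) := by
    intro t ht
    rw [hxu]
    exact humax t ht
  rcases run_mono_u h e einj hadj p1 s1 hs1 pur1 with hmA | hmD
  · -- ascending: max at forward end
    apply L2_5 h hn e einj hadj hX3 p1 s1 hs1 pur1 bdL bdR
    intro t ht
    calc pidx u (e t) ≤ pidx u (e (p1 + ((xu:ℕ):ZMod n))) := humax' t ht
      _ ≤ pidx u (e (p1 + ((s1:ℕ):ZMod n))) := by
          rw [hmA xu hxule, hmA s1 le_rfl]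
          omega
  · -- descending: reflect
    apply L2_5 h hn (fun t : ZMod n => e (-t)) (refl_inj einj) (refl_adj hadj)
      (by rw [refl_Xch_card]; exact hX3) (-(p1 + ((s1:ℕ):ZMod n))) s1 hs1
    · intro x hx
      have hc : -(-(p1 + ((s1:ℕ):ZMod n)) + (x:ZMod n)) = p1 + ((s1 - x:ℕ):ZMod n) := by
        rw [Nat.cast_sub hx]
        push_cast
        ring
      rw [hc]
      exact pur1 (s1 - x) (by omega)
    · have hc : -(-(p1 + ((s1:ℕ):ZMod n)) - 1) = p1 + ((s1+1:ℕ):ZMod n) := by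
        push_cast
        ring
      rw [hc]
      exact bdR
    · have hc : -(-(p1 + ((s1:ℕ):ZMod n)) + ((s1+1:ℕ):ZMod n)) = p1 - 1 := by
        push_cast
        ring
      rw [hc]
      exact bdL
    · intro t ht
      have hc : -(-(p1 + ((s1:ℕ):ZMod n)) + ((s1:ℕ):ZMod n)) = p1 + ((0:ℕ):ZMod n) := by
        push_cast
        ring
      rw [hc]
      calc pidx u (e (-t)) ≤ pidx u (e (p1 + ((xu:ℕ):ZMod n))) := humax' (-t) ht
        _ ≤ pidx u (e (p1 + ((0:ℕ):ZMod n))) := by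
            have h1 := hmD xu hxule
            have h2 := hmD 0 (by omega)
            omega

lemma no_one_sided (h : PPData G v u) (hn : 3 ≤ n) (e : ZMod n → V)
    (einj : Function.Injective e) (hadj : ∀ t, G.Adj (e t) (e (t+1)))
    (hall : ∀ t, Vs v (e t)) : False := by
  obtain ⟨t_v, _, htv_max⟩ := Finset.exists_max_image
    (Finset.univ : Finset (ZMod n)) (fun t => pidx v (e t)) ⟨0, Finset.mem_univ 0⟩
  exact max_both h hn e einj hadj t_v (hall t_v)
    (fun t ht => htv_max t (Finset.mem_univ t)) (hall _) (hall _)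

lemma two_changes_same_dir (hn : 3 ≤ n) {P : ZMod n → Prop} (w₁ w₂ : ZMod n) (hne : w₁ ≠ w₂)
    (hno : ∀ t, t ≠ w₁ → t ≠ w₂ → (P t ↔ P (t+1)))
    (h1 : P w₁) (h2 : ¬ P (w₁+1)) (h3 : P w₂) (h4 : ¬ P (w₂+1)) : False := by
  set N : ℕ := (w₂ - (w₁+1)).val with hN
  have hNval : ((N : ℕ) : ZMod n) = w₂ - (w₁+1) := by rw [hN]; exact natCast_val_zmod _
  have hNlt : N < n := ZMod.val_lt _
  have hprop := prop_const P (w₁+1) N ?_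
  · have := hprop N le_rfl
    have hc : w₁ + 1 + ((N : ℕ) : ZMod n) = w₂ := by rw [hNval]; ring
    rw [hc] at this
    exact h2 (this.mp h3)
  · intro x hx
    apply hno
    · intro hcx
      have : ((x + 1 : ℕ) : ZMod n) = 0 := by push_cast; linear_combination hcx
      have := (ZMod.natCast_eq_zero_iff _ n).mp this
      have := Nat.le_of_dvd (by omega) this
      omega
    · intro hcx
      have hxN : ((x : ℕ) : ZMod n) = ((N : ℕ) : ZMod n) := by
        rw [hNval]
        linear_combination hcx
      have := cast_inj_of_lt (show x < n by omega) hNlt hxN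
      omega

lemma one_change_contra (hn : 3 ≤ n) {P : ZMod n → Prop} (w : ZMod n)
    (hno : ∀ t, t ≠ w → (P t ↔ P (t+1))) (hw : ¬ (P w ↔ P (w+1))) : False := by
  have hprop := prop_const P (w+1) (n-1) ?_
  · have := hprop (n-1) le_rfl
    have hc : w + 1 + ((n-1 : ℕ) : ZMod n) = w := by
      rw [Nat.cast_sub (show 1 ≤ n by omega)]
      rw [ZMod.natCast_self]
      push_cast
      ring
    rw [hc] at this
    exact hw this
  · intro x hx
    apply hno
    intro hcx
    have : ((x + 1 : ℕ) : ZMod n) = 0 := by push_cast; linear_combination hcx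
    have := (ZMod.natCast_eq_zero_iff _ n).mp this
    have := Nat.le_of_dvd (by omega) this
    omega

lemma CE (h : PPData G v u) (hn : 3 ≤ n) (e : ZMod n → V)
    (einj : Function.Injective e) (hadj : ∀ t, G.Adj (e t) (e (t+1)))
    (x y : V) (hx : x ∈ Set.range e) (hy : y ∈ Set.range e)
    (hvx : Vs v x) (hvy : Vs v y) (hixy : pidx v y = pidx v x + 1) :
    ∃ z : ZMod n, (e z = x ∧ e (z+1) = y) ∨ (e z = y ∧ e (z+1) = x) := by
  obtain ⟨z₁, hz₁⟩ := hx
  obtain ⟨z₂, hz₂⟩ := hy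
  have hcard := lemL h hn e einj hadj
  have h012 : (Xch v e).card = 0 ∨ (Xch v e).card = 1 ∨ (Xch v e).card = 2 := by omega
  rcases h012 with h0 | h1 | h2
  · -- no changes: everything v-side, contradiction
    exfalso
    rw [Finset.card_eq_zero] at h0
    have hno : ∀ t : ZMod n, (Vs v (e t) ↔ Vs v (e (t+1))) := by
      intro t
      by_contra hc
      have : t ∈ Xch v e := mem_Xch.mpr hc
      rw [h0] at this
      exact absurd this (Finset.notMem_empty t)
    apply no_one_sided h hn e einj hadj
    intro t
    have hprop := prop_const (fun t => Vs v (e t)) z₁ ((t - z₁).val)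
      (fun x _ => hno _)
    have := hprop ((t - z₁).val) le_rfl
    have hc : z₁ + (((t - z₁).val : ℕ) : ZMod n) = t := by
      rw [natCast_val_zmod]; ring
    rw [hc, hz₁] at this
    exact this.mpr hvx
  · exfalso
    rw [Finset.card_eq_one] at h1
    obtain ⟨w, hw⟩ := h1
    have hwX : ¬ (Vs v (e w) ↔ Vs v (e (w+1))) := by
      have : w ∈ Xch v e := by rw [hw]; exact Finset.mem_singleton_self w
      exact mem_Xch.mp this
    apply one_change_contra hn (P := fun t => Vs v (e t)) w ?_ hwX
    intro t ht
    by_contra hc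
    have : t ∈ Xch v e := mem_Xch.mpr hc
    rw [hw, Finset.mem_singleton] at this
    exact ht this
  · -- exactly two changes
    rw [Finset.card_eq_two] at h2
    obtain ⟨w₁, w₂, hne, hXeq⟩ := h2
    have hmemX : ∀ t : ZMod n, ¬ (Vs v (e t) ↔ Vs v (e (t+1))) ↔ (t = w₁ ∨ t = w₂) := by
      intro t
      rw [← mem_Xch, hXeq]
      simp
    have hno : ∀ t, t ≠ w₁ → t ≠ w₂ → (Vs v (e t) ↔ Vs v (e (t+1))) := by
      intro t h1 h2
      by_contra hc
      rcases (hmemX t).mp hc with rfl | rfl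
      · exact h1 rfl
      · exact h2 rfl
    have hw₁ : ¬ (Vs v (e w₁) ↔ Vs v (e (w₁+1))) := (hmemX w₁).mpr (Or.inl rfl)
    have hw₂ : ¬ (Vs v (e w₂) ↔ Vs v (e (w₂+1))) := (hmemX w₂).mpr (Or.inr rfl)
    -- get one V→U and one U→V change
    have hdir : ∃ wVU wUV : ZMod n, wVU ≠ wUV ∧
        (∀ t, t ≠ wVU → t ≠ wUV → (Vs v (e t) ↔ Vs v (e (t+1)))) ∧
        Vs v (e wVU) ∧ ¬ Vs v (e (wVU+1)) ∧ ¬ Vs v (e wUV) ∧ Vs v (e (wUV+1)) := by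
      by_cases hv1 : Vs v (e w₁) <;> by_cases hv2 : Vs v (e w₂)
      · exfalso
        refine two_changes_same_dir hn w₁ w₂ hne hno hv1 ?_ hv2 ?_
        · exact fun hcc => hw₁ (iff_of_true hv1 hcc)
        · exact fun hcc => hw₂ (iff_of_true hv2 hcc)
      · exact ⟨w₁, w₂, hne, hno, hv1,
          fun hcc => hw₁ (iff_of_true hv1 hcc), hv2,
          by_contra fun hcc => hw₂ (iff_of_false hv2 hcc)⟩
      · exact ⟨w₂, w₁, hne.symm, fun t ha hb => hno t hb ha, hv2,
          fun hcc => hw₂ (iff_of_true hv2 hcc), hv1,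
          by_contra fun hcc => hw₁ (iff_of_false hv1 hcc)⟩
      · exfalso
        refine two_changes_same_dir hn (P := fun t => ¬ Vs v (e t)) w₁ w₂ hne ?_ hv1 ?_ hv2 ?_
        · intro t ha hb
          exact not_iff_not.mpr (hno t ha hb)
        · exact not_not_intro (by_contra fun hcc => hw₁ (iff_of_false hv1 hcc))
        · exact not_not_intro (by_contra fun hcc => hw₂ (iff_of_false hv2 hcc))
    obtain ⟨wVU, wUV, hneD, hnoD, hVU1, hVU2, hUV1, hUV2⟩ := hdir
    set A : ZMod n := wUV + 1 with hA
    set L : ℕ := (wVU - A).val with hL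
    have hLval : ((L : ℕ) : ZMod n) = wVU - A := by rw [hL]; exact natCast_val_zmod _
    have hLlt : L < n := ZMod.val_lt _
    have hLn2 : L ≤ n - 2 := by
      by_contra hc
      have hLeq : L = n - 1 := by omega
      have : ((L : ℕ) : ZMod n) = ((n - 1 : ℕ) : ZMod n) := by rw [hLeq]
      rw [hLval] at this
      have hnn : ((n - 1 : ℕ) : ZMod n) = -1 := by
        rw [Nat.cast_sub (show 1 ≤ n by omega), ZMod.natCast_self]
        push_cast
        ring
      rw [hnn] at this
      apply hneD
      linear_combination this
    -- arc of v-side positions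
    have arc_pure : ∀ x : ℕ, x ≤ L → Vs v (e (A + (x : ZMod n))) := by
      intro x hx
      have hprop := prop_const (fun t => Vs v (e t)) A L ?_
      · have := hprop x hx
        rw [this]
        exact hUV2
      · intro x' hx'
        apply hnoD
        · intro hcx
          have : ((x' : ℕ) : ZMod n) = ((L : ℕ) : ZMod n) := by
            rw [hLval]
            linear_combination hcx
          have := cast_inj_of_lt (show x' < n by omega) hLlt this
          omega
        · intro hcx
          have : ((x' + 1 : ℕ) : ZMod n) = 0 := by
            rw [hA] at hcx
            push_cast
            linear_combination hcx
          have := (ZMod.natCast_eq_zero_iff _ n).mp this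
          have := Nat.le_of_dvd (by omega) this
          omega
    have arcU_pure : ∀ y : ℕ, y ≤ n - 2 - L → ¬ Vs v (e (wVU + 1 + (y : ZMod n))) := by
      intro y hy
      have hprop := prop_const (fun t => Vs v (e t)) (wVU + 1) (n - 2 - L) ?_
      · have := hprop y hy
        rw [this]
        exact hVU2
      · intro y' hy'
        apply hnoD
        · intro hcx
          have : ((y' + 1 : ℕ) : ZMod n) = 0 := by push_cast; linear_combination hcx
          have := (ZMod.natCast_eq_zero_iff _ n).mp this
          have := Nat.le_of_dvd (by omega) this
          omega
        · intro hcx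
          -- wVU + 1 + y' = wUV = wVU - L - 1
          have hUVeq : wUV = wVU - ((L:ℕ) : ZMod n) - 1 := by
            rw [hLval, hA]
            ring
          have : ((y' + L + 2 : ℕ) : ZMod n) = 0 := by
            rw [hUVeq] at hcx
            push_cast
            linear_combination hcx
          have := (ZMod.natCast_eq_zero_iff _ n).mp this
          have := Nat.le_of_dvd (by omega) this
          omega
    have hcov : ∀ t : ZMod n, Vs v (e t) → ∃ x : ℕ, x ≤ L ∧ t = A + (x : ZMod n) := by
      intro t ht
      set xx : ℕ := (t - A).val with hxx
      have hxxval : ((xx : ℕ) : ZMod n) = t - A := by rw [hxx]; exact natCast_val_zmod _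
      have hxxlt : xx < n := ZMod.val_lt _
      rcases le_or_gt xx L with hle | hgt
      · exact ⟨xx, hle, by rw [hxxval]; ring⟩
      · exfalso
        apply arcU_pure (xx - L - 1) (by omega)
        have hc : wVU + 1 + ((xx - L - 1 : ℕ) : ZMod n) = t := by
          have h1 : wVU = A + ((L:ℕ) : ZMod n) := by rw [hLval]; ring
          rw [h1, Nat.cast_sub (show 1 ≤ xx - L by omega), Nat.cast_sub (show L ≤ xx by omega)]
          push_cast
          rw [hxxval]
          ring
        rw [hc]
        exact ht
    -- monotone index function on the arc
    set gA : ℕ → ℕ := fun x => pidx v (e (A + (x : ZMod n))) with hgA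
    have hgA_inj : ∀ x ≤ L, ∀ y ≤ L, gA x = gA y → x = y := by
      intro x hx y hy hxy
      simp only [hgA] at hxy
      have h1 : e (A + (x:ZMod n)) = e (A + (y:ZMod n)) :=
        pidx_inj _ _ (arc_pure x hx) (arc_pure y hy) hxy
      have h2 : (x : ZMod n) = y := by
        have := einj h1
        linear_combination this
      exact cast_inj_of_lt (by omega) (by omega) h2
    have hgA_step : ∀ x, x < L → (gA (x+1) = gA x + 1 ∨ gA x = gA (x+1) + 1) := by
      intro x hx
      obtain ⟨i, hi⟩ := arc_pure x (by omega)
      obtain ⟨i', hi'⟩ := arc_pure (x+1) (by omega)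
      have adj : G.Adj (v i) (v i') := by
        rw [hi, hi']
        have hc : A + ((x:ℕ):ZMod n) + 1 = A + ((x+1:ℕ) : ZMod n) := by push_cast; ring
        have := hadj (A + (x : ZMod n))
        rwa [hc] at this
      have had := (h.vadj i i').mp adj
      have e1 : gA x = (i : ℕ) := by simp only [hgA]; rw [← hi, pidx_eq h.vinj]
      have e2 : gA (x+1) = (i' : ℕ) := by simp only [hgA]; rw [← hi', pidx_eq h.vinj]
      omega
    obtain ⟨x₁, hx₁le, hx₁⟩ := hcov z₁ (by rw [hz₁]; exact hvx)
    obtain ⟨x₂, hx₂le, hx₂⟩ := hcov z₂ (by rw [hz₂]; exact hvy)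
    have hg₁ : gA x₁ = pidx v x := by simp only [hgA]; rw [← hx₁, hz₁]
    have hg₂ : gA x₂ = pidx v y := by simp only [hgA]; rw [← hx₂, hz₂]
    rcases mono_walk gA L hgA_step hgA_inj with hm | hm
    · have e1 := hm x₁ hx₁le
      have e2 := hm x₂ hx₂le
      have hxx : x₂ = x₁ + 1 := by omega
      refine ⟨z₁, Or.inl ⟨hz₁, ?_⟩⟩
      have : z₂ = z₁ + 1 := by
        rw [hx₁, hx₂, hxx]
        push_cast
        ring
      rw [← this]
      exact hz₂
    · have e1 := hm x₁ hx₁le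
      have e2 := hm x₂ hx₂le
      have hxx : x₁ = x₂ + 1 := by omega
      refine ⟨z₂, Or.inr ⟨hz₂, ?_⟩⟩
      have : z₁ = z₂ + 1 := by
        rw [hx₁, hx₂, hxx]
        push_cast
        ring
      rw [← this]
      exact hz₁

/-- A straight-line walk along a chain of adjacent vertices. -/
def chainWalk (g : ℕ → V) (hadj : ∀ x : ℕ, G.Adj (g x) (g (x+1))) :
    (x : ℕ) → G.Walk (g 0) (g x)
  | 0 => SimpleGraph.Walk.nil
  | (x+1) => (chainWalk g hadj x).concat (hadj x)

lemma chainWalk_support (g : ℕ → V) (hadj : ∀ x : ℕ, G.Adj (g x) (g (x+1))) (x : ℕ) :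
    (chainWalk g hadj x).support = (List.range (x+1)).map g := by
  induction x with
  | zero => simp [chainWalk, List.range_succ]
  | succ x ih =>
    rw [chainWalk, SimpleGraph.Walk.support_concat, ih, List.range_succ (n := x+1)]
    simp

lemma chainWalk_edges (g : ℕ → V) (hadj : ∀ x : ℕ, G.Adj (g x) (g (x+1))) (x : ℕ) :
    (chainWalk g hadj x).edges = (List.range x).map (fun y => s(g y, g (y+1))) := by
  induction x with
  | zero => simp [chainWalk]
  | succ x ih =>
    rw [chainWalk, SimpleGraph.Walk.edges_concat, ih, List.range_succ (n := x)]
    simp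

lemma cast_eq_cases {a b : ℕ} (ha : a ≤ n) (hb : b ≤ n) (hab : (a : ZMod n) = b) :
    a = b ∨ (a = 0 ∧ b = n) ∨ (a = n ∧ b = 0) := by
  rcases le_total a b with hle | hle
  · have h1 : ((b - a : ℕ) : ZMod n) = 0 := by
      rw [Nat.cast_sub hle]
      linear_combination - hab
    have := (ZMod.natCast_eq_zero_iff _ n).mp h1
    rcases Nat.eq_zero_or_pos (b - a) with h' | h'
    · left; omega
    · have := Nat.le_of_dvd h' this
      right; left
      omega
  · have h1 : ((a - b : ℕ) : ZMod n) = 0 := by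
      rw [Nat.cast_sub hle]
      linear_combination hab
    have := (ZMod.natCast_eq_zero_iff _ n).mp h1
    rcases Nat.eq_zero_or_pos (a - b) with h' | h'
    · left; omega
    · have := Nat.le_of_dvd h' this
      right; right
      omega

lemma exists_cycle_walk (hn : 3 ≤ n) (e : ZMod n → V)
    (einj : Function.Injective e) (hadj : ∀ t, G.Adj (e t) (e (t+1))) (t₀ : ZMod n) :
    ∃ w : G.Walk (e t₀) (e t₀), w.IsCycle := by
  set g : ℕ → V := fun x => e (t₀ + (x : ZMod n)) with hgdef
  have hadjg : ∀ x : ℕ, G.Adj (g x) (g (x+1)) := by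
    intro x
    simp only [hgdef]
    have hc : t₀ + ((x:ℕ) : ZMod n) + 1 = t₀ + ((x+1:ℕ) : ZMod n) := by push_cast; ring
    have := hadj (t₀ + (x : ZMod n))
    rwa [hc] at this
  have hg0 : g 0 = e t₀ := by simp [hgdef]
  have hgn : g n = e t₀ := by
    simp only [hgdef]
    rw [ZMod.natCast_self, add_zero]
  -- index equality from vertex equality
  have hginj : ∀ a ≤ n, ∀ b ≤ n, g a = g b → (a : ZMod n) = (b : ZMod n) := by
    intro a ha b hb hab
    simp only [hgdef] at hab
    have := einj hab
    linear_combination this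
  set w0 : G.Walk (g 0) (g n) := chainWalk g hadjg n with hw0
  set w : G.Walk (e t₀) (e t₀) := w0.copy hg0 hgn with hw
  have hedges : w.edges = (List.range n).map (fun y => s(g y, g (y+1))) := by
    rw [hw, SimpleGraph.Walk.edges_copy, hw0, chainWalk_edges]
  have hsupp : w.support = (List.range (n+1)).map g := by
    rw [hw, SimpleGraph.Walk.support_copy, hw0, chainWalk_support]
  have h2n0 : ¬ (n ∣ 2) := fun hd => by have := Nat.le_of_dvd (by omega) hd; omega
  refine ⟨w, ⟨⟨⟨?_⟩, ?_⟩, ?_⟩⟩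
  · -- edges nodup
    rw [hedges]
    apply List.Nodup.map_on ?_ List.nodup_range
    intro a ha b hb hab
    rw [List.mem_range] at ha hb
    rw [Sym2.eq_iff] at hab
    rcases hab with ⟨h1, _⟩ | ⟨h1, h2⟩
    · have := hginj a (by omega) b (by omega) h1
      exact cast_inj_of_lt (by omega) (by omega) this
    · exfalso
      have e1 := hginj a (by omega) (b+1) (by omega) h1
      have e2 := hginj (a+1) (by omega) b (by omega) h2
      have : ((2 : ℕ) : ZMod n) = 0 := by push_cast at e1 e2 ⊢; linear_combination e2 - e1
      exact h2n0 ((ZMod.natCast_eq_zero_iff _ n).mp this)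
  · -- not nil
    intro hnil
    have hlen : w.edges.length = n := by rw [hedges, List.length_map, List.length_range]
    rw [hnil] at hlen
    simp at hlen
    omega
  · -- support tail nodup
    rw [hsupp, List.range_succ_eq_map, List.map_cons, List.tail_cons, List.map_map]
    apply List.Nodup.map_on ?_ List.nodup_range
    intro a ha b hb hab
    rw [List.mem_range] at ha hb
    have := hginj (a+1) (by omega) (b+1) (by omega) hab
    rcases cast_eq_cases (by omega) (by omega) this with h' | h' | h' <;> omega

end cyc
end TPP


/-- Let G be a graph of two parallel paths with nonempty core and outer-cycle
`c : Fin r → V` (a Hamiltonian cycle of the core). Then every induced cycle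
`d : Fin m → V` of G has at most two edges that are not edges of the
outer-cycle (at most two interior edges). -/
theorem stmt_9 {V : Type*} (G : SimpleGraph V)
    (hpp : IsTwoParallelPaths G) (hRne : (core G).Nonempty)
    (r : ℕ) (hr : 3 ≤ r) (c : Fin r → V)
    (hcinj : Function.Injective c) (hcrange : Set.range c = core G)
    (hcyc : ∀ i j : Fin r, ((i : ℕ) + 1) % r = (j : ℕ) → G.Adj (c i) (c j)) :
    ∀ (m : ℕ), 3 ≤ m → ∀ (d : Fin m → V), Function.Injective d →
      (∀ i j : Fin m, G.Adj (d i) (d j) ↔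
        (((i : ℕ) + 1) % m = (j : ℕ) ∨ ((j : ℕ) + 1) % m = (i : ℕ))) →
      {p : Fin m × Fin m | ((p.1 : ℕ) + 1) % m = (p.2 : ℕ) ∧
        ¬ ∃ j j' : Fin r, ((j : ℕ) + 1) % r = (j' : ℕ) ∧
          s(c j, c j') = s(d p.1, d p.2)}.ncard ≤ 2 := by
  intro m hm d dinj hd
  obtain ⟨k, l, v, u, hvinj, huinj, hvu, hcover, hvadj, huadj, hnc⟩ := hpp
  have h : TPP.PPData G v u := ⟨hvinj, huinj, hvu, hcover, hvadj, huadj, hnc⟩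
  haveI hmnz : NeZero m := ⟨by omega⟩
  haveI hrnz : NeZero r := ⟨by omega⟩
  haveI : Fact (1 < m) := ⟨by omega⟩
  haveI : Fact (1 < r) := ⟨by omega⟩
  set D : ZMod m → V := fun z => d ⟨z.val, ZMod.val_lt z⟩ with hD
  set C : ZMod r → V := fun z => c ⟨z.val, ZMod.val_lt z⟩ with hC
  have Dinj : Function.Injective D := by
    intro a b hab
    have h1 : a.val = b.val := congrArg Fin.val (dinj hab)
    rw [← TPP.natCast_val_zmod a, ← TPP.natCast_val_zmod b, h1]
  have Cinj : Function.Injective C := by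
    intro a b hab
    have h1 : a.val = b.val := congrArg Fin.val (hcinj hab)
    rw [← TPP.natCast_val_zmod a, ← TPP.natCast_val_zmod b, h1]
  have hDadj : ∀ t : ZMod m, G.Adj (D t) (D (t+1)) := by
    intro t
    apply (hd ⟨t.val, ZMod.val_lt t⟩ ⟨(t+1).val, ZMod.val_lt _⟩).mpr
    left
    show (t.val + 1) % m = (t+1).val
    rw [ZMod.val_add, ZMod.val_one]
  have hCadj : ∀ t : ZMod r, G.Adj (C t) (C (t+1)) := by
    intro t
    apply hcyc ⟨t.val, ZMod.val_lt t⟩ ⟨(t+1).val, ZMod.val_lt _⟩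
    show (t.val + 1) % r = (t+1).val
    rw [ZMod.val_add, ZMod.val_one]
  have hDp : ∀ i : Fin m, D (((i : ℕ) : ZMod m)) = d i := by
    intro i
    show d _ = d i
    congr 1
    apply Fin.ext
    show (((i : ℕ) : ZMod m)).val = (i : ℕ)
    exact ZMod.val_cast_of_lt i.isLt
  have hrange : ∀ i : Fin m, d i ∈ Set.range C := by
    intro i
    have hcore : d i ∈ core G := by
      rw [← hDp i]
      exact TPP.exists_cycle_walk (by omega) D Dinj hDadj _
    rw [← hcrange] at hcore
    obtain ⟨j, hj⟩ := hcore
    refine ⟨((j : ℕ) : ZMod r), ?_⟩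
    show c _ = d i
    rw [← hj]
    congr 1
    apply Fin.ext
    show (((j : ℕ) : ZMod r)).val = (j : ℕ)
    exact ZMod.val_cast_of_lt j.isLt
  have mkh : ∀ (a b : V), (∃ z : ZMod r, (C z = a ∧ C (z+1) = b) ∨ (C z = b ∧ C (z+1) = a)) →
      ∃ j j' : Fin r, ((j : ℕ)+1) % r = (j' : ℕ) ∧ s(c j, c j') = s(a, b) := by
    rintro a b ⟨z, hz⟩
    refine ⟨⟨z.val, ZMod.val_lt z⟩, ⟨(z+1).val, ZMod.val_lt _⟩, ?_, ?_⟩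
    · show (z.val + 1) % r = (z+1).val
      rw [ZMod.val_add, ZMod.val_one]
    · have h1 : c ⟨z.val, ZMod.val_lt z⟩ = C z := rfl
      have h2 : c ⟨(z+1).val, ZMod.val_lt _⟩ = C (z+1) := rfl
      rcases hz with ⟨hza, hzb⟩ | ⟨hza, hzb⟩
      · rw [h1, h2, hza, hzb]
      · rw [h1, h2, hza, hzb]
        exact Sym2.eq_swap
  have hsame : ∀ p : Fin m × Fin m, (((p.1 : ℕ)+1) % m = (p.2 : ℕ)) →
      (TPP.Vs v (d p.1) ↔ TPP.Vs v (d p.2)) →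
      ∃ j j' : Fin r, ((j : ℕ)+1) % r = (j' : ℕ) ∧ s(c j, c j') = s(d p.1, d p.2) := by
    intro p hp hiff
    have hadjp : G.Adj (d p.1) (d p.2) := (hd p.1 p.2).mpr (Or.inl hp)
    by_cases hv1 : TPP.Vs v (d p.1)
    · have hv2 := hiff.mp hv1
      obtain ⟨i1, hi1⟩ := hv1
      obtain ⟨i2, hi2⟩ := hv2
      have hadj' : G.Adj (v i1) (v i2) := by rw [hi1, hi2]; exact hadjp
      rcases (hvadj i1 i2).mp hadj' with hij | hij
      · apply mkh
        exact TPP.CE h hr C Cinj hCadj (d p.1) (d p.2) (hrange p.1) (hrange p.2)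
          ⟨i1, hi1⟩ ⟨i2, hi2⟩
          (by rw [← hi1, ← hi2, TPP.pidx_eq hvinj, TPP.pidx_eq hvinj]; omega)
      · have hres := TPP.CE h hr C Cinj hCadj (d p.2) (d p.1) (hrange p.2) (hrange p.1)
          ⟨i2, hi2⟩ ⟨i1, hi1⟩
          (by rw [← hi1, ← hi2, TPP.pidx_eq hvinj, TPP.pidx_eq hvinj]; omega)
        obtain ⟨j, j', hjj, hs⟩ := mkh _ _ hres
        exact ⟨j, j', hjj, by rw [hs]; exact Sym2.eq_swap⟩
    · have hv2 : ¬ TPP.Vs v (d p.2) := fun hc => hv1 (hiff.mpr hc)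
      obtain ⟨j1, hj1⟩ := (h.not_vs_iff _).mp hv1
      obtain ⟨j2, hj2⟩ := (h.not_vs_iff _).mp hv2
      have hadj' : G.Adj (u j1) (u j2) := by rw [hj1, hj2]; exact hadjp
      rcases (huadj j1 j2).mp hadj' with hij | hij
      · apply mkh
        exact TPP.CE h.swap hr C Cinj hCadj (d p.1) (d p.2) (hrange p.1) (hrange p.2)
          ⟨j1, hj1⟩ ⟨j2, hj2⟩
          (by rw [← hj1, ← hj2, TPP.pidx_eq huinj, TPP.pidx_eq huinj]; omega)
      · have hres := TPP.CE h.swap hr C Cinj hCadj (d p.2) (d p.1) (hrange p.2) (hrange p.1)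
          ⟨j2, hj2⟩ ⟨j1, hj1⟩
          (by rw [← hj1, ← hj2, TPP.pidx_eq huinj, TPP.pidx_eq huinj]; omega)
        obtain ⟨j, j', hjj, hs⟩ := mkh _ _ hres
        exact ⟨j, j', hjj, by rw [hs]; exact Sym2.eq_swap⟩
  -- now inject the interior-edge set into the change set of D
  have hXcard : (TPP.Xch v D).card ≤ 2 := TPP.lemL h (by omega) D Dinj hDadj
  refine le_trans (Set.ncard_le_ncard_of_injOn
    (t := ((TPP.Xch v D : Finset (ZMod m)) : Set (ZMod m)))
    (fun p : Fin m × Fin m => (((p.1 : ℕ)) : ZMod m)) ?_ ?_ (Set.toFinite _))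
    (by rw [Set.ncard_coe_finset]; exact hXcard)
  · -- maps to
    rintro p ⟨hp1, hp2⟩
    show (((p.1 : ℕ)) : ZMod m) ∈ (TPP.Xch v D : Finset (ZMod m))
    rw [TPP.mem_Xch]
    have hd1 : D (((p.1 : ℕ)) : ZMod m) = d p.1 := hDp p.1
    have hd2 : D ((((p.1 : ℕ)) : ZMod m) + 1) = d p.2 := by
      show d _ = d p.2
      congr 1
      apply Fin.ext
      show ((((p.1 : ℕ) : ZMod m)) + 1).val = (p.2 : ℕ)
      rw [ZMod.val_add, ZMod.val_one, ZMod.val_cast_of_lt p.1.isLt]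
      exact hp1
    rw [hd1, hd2]
    intro hiff
    exact hp2 (hsame p hp1 hiff)
  · -- injective on the set
    rintro p ⟨hp1, _⟩ q ⟨hq1, _⟩ hpq
    have h1 : (p.1 : ℕ) = (q.1 : ℕ) := by
      have := congrArg ZMod.val hpq
      rwa [ZMod.val_cast_of_lt p.1.isLt, ZMod.val_cast_of_lt q.1.isLt] at this
    have hfst : p.1 = q.1 := Fin.ext h1
    have hsnd : p.2 = q.2 := by
      apply Fin.ext
      rw [← hp1, ← hq1, h1]
    exact Prod.ext hfst hsnd
end
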